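/- arXiv:0810.3021 — 9 statements merged into one kernel-verified Lean document; each statement's English description precedes it below -/
import Mathlib

section
/- Let f : X → Y be a continuous surjection between Hausdorff topological spaces. Then the following conditions are equivalent: (1) f is subproper; (2) f has a section s : Y → X that preserves precompact sets; (3) there is a function s assigning to every compact set K ⊆ Y a compact set s(K) ⊆ X with f(s(K)) = K, which is monotone, i.e. s(K) ⊆ s(K') whenever K ⊆ K'; (4) there is a function s assigning to every compact set K ⊆ Y a compact set s(K) ⊆ X with f(s(K)) = K, which is additive, i.e. s(K ∪ K') = s(K) ∪ s(K') for all compact K, K' ⊆ Y. -/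
open Filter Topology Set

universe u v

/-- For a continuous surjection `f : X → Y` between Hausdorff spaces,
the following are equivalent: (1) `f` is subproper; (2) `f` has a section preserving
precompact sets; (3) there is a monotone assignment of compact preimage-sets;
(4) there is an additive assignment of compact preimage-sets. -/
theorem stmt_0 {X : Type u} {Y : Type v} [TopologicalSpace X] [TopologicalSpace Y]
    [T2Space X] [T2Space Y] (f : X → Y) (hf : Continuous f)
    (hsurj : Function.Surjective f) :
    List.TFAE
      [ -- (1) f is subproper
        ∃ Z : Set X, f '' Z = univ ∧
          ∀ K : Set Y, IsCompact K → IsCompact (closure (Z ∩ f ⁻¹' K)),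
        -- (2) f has a section preserving precompact sets
        ∃ s : Y → X, (∀ y, f (s y) = y) ∧
          ∀ K : Set Y, IsCompact K → IsCompact (closure (s '' K)),
        -- (3) monotone compact-valued section of 𝒦(f)
        ∃ s : Set Y → Set X,
          (∀ K : Set Y, IsCompact K → IsCompact (s K) ∧ f '' s K = K) ∧
          (∀ K K' : Set Y, IsCompact K → IsCompact K' → K ⊆ K' → s K ⊆ s K'),
        -- (4) additive compact-valued section of 𝒦(f)
        ∃ s : Set Y → Set X,
          (∀ K : Set Y, IsCompact K → IsCompact (s K) ∧ f '' s K = K) ∧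
          (∀ K K' : Set Y, IsCompact K → IsCompact K' →
            s (K ∪ K') = s K ∪ s K') ] := by
  tfae_have 1 → 2 := by
    rintro ⟨Z, hZ, hZc⟩
    have hsec : ∀ y : Y, ∃ x, x ∈ Z ∧ f x = y := by
      intro y
      have : y ∈ f '' Z := hZ ▸ mem_univ y
      obtain ⟨x, hx, hfx⟩ := this
      exact ⟨x, hx, hfx⟩
    choose s hsZ hsf using hsec
    refine ⟨s, hsf, fun K hK => ?_⟩
    have hsub : s '' K ⊆ Z ∩ f ⁻¹' K := by
      rintro x ⟨y, hy, rfl⟩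
      exact ⟨hsZ y, by simp [hsf y, hy]⟩
    exact (hZc K hK).of_isClosed_subset isClosed_closure
      (closure_mono hsub)
  tfae_have 2 → 3 := by
    rintro ⟨s, hsf, hsc⟩
    refine ⟨fun K => closure (s '' K) ∩ f ⁻¹' K, fun K hK => ⟨?_, ?_⟩, ?_⟩
    · exact (hsc K hK).of_isClosed_subset
        (isClosed_closure.inter (hK.isClosed.preimage hf)) inter_subset_left
    · apply Subset.antisymm
      · rintro y ⟨x, ⟨-, hx2⟩, rfl⟩
        exact hx2
      · intro y hy
        exact ⟨s y, ⟨subset_closure ⟨y, hy, rfl⟩, by simp [hsf y, hy]⟩, hsf y⟩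
    · intro K K' _ _ hKK'
      exact inter_subset_inter (closure_mono (image_mono (f := s) hKK'))
        (preimage_mono hKK')
  tfae_have 3 → 4 := by
    rintro ⟨s, hs, hmono⟩
    refine ⟨fun K => closure (⋃ y ∈ K, s {y}), fun K hK => ?_, ?_⟩
    · have hsub : (⋃ y ∈ K, s {y}) ⊆ s K := by
        refine iUnion₂_subset fun y hy => ?_
        exact hmono {y} K isCompact_singleton hK (by simpa using hy)
      have hclsub : closure (⋃ y ∈ K, s {y}) ⊆ s K :=
        (hs K hK).1.isClosed.closure_subset_iff.mpr hsub
      constructor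
      · exact (hs K hK).1.of_isClosed_subset isClosed_closure hclsub
      · apply Subset.antisymm
        · exact (image_mono (f := f) hclsub).trans (hs K hK).2.subset
        · intro y hy
          have h1 : f '' s {y} = {y} := (hs {y} isCompact_singleton).2
          have hne : (s {y}).Nonempty := by
            rcases eq_empty_or_nonempty (s {y}) with h | h
            · rw [h, image_empty] at h1
              exact absurd h1.symm (singleton_ne_empty y)
            · exact h
          obtain ⟨x, hx⟩ := hne
          have hfx : f x = y := by
            have : f x ∈ ({y} : Set Y) := h1 ▸ mem_image_of_mem f hx
            simpa using this
          exact ⟨x, subset_closure (mem_biUnion hy hx), hfx⟩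
    · intro K K' _ _
      simp only []
      rw [biUnion_union, closure_union]
  tfae_have 4 → 1 := by
    rintro ⟨s, hs, hadd⟩
    have hmono : ∀ K K' : Set Y, IsCompact K → IsCompact K' → K ⊆ K' → s K ⊆ s K' := by
      intro K K' hK hK' hKK'
      have : s (K ∪ K') = s K ∪ s K' := hadd K K' hK hK'
      rw [union_eq_self_of_subset_left hKK'] at this
      rw [this]
      exact subset_union_left
    refine ⟨⋃ y : Y, s {y}, ?_, ?_⟩
    · apply Subset.antisymm (subset_univ _)
      intro y _
      have h1 : f '' s {y} = {y} := (hs {y} isCompact_singleton).2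
      have hne : (s {y}).Nonempty := by
        rcases eq_empty_or_nonempty (s {y}) with h | h
        · rw [h, image_empty] at h1
          exact absurd h1.symm (singleton_ne_empty y)
        · exact h
      obtain ⟨x, hx⟩ := hne
      have hfx : f x = y := by
        have : f x ∈ ({y} : Set Y) := h1 ▸ mem_image_of_mem f hx
        simpa using this
      exact ⟨x, mem_iUnion.mpr ⟨y, hx⟩, hfx⟩
    · intro K hK
      have hsub : (⋃ y : Y, s {y}) ∩ f ⁻¹' K ⊆ s K := by
        rintro x ⟨hx1, hx2⟩
        obtain ⟨y, hy⟩ := mem_iUnion.mp hx1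
        have hfx : f x = y := by
          have : f x ∈ ({y} : Set Y) :=
            (hs {y} isCompact_singleton).2 ▸ mem_image_of_mem f hy
          simpa using this
        have hyK : y ∈ K := hfx ▸ hx2
        exact hmono {y} K isCompact_singleton hK (by simpa using hyK) hy
      have hclsub : closure ((⋃ y : Y, s {y}) ∩ f ⁻¹' K) ⊆ s K :=
        (hs K hK).1.isClosed.closure_subset_iff.mpr hsub
      exact (hs K hK).1.of_isClosed_subset isClosed_closure hclsub
  tfae_finish
end

section
/- Let X and Y be Hausdorff topological spaces such that X is μ-complete and every compact subset of Y is sequentially compact. Then a function s : Y → X preserves precompact sets if and only if s is cs*-continuous. -/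
open Filter Topology Set

universe u v

/-- A function `s : Y → X` preserves precompact sets if the image of every compact
set has compact closure. -/
def PreservesPrecompact {X : Type u} {Y : Type v} [TopologicalSpace X] [TopologicalSpace Y]
    (s : Y → X) : Prop :=
  ∀ K : Set Y, IsCompact K → IsCompact (closure (s '' K))

/-- A function `s : Y → X` is cs*-continuous if for every convergent sequence `(y n)` in `Y`
the image sequence `(s (y n))` has an accumulation (cluster) point in `X`. -/
def CsStarContinuous {X : Type u} {Y : Type v} [TopologicalSpace X] [TopologicalSpace Y]
    (s : Y → X) : Prop :=
  ∀ (y : ℕ → Y) (a : Y), Tendsto y atTop (𝓝 a) →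
    ∃ x : X, MapClusterPt x atTop (fun n => s (y n))

/-- A subset `B` of a topological space is bounded if every locally finite family of open
sets has only finitely many members meeting `B`. -/
def BoundedSubset {X : Type u} [TopologicalSpace X] (B : Set X) : Prop :=
  ∀ 𝒰 : Set (Set X), (∀ U ∈ 𝒰, IsOpen U) →
    LocallyFinite (fun U : 𝒰 => (U : Set X)) →
    {U ∈ 𝒰 | (U ∩ B).Nonempty}.Finite

/-- A space is μ-complete if every bounded subset has compact closure. -/
def MuComplete (X : Type u) [TopologicalSpace X] : Prop :=
  ∀ B : Set X, BoundedSubset B → IsCompact (closure B)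

/-- If `X` is μ-complete and every compact subset of `Y` is sequentially
compact, then `s : Y → X` preserves precompact sets iff `s` is cs*-continuous. -/
theorem stmt_1 {X : Type u} {Y : Type v} [TopologicalSpace X] [TopologicalSpace Y]
    [T2Space X] [T2Space Y]
    (hX : MuComplete X) (hY : ∀ K : Set Y, IsCompact K → IsSeqCompact K)
    (s : Y → X) :
    PreservesPrecompact s ↔ CsStarContinuous s := by
  constructor
  · intro hp y a hy
    have hK : IsCompact (closure (s '' insert a (Set.range y))) :=
      hp _ hy.isCompact_insert_range
    have hle : Filter.map (fun n => s (y n)) atTop ≤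
        𝓟 (closure (s '' insert a (Set.range y))) := by
      rw [Filter.le_principal_iff, Filter.mem_map]
      exact Filter.Eventually.of_forall fun n =>
        subset_closure (Set.mem_image_of_mem s (Set.mem_insert_iff.2 (Or.inr (Set.mem_range_self n))))
    obtain ⟨x, -, hx⟩ := hK.exists_clusterPt hle
    exact ⟨x, hx⟩
  · intro hcs K hK
    apply hX
    intro 𝒰 h𝒰open hlf
    by_contra hinf
    replace hinf : {U ∈ 𝒰 | (U ∩ s '' K).Nonempty}.Infinite := hinf
    set T := {U ∈ 𝒰 | (U ∩ s '' K).Nonempty} with hT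
    obtain f := hinf.natEmbedding
    have h1 : ∀ n : ℕ, ∃ z ∈ K, s z ∈ ((f n : Set X)) := by
      intro n
      obtain ⟨p, hpU, z, hzK, hzp⟩ := (f n).2.2
      exact ⟨z, hzK, hzp ▸ hpU⟩
    choose y hyK hyU using h1
    obtain ⟨a, -, φ, hφ, hconv⟩ := hY K hK hyK
    obtain ⟨x, hx⟩ := hcs (fun n => y (φ n)) a hconv
    obtain ⟨V, hV, hfin⟩ := hlf x
    have hfreq : ∃ᶠ n in atTop, s (y (φ n)) ∈ V :=
      mapClusterPt_iff_frequently.1 hx V hV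
    have hSinf : {n : ℕ | s (y (φ n)) ∈ V}.Infinite :=
      Nat.frequently_atTop_iff_infinite.1 hfreq
    set S := {n : ℕ | s (y (φ n)) ∈ V} with hS
    have hg : ∀ n ∈ S, ((f (φ n) : Set X) ∩ V).Nonempty := by
      intro n hn
      exact ⟨s (y (φ n)), hyU (φ n), hn⟩
    have hgmap : ∀ n ∈ S, (⟨(f (φ n) : Set X), (f (φ n)).2.1⟩ : 𝒰) ∈
        {i : 𝒰 | ((i : Set X) ∩ V).Nonempty} := fun n hn => hg n hn
    have hinj : Set.InjOn (fun n => (⟨(f (φ n) : Set X), (f (φ n)).2.1⟩ : 𝒰)) S := by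
      intro n₁ _ n₂ _ h
      simp only [Subtype.mk.injEq] at h
      have h3 : f (φ n₁) = f (φ n₂) := Subtype.ext h
      exact hφ.injective (f.injective h3)
    have hSfin : S.Finite := by
      refine Set.Finite.of_finite_image ?_ hinj
      exact hfin.subset (Set.image_subset_iff.2 hgmap)
    exact hSinf hSfin
end

section
/- Let f : X → Y be a continuous closed surjection between Hausdorff topological spaces. Then every section s : Y → X of f is cs*-continuous. Moreover, if X is μ-complete, then every section s : Y → X of f preserves precompact sets. -/
open Filter Topology Set

universe u v

/-- A constant value attained frequently is a cluster point. -/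
lemma freq_eq_mapClusterPt {X : Type u} [TopologicalSpace X] {u : ℕ → X} {c : X}
    (h : ∃ᶠ n in atTop, u n = c) : MapClusterPt c atTop u := by
  rw [mapClusterPt_iff_frequently]
  intro s hs
  exact h.mono fun n hn => hn ▸ mem_of_mem_nhds hs

/-- If a sequence has no cluster point, each of its tails is a closed set. -/
lemma tail_closed_of_no_clusterPt {X : Type u} [TopologicalSpace X] [T1Space X] {u : ℕ → X}
    (h : ∀ x : X, ¬ MapClusterPt x atTop u) (k : ℕ) : IsClosed (u '' Set.Ici k) := by
  rw [← isOpen_compl_iff, isOpen_iff_mem_nhds]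
  intro x hx
  have hx' := h x
  rw [mapClusterPt_iff_frequently] at hx'
  push_neg at hx'
  obtain ⟨U, hU, hUfin⟩ := hx'
  rw [eventually_atTop] at hUfin
  obtain ⟨N, hN⟩ := hUfin
  have hTfin : (u '' Set.Ico k N).Finite := (Set.finite_Ico k N).image u
  have hxT : x ∉ u '' Set.Ico k N := by
    rintro ⟨m, hm, hmx⟩
    exact hx ⟨m, hm.1, hmx⟩
  have hmem : U \ (u '' Set.Ico k N) ∈ 𝓝 x :=
    Filter.inter_mem hU (hTfin.isClosed.isOpen_compl.mem_nhds hxT)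
  refine Filter.mem_of_superset hmem ?_
  rintro z ⟨hzU, hzT⟩ hz
  obtain ⟨m, hm, rfl⟩ := hz
  rcases lt_or_ge m N with h1 | h1
  · exact hzT ⟨m, ⟨hm, h1⟩, rfl⟩
  · exact hN m h1 hzU

/-- If a sequence has no cluster point, then any given value is attained
only finitely often (key auxiliary fact, used via `freq_eq_mapClusterPt`). -/
lemma closed_image_tail {X : Type u} {Y : Type v} [TopologicalSpace X] [TopologicalSpace Y]
    [T1Space X] {f : X → Y} (hclosed : IsClosedMap f) {u : ℕ → X}
    (h : ∀ x : X, ¬ MapClusterPt x atTop u) (k : ℕ) : IsClosed ((f ∘ u) '' Set.Ici k) := by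
  rw [Set.image_comp]
  exact hclosed _ (tail_closed_of_no_clusterPt h k)

/-- Every section of a continuous closed surjection between Hausdorff spaces
is cs*-continuous; moreover, if the domain is μ-complete then every section preserves
precompact sets. -/
theorem stmt_2 {X : Type u} {Y : Type v} [TopologicalSpace X] [TopologicalSpace Y]
    [T2Space X] [T2Space Y] (f : X → Y) (hf : Continuous f)
    (hclosed : IsClosedMap f) (hsurj : Function.Surjective f) :
    (∀ s : Y → X, (∀ y, f (s y) = y) → CsStarContinuous s) ∧
    (MuComplete X → ∀ s : Y → X, (∀ y, f (s y) = y) →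
      ∀ K : Set Y, IsCompact K → IsCompact (closure (s '' K))) := by
  constructor
  · -- cs*-continuity
    intro s hs y a hya
    by_contra hcon
    push_neg at hcon
    set u : ℕ → X := fun n => s (y n) with hu
    by_cases hfreq : ∃ᶠ n in atTop, y n = a
    · exact hcon (s a) (freq_eq_mapClusterPt (hfreq.mono fun n hn => by simp [hu, hn]))
    · rw [not_frequently, eventually_atTop] at hfreq
      obtain ⟨k, hk⟩ := hfreq
      have hcl : IsClosed ((f ∘ u) '' Set.Ici k) := closed_image_tail hclosed hcon k
      have hfu : ∀ n, (f ∘ u) n = y n := fun n => hs (y n)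
      have hmem : a ∈ closure ((f ∘ u) '' Set.Ici k) := by
        refine mem_closure_of_tendsto hya ?_
        filter_upwards [eventually_ge_atTop k] with n hn
        exact ⟨n, hn, hfu n⟩
      rw [hcl.closure_eq] at hmem
      obtain ⟨m, hm, hma⟩ := hmem
      exact hk m hm ((hfu m) ▸ hma)
  · -- preservation of precompact sets
    intro hmu s hs K hK
    apply hmu
    intro 𝒰 hopen hlf
    by_contra hinf
    have hinf' : {U ∈ 𝒰 | (U ∩ s '' K).Nonempty}.Infinite := hinf
    let e := hinf'.natEmbedding
    have hchoice : ∀ n : ℕ, ∃ yk ∈ K, s yk ∈ ((e n : Set X)) := by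
      intro n
      obtain ⟨x, hxU, yk, hykK, hykx⟩ := (e n).2.2
      exact ⟨yk, hykK, hykx ▸ hxU⟩
    choose v hvK hvU using hchoice
    set u : ℕ → X := fun n => s (v n) with hu
    -- the sequence u has no cluster point
    have hnocl : ∀ c : X, ¬ MapClusterPt c atTop u := by
      intro c hc
      obtain ⟨V, hV, hVfin⟩ := hlf c
      have hfreq : ∃ᶠ n in atTop, u n ∈ V := (mapClusterPt_iff_frequently.mp hc) V hV
      have hinfset : {n : ℕ | u n ∈ V}.Infinite := Nat.frequently_atTop_iff_infinite.mp hfreq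
      -- map each such n to its member of 𝒰
      have hg : Function.Injective (fun n : ℕ => (⟨(e n : Set X), (e n).2.1⟩ : 𝒰)) := by
        intro m n hmn
        simp only [Subtype.mk.injEq] at hmn
        exact e.injective (Subtype.ext hmn)
      have hsub : {n : ℕ | u n ∈ V} ⊆
          (fun n : ℕ => (⟨(e n : Set X), (e n).2.1⟩ : 𝒰)) ⁻¹'
            {i : 𝒰 | ((i : Set X) ∩ V).Nonempty} := by
        intro n hn
        exact ⟨u n, hvU n, hn⟩
      exact hinfset (Set.Finite.subset (hVfin.preimage hg.injOn) hsub)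
    -- tails of v give a decreasing sequence of closed subsets of K
    have hfu : ∀ n, (f ∘ u) n = v n := fun n => hs (v n)
    have hEq : ∀ k, (f ∘ u) '' Set.Ici k = v '' Set.Ici k := by
      intro k
      ext z
      constructor
      · rintro ⟨m, hm, rfl⟩; exact ⟨m, hm, (hfu m).symm⟩
      · rintro ⟨m, hm, rfl⟩; exact ⟨m, hm, hfu m⟩
    have hEcl : ∀ k, IsClosed (v '' Set.Ici k) := by
      intro k
      rw [← hEq]
      exact closed_image_tail hclosed hnocl k
    have hEsubK : ∀ k, v '' Set.Ici k ⊆ K := by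
      rintro k z ⟨m, hm, rfl⟩; exact hvK m
    have hne : (⋂ k, v '' Set.Ici k).Nonempty := by
      apply IsCompact.nonempty_iInter_of_sequence_nonempty_isCompact_isClosed
      · intro i
        exact Set.image_mono (Set.Ici_subset_Ici.mpr (Nat.le_succ i))
      · intro i; exact ⟨v i, i, le_refl i, rfl⟩
      · exact IsCompact.of_isClosed_subset hK (hEcl 0) (hEsubK 0)
      · exact hEcl
    obtain ⟨a, ha⟩ := hne
    have hfreqa : ∃ᶠ n in atTop, v n = a := by
      rw [Nat.frequently_atTop_iff_infinite]
      intro hfin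
      obtain ⟨k, -, hk⟩ := (hfin.bddAbove).exists_ge 0
      have := Set.mem_iInter.mp ha (k + 1)
      obtain ⟨m, hm, hma⟩ := this
      have h1 : m ≤ k := hk m hma
      have h2 : k + 1 ≤ m := hm
      omega
    exact hnocl (s a) (freq_eq_mapClusterPt (hfreqa.mono fun n hn => by simp [hu, hn]))
end

section
/- Let f : X → Y be a continuous surjection from a μ-complete Hausdorff space X onto a Fréchet–Urysohn Hausdorff space Y. Then the following conditions are equivalent: (1) f is subproper; (2) f has a section preserving precompact sets; (3) f has a cs*-continuous section; (4) f is inductively closed, i.e. there is a closed set Z ⊆ X with f(Z) = Y such that the restriction f|Z : Z → Y is a closed map. -/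
open Filter Topology Set

universe u v

section Aux


/-- Extract an injective subsequence from a sequence with infinite range. -/
lemma aux_injSubseq {α : Type*} (u : ℕ → α) (h : (Set.range u).Infinite) :
    ∃ φ : ℕ → ℕ, StrictMono φ ∧ Function.Injective (u ∘ φ) := by
  have key : ∀ n : ℕ, ∃ m : ℕ, u m ∉ u '' (Set.Iic n) := by
    intro n
    by_contra hc
    push_neg at hc
    have : Set.range u ⊆ u '' (Set.Iic n) := by
      rintro _ ⟨m, rfl⟩; exact hc m
    exact h ((((Set.finite_Iic n).image u).subset this))
  choose g hg using key
  have hgt : ∀ n, n < g n := by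
    intro n
    by_contra hle
    push_neg at hle
    exact hg n ⟨g n, hle, rfl⟩
  let φ : ℕ → ℕ := fun k => Nat.rec (g 0) (fun _ p => g p) k
  have hφs : StrictMono φ := strictMono_nat_of_lt_succ (fun n => hgt _)
  refine ⟨φ, hφs, ?_⟩
  -- injective: if j < k then u (φ k) ∉ u '' Iic (φ (k-1)) ∋ u (φ j)
  have hne : ∀ j k, j < k → u (φ j) ≠ u (φ k) := by
    intro j k hjk heq
    match k, hjk with
    | k' + 1, hjk =>
      have : φ j ≤ φ k' := hφs.monotone (Nat.lt_succ_iff.mp hjk)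
      exact hg (φ k') ⟨φ j, this, heq⟩
  intro a b hab
  rcases lt_trichotomy a b with h' | h' | h'
  · exact absurd hab (hne a b h')
  · exact h'
  · exact absurd hab.symm (hne b a h')

/-- From an infinite image over a set of naturals, select a strictly monotone run. -/
lemma aux_natSel (S : Set ℕ) (m : ℕ → ℕ) (h : (m '' S).Infinite) :
    ∃ ψ : ℕ → ℕ, StrictMono ψ ∧ StrictMono (m ∘ ψ) ∧ ∀ t, ψ t ∈ S := by
  have key : ∀ k : ℕ, ∃ k' ∈ S, k < k' ∧ m k < m k' := by
    intro k
    have hinf : (m '' (S ∩ Set.Ioi k)).Infinite := by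
      have : m '' S ⊆ m '' (S ∩ Set.Ioi k) ∪ m '' (S ∩ Set.Iic k) := by
        rintro _ ⟨a, ha, rfl⟩
        rcases le_or_gt a k with h' | h'
        · exact Or.inr ⟨a, ⟨ha, h'⟩, rfl⟩
        · exact Or.inl ⟨a, ⟨ha, h'⟩, rfl⟩
      intro hfin
      exact h (((hfin.union (((Set.finite_Iic k).inter_of_right S).image m)).subset this))
    obtain ⟨v, ⟨a, ⟨haS, hak⟩, rfl⟩, hv⟩ := hinf.exists_gt (m k)
    exact ⟨a, haS, hak, hv⟩
  obtain ⟨k0, hk0⟩ : ∃ k0, k0 ∈ S := by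
    rcases h.nonempty with ⟨_, a, ha, rfl⟩; exact ⟨a, ha⟩
  choose g hgS hgt hmgt using key
  let ψ : ℕ → ℕ := fun t => Nat.rec k0 (fun _ p => g p) t
  have h1 : StrictMono ψ := strictMono_nat_of_lt_succ (fun n => hgt _)
  have h2 : StrictMono (m ∘ ψ) := strictMono_nat_of_lt_succ (fun n => hmgt _)
  have h3 : ∀ t, ψ t ∈ S := by
    intro t
    cases t with
    | zero => exact hk0
    | succ t' => exact hgS _
  exact ⟨ψ, h1, h2, h3⟩

/-- A value attained infinitely often is a cluster point target. -/
lemma aux_clusterPt_of_infinite_eq {X : Type*} [TopologicalSpace X] {u : ℕ → X} {c : X}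
    (h : {n | u n = c}.Infinite) : MapClusterPt c atTop u := by
  rw [mapClusterPt_iff_frequently]
  intro s hs
  rw [Nat.frequently_atTop_iff_infinite]
  apply h.mono
  intro n hn
  simp only [Set.mem_setOf_eq] at *
  rw [hn]; exact mem_of_mem_nhds hs

lemma aux_eq_of_cluster_of_tendsto {X : Type*} [TopologicalSpace X] [T2Space X]
    {u : ℕ → X} {b c : X} (hc : MapClusterPt c atTop u) (hb : Tendsto u atTop (𝓝 b)) :
    c = b := by
  have : ClusterPt c (𝓝 b) := hc.clusterPt.mono hb
  exact eq_of_nhds_neBot this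


/-- Pigeonhole: a sequence with finite range has a value attained infinitely often. -/
lemma aux_exists_const {α : Type*} (u : ℕ → α) (h : (Set.range u).Finite) :
    ∃ c, {n | u n = c}.Infinite := by
  haveI := h.to_subtype
  obtain ⟨c, hc⟩ := Finite.exists_infinite_fiber
    (fun n => (⟨u n, ⟨n, rfl⟩⟩ : Set.range u))
  refine ⟨(c : α), ?_⟩
  have heq : {n | u n = (c : α)} =
      (fun n => (⟨u n, ⟨n, rfl⟩⟩ : Set.range u)) ⁻¹' {c} := by
    ext n
    simp [Subtype.ext_iff]
  rw [heq, ← Set.infinite_coe_iff]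
  exact hc


/-- In a Fréchet–Urysohn T2 space, a point in the closure of `S` but not in `S`
is the limit of an injective sequence in `S`. -/
lemma aux_exists_injective_tendsto {Y : Type*} [TopologicalSpace Y] [T2Space Y]
    [FrechetUrysohnSpace Y] {S : Set Y} {b : Y} (hb : b ∈ closure S) (hbS : b ∉ S) :
    ∃ y : ℕ → Y, Function.Injective y ∧ (∀ n, y n ∈ S) ∧ Tendsto y atTop (𝓝 b) := by
  obtain ⟨u, huS, hu⟩ := mem_closure_iff_seq_limit.mp hb
  have hinf : (Set.range u).Infinite := by
    intro hfin
    obtain ⟨c, hcinf⟩ := aux_exists_const u hfin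
    have hcb : c = b :=
      aux_eq_of_cluster_of_tendsto (aux_clusterPt_of_infinite_eq hcinf) hu
    obtain ⟨n, hn⟩ := hcinf.nonempty
    exact hbS (hcb ▸ hn ▸ huS n)
  obtain ⟨φ, hφ, hinj⟩ := aux_injSubseq u hinf
  exact ⟨u ∘ φ, hinj, fun n => huS _, hu.comp hφ.tendsto_atTop⟩

/-- If a sequence has no cluster point, its tail images are closed sets. -/
lemma aux_closed_of_no_clusterPt {X : Type*} [TopologicalSpace X] [T2Space X]
    {u : ℕ → X} (h : ∀ p : X, ¬ MapClusterPt p atTop u) (m : ℕ) :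
    IsClosed (u '' Set.Ici m) := by
  rw [← closure_subset_iff_isClosed]
  intro p hp
  by_contra hpS
  have hnc := h p
  rw [mapClusterPt_iff_frequently] at hnc
  push_neg at hnc
  obtain ⟨s, hs, hfreq⟩ := hnc
  rw [eventually_atTop] at hfreq
  obtain ⟨N, hN⟩ := hfreq
  set F : Set X := u '' (Set.Iio N ∩ Set.Ici m) with hF
  have hFfin : F.Finite := ((Set.finite_Iio N).inter_of_left _).image u
  have hpF : p ∉ F := fun hc => hpS (Set.image_mono Set.inter_subset_right hc)
  have hs' : s ∩ Fᶜ ∈ 𝓝 p :=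
    Filter.inter_mem hs (hFfin.isClosed.isOpen_compl.mem_nhds (by simpa using hpF))
  rw [mem_closure_iff_nhds] at hp
  obtain ⟨x, hx1, hx2⟩ := hp _ hs'
  obtain ⟨n, hn, rfl⟩ := hx2
  rcases lt_or_ge n N with h' | h'
  · exact hx1.2 ⟨n, ⟨h', hn⟩, rfl⟩
  · exact hN n h' hx1.1

/-- A sequence inside a set with compact closure has a cluster point. -/
lemma aux_exists_clusterPt {X : Type*} [TopologicalSpace X] {B : Set X}
    (hB : IsCompact (closure B)) {u : ℕ → X} (hu : ∀ n, u n ∈ B) :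
    ∃ x, MapClusterPt x atTop u := by
  have hle : Filter.map u atTop ≤ 𝓟 (closure B) := by
    rw [Filter.le_principal_iff, Filter.mem_map]
    exact Filter.Eventually.of_forall (fun n => subset_closure (hu n))
  obtain ⟨x, _, hx⟩ := hB.exists_mapClusterPt hle
  exact ⟨x, hx⟩


section LocFin
variable {X : Type*} [TopologicalSpace X] {𝒰 : Set (Set X)}
  (hlf : LocallyFinite (fun U : 𝒰 => (U : Set X)))
  {V : ℕ → Set X} (hV : ∀ i, V i ∈ 𝒰) (hVinj : Function.Injective V)

include hlf hV hVinj

lemma aux_locFin_nat (x : X) : ∃ N ∈ 𝓝 x, {i | (V i ∩ N).Nonempty}.Finite := by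
  obtain ⟨N, hN, hfin⟩ := hlf x
  refine ⟨N, hN, ?_⟩
  have heq : {i | (V i ∩ N).Nonempty} =
      (fun i => (⟨V i, hV i⟩ : 𝒰)) ⁻¹' {W : 𝒰 | ((W : Set X) ∩ N).Nonempty} := rfl
  rw [heq]
  exact hfin.preimage (Function.Injective.injOn (fun a b hab => hVinj (by
    simpa [Subtype.ext_iff] using hab)))

/-- A single point cannot belong to infinitely many members of a locally finite family. -/
lemma aux_mem_contra {x : X} (h : {i | x ∈ V i}.Infinite) : False := by
  obtain ⟨N, hN, hfin⟩ := aux_locFin_nat hlf hV hVinj x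
  exact h (hfin.subset (fun i hi => ⟨x, hi, mem_of_mem_nhds hN⟩))

/-- A sequence running through infinitely many distinct members of a locally finite
family has no cluster point. -/
lemma aux_cluster_contra {ι : ℕ → ℕ} (hι : Function.Injective ι) {w : ℕ → X}
    (hw : ∀ t, w t ∈ V (ι t)) {x : X} (hx : MapClusterPt x atTop w) : False := by
  obtain ⟨N, hN, hfin⟩ := aux_locFin_nat hlf hV hVinj x
  have hfreq := (mapClusterPt_iff_frequently.mp hx) N hN
  rw [Nat.frequently_atTop_iff_infinite] at hfreq
  have hsub : {t | w t ∈ N} ⊆ ι ⁻¹' {i | (V i ∩ N).Nonempty} :=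
    fun t ht => ⟨w t, hw t, ht⟩
  exact hfreq ((hfin.preimage hι.injOn).subset hsub)

end LocFin

/-- KEY LEMMA A: a cs*-continuous map into a μ-complete space over a Fréchet-Urysohn
domain sends compact sets to sets with compact closure. -/
lemma aux_lemA {X Y : Type*} [TopologicalSpace X] [TopologicalSpace Y]
    [T2Space X] [T2Space Y] [FrechetUrysohnSpace Y]
    (hX : MuComplete X) (s : Y → X) (hcs : CsStarContinuous s)
    {K : Set Y} (hK : IsCompact K) : IsCompact (closure (s '' K)) := by
  apply hX
  intro 𝒰 hopen hlf
  by_contra hfin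
  have hinf : {U ∈ 𝒰 | (U ∩ s '' K).Nonempty}.Infinite := hfin
  set g := hinf.natEmbedding with hg
  set V : ℕ → Set X := fun i => ((g i : Set X)) with hV
  have hVmem : ∀ i, V i ∈ 𝒰 := fun i => (g i).2.1
  have hVinj : Function.Injective V := fun a b hab =>
    g.injective (Subtype.ext hab)
  have hVne : ∀ i, (V i ∩ s '' K).Nonempty := fun i => (g i).2.2
  -- choose y i ∈ K with s (y i) ∈ V i
  have hy : ∀ i, ∃ y ∈ K, s y ∈ V i := by
    intro i
    obtain ⟨x, hx1, y, hyK, rfl⟩ := hVne i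
    exact ⟨y, hyK, hx1⟩
  choose y hyK hyV using hy
  by_cases hry : (Set.range y).Finite
  · obtain ⟨c, hc⟩ := aux_exists_const y hry
    refine aux_mem_contra hlf hVmem hVinj (x := s c) (hc.mono ?_)
    intro i hi
    simp only [Set.mem_setOf_eq] at *
    rw [← hi]
    exact hyV i
  · -- cluster point of y in K
    have hle : Filter.map y atTop ≤ 𝓟 K := by
      rw [Filter.le_principal_iff, Filter.mem_map]
      exact Filter.Eventually.of_forall hyK
    obtain ⟨a, haK, hay⟩ := hK.exists_mapClusterPt hle
    by_cases hfa : {i | y i = a}.Finite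
    · -- a is in the closure of P := range y \ {a}
      have haP : a ∈ closure (Set.range y \ {a}) := by
        rw [mem_closure_iff_nhds]
        intro N hN
        have hfreq := (mapClusterPt_iff_frequently.mp hay) N hN
        rw [Nat.frequently_atTop_iff_infinite] at hfreq
        obtain ⟨i, hiN, hia⟩ := (hfreq.diff hfa).nonempty
        exact ⟨y i, hiN, ⟨i, rfl⟩, hia⟩
      have haP' : a ∉ Set.range y \ {a} := fun h => h.2 rfl
      obtain ⟨z, hzinj, hzP, hza⟩ := aux_exists_injective_tendsto haP haP'
      have hzy : ∀ k, ∃ i, y i = z k := fun k => (hzP k).1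
      choose ι hι using hzy
      have hιinj : Function.Injective ι := fun a b hab => hzinj (by rw [← hι, ← hι, hab])
      obtain ⟨x, hx⟩ := hcs z a hza
      exact aux_cluster_contra hlf hVmem hVinj hιinj
        (w := fun k => s (z k))
        (fun t => by show s (z t) ∈ V (ι t); rw [← hι t]; exact hyV (ι t)) hx
    · have hfa' : {i | y i = a}.Infinite := hfa
      refine aux_mem_contra hlf hVmem hVinj (x := s a) (hfa'.mono ?_)
      intro i hi
      simp only [Set.mem_setOf_eq] at *
      rw [← hi]
      exact hyV i


/-- Pigeonhole for sets. -/
lemma aux_pigeon {β : Type*} {S : Set ℕ} (hS : S.Infinite) (m : ℕ → β)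
    (h : (m '' S).Finite) : ∃ v, {k | k ∈ S ∧ m k = v}.Infinite := by
  by_contra hc
  push_neg at hc
  refine hS ?_
  have hsub : S ⊆ ⋃ v ∈ m '' S, {k | k ∈ S ∧ m k = v} := by
    intro k hk
    exact Set.mem_biUnion ⟨k, hk, rfl⟩ ⟨hk, rfl⟩
  exact (h.biUnion (fun v _ => hc v)).subset hsub

lemma aux_finite_meets_compact {X : Type*} [TopologicalSpace X] {𝒰 : Set (Set X)}
    (hlf : LocallyFinite (fun U : 𝒰 => (U : Set X)))
    {V : ℕ → Set X} (hV : ∀ i, V i ∈ 𝒰) (hVinj : Function.Injective V)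
    {M : Set X} (hM : IsCompact M) : {i | (V i ∩ M).Nonempty}.Finite := by
  have heq : {i | (V i ∩ M).Nonempty} =
      (fun i => (⟨V i, hV i⟩ : 𝒰)) ⁻¹' {W : 𝒰 | ((W : Set X) ∩ M).Nonempty} := rfl
  rw [heq]
  exact (hlf.finite_nonempty_inter_compact hM).preimage
    (Function.Injective.injOn (fun a b hab => hVinj (by simpa [Subtype.ext_iff] using hab)))

/-- THE MAIN CONSTRUCTION: (3) → (4). -/
lemma aux_3to4 {X Y : Type*} [TopologicalSpace X] [TopologicalSpace Y]
    [T2Space X] [T2Space Y] [FrechetUrysohnSpace Y]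
    (hX : MuComplete X) (f : X → Y) (hf : Continuous f)
    (s : Y → X) (hs : ∀ y, f (s y) = y) (hcs : CsStarContinuous s) :
    ∃ Z : Set X, IsClosed Z ∧ f '' Z = univ ∧ IsClosedMap (fun z : Z => f z) := by
  classical
  set Zset : Set X := {x | ∀ V : Set Y, IsOpen V → f x ∈ V → x ∈ closure (s '' V)}
    with hZdef
  -- Z is closed
  have hZc : IsClosed Zset := by
    rw [← closure_subset_iff_isClosed]
    intro x hx V hVo hfx
    rw [mem_closure_iff]
    intro o ho hxo
    have ho' : IsOpen (o ∩ f ⁻¹' V) := ho.inter (hVo.preimage hf)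
    have hxo' : x ∈ o ∩ f ⁻¹' V := ⟨hxo, hfx⟩
    rw [mem_closure_iff] at hx
    obtain ⟨z, hzo', hzZ⟩ := hx _ ho' hxo'
    have hz2 : z ∈ closure (s '' V) := hzZ V hVo hzo'.2
    rw [mem_closure_iff] at hz2
    obtain ⟨w, hw1, hw2⟩ := hz2 _ ho' hzo'
    exact ⟨w, hw1.1, hw2⟩
  -- s maps into Z
  have hsZ : ∀ y, s y ∈ Zset := by
    intro y V hVo hfV
    exact subset_closure ⟨y, by rwa [hs] at hfV, rfl⟩
  have hZuniv : f '' Zset = univ :=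
    Set.eq_univ_of_forall (fun b => ⟨s b, hsZ b, hs b⟩)
  -- Main step : images of closed subsets of Z are closed
  have hMain : ∀ D : Set X, IsClosed D → D ⊆ Zset → IsClosed (f '' D) := by
    intro D hD hDZ
    rw [← closure_subset_iff_isClosed]
    intro b hb
    by_contra hbD
    obtain ⟨y, hyinj, hyD, hyb⟩ := aux_exists_injective_tendsto hb hbD
    have hyne : ∀ n, y n ≠ b := fun n h => hbD (h ▸ hyD n)
    choose x hxD hxf using hyD
    -- x n ∈ D ⊆ Zset, f (x n) = y n
    have hcl : ∃ p, MapClusterPt p atTop x := by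
      refine aux_exists_clusterPt (B := Set.range x) (hX _ ?_) (fun n => ⟨n, rfl⟩)
      intro 𝒰 hopen hlf
      by_contra hfin
      have hinf : {U ∈ 𝒰 | (U ∩ Set.range x).Nonempty}.Infinite := hfin
      set g := hinf.natEmbedding with hg
      set V : ℕ → Set X := fun i => ((g i : Set X)) with hVdef
      have hVmem : ∀ i, V i ∈ 𝒰 := fun i => (g i).2.1
      have hVinj : Function.Injective V := fun a b hab => g.injective (Subtype.ext hab)
      have hVo : ∀ i, IsOpen (V i) := fun i => hopen _ (hVmem i)
      have hVne : ∀ i, ∃ n, x n ∈ V i := by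
        intro i
        obtain ⟨p, hp1, n, rfl⟩ := (g i).2.2
        exact ⟨n, hp1⟩
      choose n₀ hn₀ using hVne
      set K₀ : Set Y := insert b (Set.range y) with hK₀def
      have hK₀ : IsCompact K₀ := hyb.isCompact_insert_range
      set M : Set X := closure (s '' K₀) with hMdef
      have hM : IsCompact M := aux_lemA hX s hcs hK₀
      set T : Set ℕ := {i | (V i ∩ M).Nonempty} with hTdef
      have hT : T.Finite := aux_finite_meets_compact hlf hVmem hVinj hM
      have hS : (Tᶜ : Set ℕ).Infinite := hT.infinite_compl
      by_cases hn₀fin : (n₀ '' Tᶜ).Finite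
      · -- some single point of the sequence lies in infinitely many V i
        obtain ⟨n', hn'⟩ := aux_pigeon hS n₀ hn₀fin
        refine aux_mem_contra hlf hVmem hVinj (x := x n') (hn'.mono ?_)
        intro i ⟨_, hi2⟩
        simpa only [Set.mem_setOf_eq, ← hi2] using hn₀ i
      · -- select a strictly monotone run
        obtain ⟨ψ, hψmono, hmmono, hψS⟩ := aux_natSel Tᶜ n₀ hn₀fin
        set mseq : ℕ → ℕ := fun t => n₀ (ψ t) with hmseq
        set q : ℕ → Y := fun t => y (mseq t) with hq
        have hqb : Tendsto q atTop (𝓝 b) := hyb.comp hmmono.tendsto_atTop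
        have hqK₀ : ∀ t, q t ∈ K₀ := fun t => Set.mem_insert_of_mem _ ⟨mseq t, rfl⟩
        set A : ℕ → Set Y := fun t => {y' | s y' ∈ V (ψ t)} with hA
        have hAK : ∀ t y', y' ∈ A t → y' ∉ K₀ := by
          intro t y' hy' hyK
          exact (hψS t) ⟨s y', hy', subset_closure ⟨y', hyK, rfl⟩⟩
        -- each q t is in the closure of A t
        have hqA : ∀ t, q t ∈ closure (A t) := by
          intro t
          rw [mem_closure_iff]
          intro W hWo hqW
          have hxZ : x (mseq t) ∈ Zset := hDZ (hxD (mseq t))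
          have hfxW : f (x (mseq t)) ∈ W := by rw [hxf]; exact hqW
          have h1 : x (mseq t) ∈ closure (s '' W) := hxZ W hWo hfxW
          rw [mem_closure_iff] at h1
          obtain ⟨p, hp1, y', hy'W, rfl⟩ := h1 _ (hVo (ψ t)) (hn₀ (ψ t))
          exact ⟨y', hy'W, hp1⟩
        have hqAnot : ∀ t, q t ∉ A t := fun t hmem => hAK t _ hmem (hqK₀ t)
        -- sequences within each A t converging to q t
        have hwex : ∀ t, ∃ w : ℕ → Y, Function.Injective w ∧ (∀ m, w m ∈ A t) ∧
            Tendsto w atTop (𝓝 (q t)) :=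
          fun t => aux_exists_injective_tendsto (hqA t) (hqAnot t)
        choose w _ hwA hwq using hwex
        -- the union of the sequences accumulates at b
        set Wun : Set Y := ⋃ t, Set.range (w t) with hWun
        have hbW : b ∈ closure Wun := by
          rw [mem_closure_iff]
          intro O hOo hbO
          obtain ⟨t, hqt⟩ := (hqb.eventually (hOo.mem_nhds hbO)).exists
          obtain ⟨m, hm⟩ := ((hwq t).eventually (hOo.mem_nhds hqt)).exists
          exact ⟨w t m, hm, Set.mem_iUnion.mpr ⟨t, m, rfl⟩⟩
        have hbWnot : b ∉ Wun := by
          rintro h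
          obtain ⟨t, m, rfl⟩ := Set.mem_iUnion.mp h
          exact hAK t _ (hwA t m) (Set.mem_insert _ _)
        obtain ⟨z, hzinj, hzW, hzb⟩ := aux_exists_injective_tendsto hbW hbWnot
        have hzrep : ∀ k, ∃ t m, w t m = z k := by
          intro k
          obtain ⟨t, m, hm⟩ := Set.mem_iUnion.mp (hzW k)
          exact ⟨t, m, hm⟩
        choose j mm hjm using hzrep
        by_cases hj : (Set.range j).Finite
        · obtain ⟨j', hj'⟩ := aux_exists_const j hj
          by_cases hmmf : (mm '' {k | j k = j'}).Finite
          · -- constant case: z is frequently a fixed point  → that point = b ∈ A j', absurd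
            obtain ⟨m', hm'⟩ := aux_pigeon hj' mm hmmf
            have hzc : {k | z k = w j' m'}.Infinite := by
              refine hm'.mono ?_
              rintro k ⟨hk1, hk2⟩
              simp only [Set.mem_setOf_eq] at *
              rw [← hjm k, hk1, hk2]
            have : w j' m' = b :=
              aux_eq_of_cluster_of_tendsto (aux_clusterPt_of_infinite_eq hzc) hzb
            exact hbWnot (this ▸ Set.mem_iUnion.mpr ⟨j', m', rfl⟩)
          · -- two different limits for one subsequence
            obtain ⟨ρ, hρmono, hmmρ, hρK⟩ := aux_natSel _ mm hmmf
            have h1 : Tendsto (fun t => z (ρ t)) atTop (𝓝 b) :=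
              hzb.comp hρmono.tendsto_atTop
            have h2 : Tendsto (fun t => z (ρ t)) atTop (𝓝 (q j')) := by
              have heq : (fun t => z (ρ t)) = fun t => w j' (mm (ρ t)) := by
                funext t
                rw [← hjm (ρ t), hρK t]
              rw [heq]
              exact (hwq j').comp hmmρ.tendsto_atTop
            exact hyne (mseq j') (tendsto_nhds_unique h2 h1)
        · -- main case: infinitely many distinct members are visited: cluster contradiction
          obtain ⟨φ, hφmono, hφinj⟩ := aux_injSubseq j hj
          obtain ⟨x', hx'⟩ := hcs (fun k => z (φ k)) b (hzb.comp hφmono.tendsto_atTop)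
          refine aux_cluster_contra hlf hVmem hVinj
            (ι := fun k => ψ (j (φ k)))
            (fun a b hab => hφinj (hψmono.injective hab))
            (w := fun k => s (z (φ k))) ?_ hx'
          intro t
          have : z (φ t) ∈ A (j (φ t)) := by
            rw [← hjm (φ t)]
            exact hwA _ _
          exact this
    obtain ⟨p, hp⟩ := hcl
    have hpD : p ∈ D := by
      have hpc : p ∈ closure D := by
        rw [mem_closure_iff_nhds]
        intro N hN
        obtain ⟨n, hn⟩ := ((mapClusterPt_iff_frequently.mp hp) N hN).exists
        exact ⟨x n, hn, hxD n⟩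
      rwa [hD.closure_eq] at hpc
    have hfp : f p = b := by
      have h1 : MapClusterPt (f p) atTop (f ∘ x) := hp.continuousAt_comp hf.continuousAt
      have h2 : (f ∘ x) = y := funext hxf
      rw [h2] at h1
      exact aux_eq_of_cluster_of_tendsto h1 hyb
    exact hbD ⟨p, hpD, hfp⟩
  refine ⟨Zset, hZc, hZuniv, ?_⟩
  intro C hC
  have h1 : IsClosed (Subtype.val '' C) := hZc.isClosedEmbedding_subtypeVal.isClosedMap _ hC
  have h2 : Subtype.val '' C ⊆ Zset := by
    rintro _ ⟨⟨x0, hx0⟩, _, rfl⟩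
    exact hx0
  have h3 := hMain _ h1 h2
  have heq : (fun z : Zset => f z) '' C = f '' (Subtype.val '' C) := by
    rw [Set.image_image]
  rwa [heq]


/-- (4) → (3): a section into an inductively-closed witness is cs*-continuous. -/
lemma aux_4to3 {X Y : Type*} [TopologicalSpace X] [TopologicalSpace Y] [T2Space X]
    (f : X → Y) (Z : Set X) (hZc : IsClosed Z) (hZs : f '' Z = univ)
    (hZm : IsClosedMap (fun z : Z => f z)) :
    ∃ s : Y → X, (∀ y, f (s y) = y) ∧ CsStarContinuous s := by
  have hex : ∀ y : Y, ∃ x, x ∈ Z ∧ f x = y := by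
    intro y
    have : y ∈ f '' Z := hZs ▸ Set.mem_univ y
    exact this
  choose sec hsecZ hsecf using hex
  refine ⟨sec, hsecf, ?_⟩
  intro y a hya
  by_contra hc
  push_neg at hc
  set u : ℕ → X := fun n => sec (y n) with hu
  have haZ : ∀ m : ℕ, a ∈ f '' (u '' Set.Ici m) := by
    intro m
    -- the tail image is closed in X, hence in Z; its f-image is closed
    have h1 : IsClosed (u '' Set.Ici m) := aux_closed_of_no_clusterPt hc m
    have h1' : IsClosed (Subtype.val ⁻¹' (u '' Set.Ici m) : Set Z) :=
      h1.preimage continuous_subtype_val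
    have h2 := hZm _ h1'
    have h3 : (fun z : Z => f z) '' (Subtype.val ⁻¹' (u '' Set.Ici m)) =
        f '' (u '' Set.Ici m) := by
      apply Set.Subset.antisymm
      · rintro _ ⟨⟨p, hpZ⟩, hp1, rfl⟩
        exact ⟨p, hp1, rfl⟩
      · rintro _ ⟨p, hp1, rfl⟩
        obtain ⟨n, hn, rfl⟩ := hp1
        exact ⟨⟨u n, hsecZ (y n)⟩, ⟨n, hn, rfl⟩, rfl⟩
    rw [h3] at h2
    -- a is in the closure of { y n : n ≥ m } = f '' (tail)
    have h4 : a ∈ closure (f '' (u '' Set.Ici m)) := by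
      rw [mem_closure_iff_nhds]
      intro N hN
      obtain ⟨n, hnN, hnm⟩ := ((hya.eventually_mem hN).and
        (eventually_ge_atTop m)).exists
      exact ⟨y n, hnN, u n, ⟨n, hnm, rfl⟩, hsecf (y n)⟩
    rwa [h2.closure_eq] at h4
  -- hence y n = a for infinitely many n, so sec a is a cluster point
  have hinf : {n | y n = a}.Infinite := by
    apply Set.infinite_of_forall_exists_gt
    intro n
    have := haZ (n + 1)
    rw [Set.image_image] at this
    obtain ⟨k, hk, hfk⟩ := this
    have hk' : y k = a := by rw [← hfk]; exact (hsecf (y k)).symm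
    exact ⟨k, hk', lt_of_lt_of_le (Nat.lt_succ_self n) hk⟩
  refine hc (sec a) (aux_clusterPt_of_infinite_eq (c := sec a) ?_)
  refine hinf.mono ?_
  intro n hn
  simp only [Set.mem_setOf_eq] at *
  show sec (y n) = sec a
  rw [hn]

end Aux

/-- For a continuous surjection `f : X → Y` from a μ-complete Hausdorff
space onto a Fréchet–Urysohn Hausdorff space, the following are equivalent:
(1) `f` is subproper; (2) `f` has a section preserving precompact sets;
(3) `f` has a cs*-continuous section; (4) `f` is inductively closed. -/
theorem stmt_3 {X : Type u} {Y : Type v} [TopologicalSpace X] [TopologicalSpace Y]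
    [T2Space X] [T2Space Y] [FrechetUrysohnSpace Y]
    (hX : MuComplete X) (f : X → Y) (hf : Continuous f)
    (hsurj : Function.Surjective f) :
    List.TFAE
      [ -- (1) f is subproper
        ∃ Z : Set X, f '' Z = univ ∧
          ∀ K : Set Y, IsCompact K → IsCompact (closure (Z ∩ f ⁻¹' K)),
        -- (2) f has a section preserving precompact sets
        ∃ s : Y → X, (∀ y, f (s y) = y) ∧
          ∀ K : Set Y, IsCompact K → IsCompact (closure (s '' K)),
        -- (3) f has a cs*-continuous section
        ∃ s : Y → X, (∀ y, f (s y) = y) ∧ CsStarContinuous s,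
        -- (4) f is inductively closed
        ∃ Z : Set X, IsClosed Z ∧ f '' Z = univ ∧
          IsClosedMap (fun z : Z => f z) ] := by
  tfae_have 1 → 2
  | ⟨Z, hZu, hZK⟩ => by
    have hex : ∀ b : Y, ∃ x, x ∈ Z ∧ f x = b := by
      intro b
      have : b ∈ f '' Z := hZu ▸ Set.mem_univ b
      exact this
    choose σ hσZ hσf using hex
    refine ⟨σ, hσf, fun K hK => ?_⟩
    refine (hZK K hK).of_isClosed_subset isClosed_closure (closure_mono ?_)
    rintro _ ⟨yy, hyK, rfl⟩
    exact ⟨hσZ yy, by rw [Set.mem_preimage, hσf]; exact hyK⟩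
  tfae_have 2 → 3
  | ⟨σ, hσf, hσK⟩ => by
    refine ⟨σ, hσf, ?_⟩
    intro y a hya
    exact aux_exists_clusterPt (hσK _ hya.isCompact_insert_range)
      (fun n => ⟨y n, Set.mem_insert_of_mem _ ⟨n, rfl⟩, rfl⟩)
  tfae_have 3 → 2
  | ⟨σ, hσf, hσcs⟩ => ⟨σ, hσf, fun K hK => aux_lemA hX σ hσcs hK⟩
  tfae_have 2 → 1
  | ⟨σ, hσf, hσK⟩ => by
    refine ⟨Set.range σ, Set.eq_univ_of_forall (fun b => ⟨σ b, ⟨b, rfl⟩, hσf b⟩), ?_⟩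
    intro K hK
    have heq : Set.range σ ∩ f ⁻¹' K = σ '' K := by
      apply Set.Subset.antisymm
      · rintro x ⟨⟨yy, rfl⟩, hxK⟩
        rw [Set.mem_preimage, hσf] at hxK
        exact ⟨yy, hxK, rfl⟩
      · rintro _ ⟨yy, hyK, rfl⟩
        exact ⟨⟨yy, rfl⟩, by rw [Set.mem_preimage, hσf]; exact hyK⟩
    rw [heq]
    exact hσK K hK
  tfae_have 3 → 4
  | ⟨σ, hσf, hσcs⟩ => aux_3to4 hX f hf σ hσf hσcs
  tfae_have 4 → 3
  | ⟨Z, hZc, hZu, hZm⟩ => aux_4to3 f Z hZc hZu hZm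
  tfae_finish
end

section
/- A sequentially regular Hausdorff topological space X is k*-metrizable if and only if there exists a metric ρ on the underlying set of X such that: (a) every compact subset K ⊆ X is totally bounded with respect to ρ; (b) every sequence (x_n) with ρ(x_n, x) → 0 converges to x in the topology of X; (c) a ρ-Cauchy sequence converges in X if and only if it has a subsequence converging in X. -/
open Filter Topology Set

universe u v

/-- A Hausdorff space `X` is k*-metrizable if it is the image of a metrizable space `M`
under a continuous surjection admitting a section which preserves precompact sets. -/
def KStarMetrizable (X : Type u) [TopologicalSpace X] : Prop :=
  ∃ (M : Type u) (_ : MetricSpace M) (f : M → X) (s : X → M),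
    Continuous f ∧ Function.Surjective f ∧ (∀ x, f (s x) = x) ∧
    ∀ K : Set X, IsCompact K → IsCompact (closure (s '' K))

/-- A space is sequentially regular if each point has arbitrarily small neighborhoods
whose sequential closures stay inside a given neighborhood. -/
def SeqRegular (X : Type u) [TopologicalSpace X] : Prop :=
  ∀ x : X, ∀ U ∈ 𝓝 x, ∃ V ∈ 𝓝 x, seqClosure V ⊆ U


section Helpers

/-- Interleaving of two sequences. -/
def ilv {α : Type*} (v w : ℕ → α) : ℕ → α := fun n => if Even n then v (n / 2) else w (n / 2)

theorem ilv_even {α : Type*} (v w : ℕ → α) (i : ℕ) : ilv v w (2 * i) = v i := by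
  simp [ilv, even_two_mul i, Nat.mul_div_cancel_left _ (by norm_num : 0 < 2)]

theorem ilv_odd {α : Type*} (v w : ℕ → α) (i : ℕ) : ilv v w (2 * i + 1) = w i := by
  have h1 : ¬ Even (2 * i + 1) := by simp [Nat.even_add_one, Nat.even_mul]
  have h2 : (2 * i + 1) / 2 = i := by omega
  simp [ilv, h1, h2]

theorem strictMono_two_mul : StrictMono (fun i : ℕ => 2 * i) := fun a b h => by dsimp only; omega

theorem strictMono_two_mul_add_one : StrictMono (fun i : ℕ => 2 * i + 1) := fun a b h => by dsimp only; omega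

theorem ilv_tendsto {Z : Type*} [PseudoMetricSpace Z] {v w : ℕ → Z} {z : Z}
    (hv : Tendsto v atTop (𝓝 z)) (hw : Tendsto w atTop (𝓝 z)) :
    Tendsto (ilv v w) atTop (𝓝 z) := by
  rw [Metric.tendsto_atTop] at *
  intro ε hε
  obtain ⟨N₁, hN₁⟩ := hv ε hε
  obtain ⟨N₂, hN₂⟩ := hw ε hε
  refine ⟨2 * N₁ + 2 * N₂, fun n hn => ?_⟩
  by_cases h : Even n
  · simpa [ilv, h] using hN₁ (n / 2) (by omega)
  · simpa [ilv, h] using hN₂ (n / 2) (by omega)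

end Helpers

section SeqCpt

variable {Y : Type v} [TopologicalSpace Y] [CompactSpace Y] [T2Space Y]

/-- In a compact Hausdorff space with a countable network, every sequence has a
convergent subsequence. -/
theorem seqcpt_of_network (N : ℕ → Set Y)
    (hnet : ∀ (y : Y), ∀ U ∈ 𝓝 y, ∃ i, y ∈ N i ∧ N i ⊆ U)
    (u : ℕ → Y) : ∃ a, ∃ φ : ℕ → ℕ, StrictMono φ ∧ Tendsto (u ∘ φ) atTop (𝓝 a) := by
  classical
  obtain ⟨a, -, ha⟩ : ∃ a ∈ (univ : Set Y), MapClusterPt a atTop u :=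
    isCompact_univ.exists_mapClusterPt (by simp)
  set G : ℕ → Set Y := fun m => if a ∈ closure (N m) then univ else (closure (N m))ᶜ with hG
  have hGopen : ∀ m, IsOpen (G m) := by
    intro m; rw [hG]; dsimp only
    split
    · exact isOpen_univ
    · exact isClosed_closure.isOpen_compl
  have hGmem : ∀ m, a ∈ G m := by
    intro m; rw [hG]; dsimp only
    split
    · exact mem_univ a
    · next hmem => exact hmem
  have hsep : ∀ b : Y, b ≠ a → ∃ m, b ∈ N m ∧ a ∉ closure (N m) := by
    intro b hb
    have hU : ({a}ᶜ : Set Y) ∈ 𝓝 b := isOpen_compl_singleton.mem_nhds (by simpa using hb)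
    obtain ⟨V, hV, hVc, hVsub⟩ := exists_mem_nhds_isClosed_subset hU
    obtain ⟨i, hbi, hiV⟩ := hnet b V hV
    refine ⟨i, hbi, fun hcl => ?_⟩
    have : a ∈ V := (hVc.closure_subset_iff.mpr hiV) hcl
    exact hVsub this rfl
  have step : ∀ O : Set Y, IsOpen O → a ∈ O → ∀ m, ∃ O' : Set Y,
      IsOpen O' ∧ a ∈ O' ∧ closure O' ⊆ O ∩ G m := by
    intro O hO haO m
    have hmem : O ∩ G m ∈ 𝓝 a := (hO.inter (hGopen m)).mem_nhds ⟨haO, hGmem m⟩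
    obtain ⟨V, hV, hVc, hVsub⟩ := exists_mem_nhds_isClosed_subset hmem
    exact ⟨interior V, isOpen_interior, mem_interior_iff_mem_nhds.2 hV,
      (closure_minimal interior_subset hVc).trans hVsub⟩
  choose nxt hn1 hn2 hn3 using step
  let W : ℕ → {O : Set Y // IsOpen O ∧ a ∈ O} := fun n =>
    Nat.rec ⟨univ, isOpen_univ, mem_univ a⟩
      (fun m p => ⟨nxt p.1 p.2.1 p.2.2 m, hn1 p.1 p.2.1 p.2.2 m, hn2 p.1 p.2.1 p.2.2 m⟩) n
  have hW3 : ∀ m, closure (W (m + 1)).1 ⊆ (W m).1 ∩ G m := fun m =>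
    hn3 (W m).1 (W m).2.1 (W m).2.2 m
  have hWstep : ∀ m, (W (m + 1)).1 ⊆ (W m).1 := fun m =>
    subset_trans (subset_trans subset_closure (hW3 m)) inter_subset_left
  have hWmono : ∀ m n, m ≤ n → (W n).1 ⊆ (W m).1 := by
    intro m n hmn
    induction hmn with
    | refl => exact subset_rfl
    | step _ ih => exact subset_trans (hWstep _) ih
  have hWsing : (⋂ m, closure (W m).1) ⊆ {a} := by
    intro b hb
    by_contra hba
    obtain ⟨i, hbN, haN⟩ := hsep b (by simpa using hba)
    have hbG : b ∈ G i := (hW3 i (mem_iInter.mp hb (i + 1))).2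
    rw [hG] at hbG; dsimp only at hbG
    rw [if_neg haN] at hbG
    exact hbG (subset_closure hbN)
  have hbase : ∀ U : Set Y, IsOpen U → a ∈ U → ∃ m, (W m).1 ⊆ U := by
    intro U hU haU
    by_contra hc
    push_neg at hc
    have hne : ∀ m, (closure (W m).1 ∩ Uᶜ).Nonempty := by
      intro m
      obtain ⟨x, hx1, hx2⟩ := not_subset.mp (hc m)
      exact ⟨x, subset_closure hx1, hx2⟩
    have hdec : ∀ m, closure (W (m + 1)).1 ∩ Uᶜ ⊆ closure (W m).1 ∩ Uᶜ := by
      intro m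
      exact inter_subset_inter (subset_trans (subset_trans (hW3 m) inter_subset_left)
        subset_closure) subset_rfl
    have hcl : ∀ m, IsClosed (closure (W m).1 ∩ Uᶜ) := fun m =>
      isClosed_closure.inter hU.isClosed_compl
    obtain ⟨x, hx⟩ := IsCompact.nonempty_iInter_of_sequence_nonempty_isCompact_isClosed
      (fun m => closure (W m).1 ∩ Uᶜ) hdec hne ((hcl 0).isCompact) hcl
    have hxa : x ∈ ({a} : Set Y) := hWsing (by
      refine mem_iInter.mpr fun m => ?_
      exact (mem_iInter.mp hx m).1)
    have : x ∈ Uᶜ := (mem_iInter.mp hx 0).2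
    rw [mem_singleton_iff] at hxa
    exact this (hxa ▸ haU)
  have hfreq : ∀ m, ∃ᶠ k in atTop, u k ∈ (W m).1 := fun m =>
    (mapClusterPt_iff_frequently.mp ha) _ ((W m).2.1.mem_nhds (W m).2.2)
  obtain ⟨φ, hφ, hφW⟩ := Filter.extraction_forall_of_frequently hfreq
  refine ⟨a, φ, hφ, ?_⟩
  intro s hs
  rw [Filter.mem_map]
  obtain ⟨U, hUsub, hUo, haU⟩ := mem_nhds_iff.mp hs
  obtain ⟨m, hm⟩ := hbase U hUo haU
  have : ∀ j, m ≤ j → (u ∘ φ) j ∈ s := fun j hj =>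
    hUsub (hm (hWmono m j hj (hφW j)))
  exact mem_of_superset (Filter.mem_atTop m) this

end SeqCpt

section Aux

variable {X : Type u} [TopologicalSpace X] {M₀ : Type u} [MetricSpace M₀]

/-- Crux: a compact subset of `X` whose "copy" is totally bounded is sequentially compact. -/
theorem crux [T2Space X] (g : M₀ → X) (h : X → M₀)
    (hgh : ∀ x, g (h x) = x) (hg : Continuous g)
    {K : Set X} (hK : IsCompact K) (hTB : TotallyBounded (h '' K))
    (u : ℕ → X) (hu : ∀ n, u n ∈ K) :
    ∃ a, ∃ φ : ℕ → ℕ, StrictMono φ ∧ Tendsto (u ∘ φ) atTop (𝓝 a) := by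
  classical
  haveI : CompactSpace K := isCompact_iff_compactSpace.mp hK
  -- totally bounded covers at scale 1/(n+1)
  have hTB' := Metric.totallyBounded_iff.mp hTB
  have hcov : ∀ n : ℕ, ∃ t : Set M₀, t.Finite ∧
      h '' K ⊆ ⋃ y ∈ t, Metric.ball y (1 / (n + 1 : ℝ)) := by
    intro n
    exact hTB' _ (by positivity)
  choose T hTfin hTsub using hcov
  set S : Set (ℕ × M₀) := {p | p.2 ∈ T p.1} with hS
  have hScount : S.Countable := by
    have : S = ⋃ n : ℕ, ({n} : Set ℕ) ×ˢ T n := by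
      ext ⟨n, y⟩
      simp [hS]
    rw [this]
    exact countable_iUnion fun n => (countable_singleton n).prod (hTfin n).countable
  have hSne : S.Nonempty := by
    have hmem : h (u 0) ∈ h '' K := mem_image_of_mem h (hu 0)
    have := hTsub 0 hmem
    obtain ⟨y, hyT, -⟩ := mem_iUnion₂.mp this
    exact ⟨(0, y), hyT⟩
  obtain ⟨e, he⟩ := hScount.exists_eq_range hSne
  set N : ℕ → Set K := fun i =>
    {w : K | dist (h (w : X)) (e i).2 < 1 / (((e i).1 : ℝ) + 1)} with hN
  have hnet : ∀ z : K, ∀ Uy ∈ 𝓝 z, ∃ i, z ∈ N i ∧ N i ⊆ Uy := by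
    intro z Uy hUy
    obtain ⟨U, hU, hUsub⟩ := (mem_nhds_subtype K z Uy).mp hUy
    have hU' : U ∈ 𝓝 (g (h (z : X))) := by rw [hgh]; exact hU
    have hpre : g ⁻¹' U ∈ 𝓝 (h (z : X)) := hg.continuousAt.preimage_mem_nhds hU'
    obtain ⟨r, hr, hball⟩ := Metric.mem_nhds_iff.mp hpre
    obtain ⟨n, hn⟩ := exists_nat_one_div_lt (half_pos hr)
    have hmem : h (z : X) ∈ h '' K := mem_image_of_mem h z.2
    obtain ⟨y, hyT, hyb⟩ := mem_iUnion₂.mp (hTsub n hmem)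
    have hyS : (n, y) ∈ S := hyT
    rw [he] at hyS
    obtain ⟨i, hi⟩ := hyS
    refine ⟨i, ?_, ?_⟩
    · show dist (h (z : X)) (e i).2 < 1 / (((e i).1 : ℝ) + 1)
      rw [hi]
      simpa using hyb
    · intro w hw
      have hw' : dist (h (w : X)) y < 1 / ((n : ℝ) + 1) := by
        have := hw
        rw [hN] at this
        simpa [hi] using this
      have hdz : dist (h (w : X)) (h (z : X)) < r := by
        have h1 : dist (h (w : X)) (h (z : X)) ≤
            dist (h (w : X)) y + dist (h (z : X)) y := dist_triangle_right _ _ _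
        have h2 : dist (h (z : X)) y < 1 / ((n : ℝ) + 1) := by simpa using hyb
        have : dist (h (w : X)) (h (z : X)) < 2 * (1 / ((n : ℝ) + 1)) := by
          linarith
        calc dist (h (w : X)) (h (z : X)) < 2 * (1 / ((n : ℝ) + 1)) := this
          _ < 2 * (r / 2) := by
              have := hn
              nlinarith
          _ = r := by ring
      have : h (w : X) ∈ g ⁻¹' U := hball hdz
      have : g (h (w : X)) ∈ U := this
      rw [hgh] at this
      exact hUsub this
  obtain ⟨ay, φ, hφ, hconv⟩ := seqcpt_of_network N hnet (fun n => (⟨u n, hu n⟩ : K))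
  refine ⟨(ay : X), φ, hφ, ?_⟩
  have := (continuous_subtype_val.tendsto ay).comp hconv
  convert this using 1
  rfl

/-- The points of the completion which are "realized" by a convergent sequence in `X`. -/
def ConvPt (g : M₀ → X) (ξ : UniformSpace.Completion M₀) : Prop :=
  ∃ vv : ℕ → M₀, Tendsto (fun n => ((vv n : UniformSpace.Completion M₀))) atTop (𝓝 ξ) ∧
    ∃ a : X, Tendsto (fun n => g (vv n)) atTop (𝓝 a)

abbrev MM (g : M₀ → X) : Type u := {ξ : UniformSpace.Completion M₀ // ConvPt g ξ}

theorem cauchySeq_of_coe {vv : ℕ → M₀}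
    (hc : CauchySeq (fun n => (vv n : UniformSpace.Completion M₀))) : CauchySeq vv := by
  rw [Metric.cauchySeq_iff] at *
  intro ε hε
  obtain ⟨N, hN⟩ := hc ε hε
  refine ⟨N, fun m hm n hn => ?_⟩
  have := hN m hm n hn
  rwa [UniformSpace.Completion.dist_eq] at this

/-- Uniqueness of limits of sequences realizing the same completion point. -/
theorem conv_unique [T2Space X] (g : M₀ → X)
    (Hc : ∀ vv : ℕ → M₀, CauchySeq vv →
      ((∃ a, Tendsto (fun n => g (vv n)) atTop (𝓝 a)) ↔
        ∃ φ : ℕ → ℕ, StrictMono φ ∧ ∃ a, Tendsto (fun n => g (vv (φ n))) atTop (𝓝 a)))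
    {v w : ℕ → M₀} {ξ : UniformSpace.Completion M₀}
    (hv : Tendsto (fun n => ((v n : UniformSpace.Completion M₀))) atTop (𝓝 ξ))
    (hw : Tendsto (fun n => ((w n : UniformSpace.Completion M₀))) atTop (𝓝 ξ))
    {A B : X}
    (hA : Tendsto (fun n => g (v n)) atTop (𝓝 A))
    (hB : Tendsto (fun n => g (w n)) atTop (𝓝 B)) : A = B := by
  set z : ℕ → M₀ := ilv v w with hz
  have hcoe : (fun n => ((z n : UniformSpace.Completion M₀))) = ilv
      (fun n => ((v n : UniformSpace.Completion M₀)))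
      (fun n => ((w n : UniformSpace.Completion M₀))) := by
    funext n
    by_cases h : Even n <;> simp [hz, ilv, h]
  have hzt : Tendsto (fun n => ((z n : UniformSpace.Completion M₀))) atTop (𝓝 ξ) := by
    rw [hcoe]; exact ilv_tendsto hv hw
  have hzc : CauchySeq z := cauchySeq_of_coe hzt.cauchySeq
  have hze : ∀ i, z (2 * i) = v i := fun i => ilv_even v w i
  have hzo : ∀ i, z (2 * i + 1) = w i := fun i => ilv_odd v w i
  have hrhs : ∃ φ : ℕ → ℕ, StrictMono φ ∧ ∃ a, Tendsto (fun n => g (z (φ n))) atTop (𝓝 a) := by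
    refine ⟨fun i => 2 * i, strictMono_two_mul, A, ?_⟩
    have heq : (fun n => g (z (2 * n))) = fun n => g (v n) := by
      funext n; rw [hze n]
    exact heq ▸ hA
  obtain ⟨c, hc⟩ := (Hc z hzc).mpr hrhs
  have hcv : Tendsto (fun n => g (v n)) atTop (𝓝 c) := by
    have h2 := hc.comp strictMono_two_mul.tendsto_atTop
    have heq : ((fun n => g (z n)) ∘ fun i => 2 * i) = fun n => g (v n) := by
      funext n; simp [Function.comp, hze n]
    rwa [heq] at h2
  have hcw : Tendsto (fun n => g (w n)) atTop (𝓝 c) := by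
    have h2 := hc.comp strictMono_two_mul_add_one.tendsto_atTop
    have heq : ((fun n => g (z n)) ∘ fun i => 2 * i + 1) = fun n => g (w n) := by
      funext n; simp [Function.comp, hzo n]
    rwa [heq] at h2
  exact (tendsto_nhds_unique hA hcv).trans (tendsto_nhds_unique hcw hB)

noncomputable def ffun (g : M₀ → X) (m : MM g) : X := m.2.choose_spec.2.choose

theorem ffun_spec (g : M₀ → X) (m : MM g) :
    Tendsto (fun n => ((m.2.choose n : UniformSpace.Completion M₀))) atTop (𝓝 m.1) ∧
      Tendsto (fun n => g (m.2.choose n)) atTop (𝓝 (ffun g m)) :=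
  ⟨m.2.choose_spec.1, m.2.choose_spec.2.choose_spec⟩

theorem ffun_eq [T2Space X] (g : M₀ → X)
    (Hc : ∀ vv : ℕ → M₀, CauchySeq vv →
      ((∃ a, Tendsto (fun n => g (vv n)) atTop (𝓝 a)) ↔
        ∃ φ : ℕ → ℕ, StrictMono φ ∧ ∃ a, Tendsto (fun n => g (vv (φ n))) atTop (𝓝 a)))
    (m : MM g) {v : ℕ → M₀} {a : X}
    (hv : Tendsto (fun n => ((v n : UniformSpace.Completion M₀))) atTop (𝓝 m.1))
    (ha : Tendsto (fun n => g (v n)) atTop (𝓝 a)) : ffun g m = a :=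
  conv_unique g Hc (ffun_spec g m).1 hv (ffun_spec g m).2 ha

def sfun (g : M₀ → X) (h : X → M₀) (x : X) : MM g :=
  ⟨((h x : M₀) : UniformSpace.Completion M₀),
    ⟨fun _ => h x, tendsto_const_nhds, g (h x), tendsto_const_nhds⟩⟩

theorem ffun_sfun [T2Space X] (g : M₀ → X) (h : X → M₀)
    (Hc : ∀ vv : ℕ → M₀, CauchySeq vv →
      ((∃ a, Tendsto (fun n => g (vv n)) atTop (𝓝 a)) ↔
        ∃ φ : ℕ → ℕ, StrictMono φ ∧ ∃ a, Tendsto (fun n => g (vv (φ n))) atTop (𝓝 a)))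
    (hgh : ∀ x, g (h x) = x) (x : X) : ffun g (sfun g h x) = x := by
  have := ffun_eq g Hc (sfun g h x) (v := fun _ => h x) (a := x)
    tendsto_const_nhds (by simpa [hgh x] using (tendsto_const_nhds : Tendsto (fun _ : ℕ => x) atTop (𝓝 x)))
  exact this

theorem ffun_cont [T2Space X] (g : M₀ → X) (hreg : SeqRegular X)
    (Hc : ∀ vv : ℕ → M₀, CauchySeq vv →
      ((∃ a, Tendsto (fun n => g (vv n)) atTop (𝓝 a)) ↔
        ∃ φ : ℕ → ℕ, StrictMono φ ∧ ∃ a, Tendsto (fun n => g (vv (φ n))) atTop (𝓝 a))) :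
    Continuous (ffun g) := by
  have hseq : SeqContinuous (ffun g) := by
    intro ξk ξ hx
    rw [Filter.tendsto_def]
    intro s hs
    obtain ⟨V, hV, hVsub⟩ := hreg (ffun g ξ) s hs
    by_cases hP : ∀ᶠ k in atTop, ∃ᶠ n in atTop, g ((ξk k).2.choose n) ∈ V
    · have : ∀ᶠ k in atTop, (ffun g ∘ ξk) k ∈ s := by
        filter_upwards [hP] with k hk
        obtain ⟨ψ, hψ, hψV⟩ := Filter.extraction_of_frequently_atTop hk
        have ht : Tendsto (fun n => g ((ξk k).2.choose (ψ n))) atTop (𝓝 (ffun g (ξk k))) :=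
          (ffun_spec g (ξk k)).2.comp hψ.tendsto_atTop
        exact hVsub ⟨_, hψV, ht⟩
      exact this
    · exfalso
      rw [Filter.not_eventually] at hP
      have hdist : Tendsto (fun k => dist (ξk k).1 ξ.1) atTop (𝓝 0) := by
        have hval : Tendsto (fun k => (ξk k).1) atTop (𝓝 ξ.1) :=
          (continuous_subtype_val.tendsto ξ).comp hx
        exact tendsto_iff_dist_tendsto_zero.mp hval
      have hfr : ∀ j : ℕ, ∃ᶠ k in atTop,
          ((∀ᶠ n in atTop, g ((ξk k).2.choose n) ∉ V) ∧
            dist (ξk k).1 ξ.1 < 1 / ((j : ℝ) + 1)) := by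
        intro j
        refine Filter.Frequently.and_eventually ?_ ?_
        · exact hP.mono fun k hk => by rwa [Filter.not_frequently] at hk
        · exact hdist.eventually_lt_const (by positivity)
      obtain ⟨κ, hκmono, hκ⟩ := Filter.extraction_forall_of_frequently hfr
      have hpick : ∀ j : ℕ, ∃ n, g ((ξk (κ j)).2.choose n) ∉ V ∧
          dist (((ξk (κ j)).2.choose n : UniformSpace.Completion M₀)) (ξk (κ j)).1
            < 1 / ((j : ℝ) + 1) := by
        intro j
        have h1 := (hκ j).1
        have h2 : ∀ᶠ n in atTop,
            dist (((ξk (κ j)).2.choose n : UniformSpace.Completion M₀)) (ξk (κ j)).1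
              < 1 / ((j : ℝ) + 1) := by
          have ht := (ffun_spec g (ξk (κ j))).1
          exact (tendsto_iff_dist_tendsto_zero.mp ht).eventually_lt_const (by positivity)
        exact (h1.and h2).exists
      choose nj hnj1 hnj2 using hpick
      set y : ℕ → M₀ := fun j => (ξk (κ j)).2.choose (nj j) with hy
      have hycoe : Tendsto (fun j => ((y j : UniformSpace.Completion M₀))) atTop (𝓝 ξ.1) := by
        rw [tendsto_iff_dist_tendsto_zero]
        refine squeeze_zero (fun j => dist_nonneg)
          (g := fun j : ℕ => 1 / ((j : ℝ) + 1) + dist (ξk (κ j)).1 ξ.1) (fun j => ?_) ?_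
        · calc dist ((y j : UniformSpace.Completion M₀)) ξ.1
              ≤ dist ((y j : UniformSpace.Completion M₀)) (ξk (κ j)).1
                  + dist (ξk (κ j)).1 ξ.1 := dist_triangle _ _ _
            _ ≤ 1 / ((j : ℝ) + 1) + dist (ξk (κ j)).1 ξ.1 := by
                have := hnj2 j
                linarith
        · have l1 : Tendsto (fun j : ℕ => 1 / ((j : ℝ) + 1)) atTop (𝓝 0) :=
            tendsto_one_div_add_atTop_nhds_zero_nat
          have l2 : Tendsto (fun j => dist (ξk (κ j)).1 ξ.1) atTop (𝓝 0) :=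
            hdist.comp hκmono.tendsto_atTop
          simpa using l1.add l2
      set v : ℕ → M₀ := ξ.2.choose with hv
      have hv1 : Tendsto (fun n => ((v n : UniformSpace.Completion M₀))) atTop (𝓝 ξ.1) :=
        (ffun_spec g ξ).1
      have hv2 : Tendsto (fun n => g (v n)) atTop (𝓝 (ffun g ξ)) := (ffun_spec g ξ).2
      set z : ℕ → M₀ := ilv v y with hz
      have hcoe : (fun n => ((z n : UniformSpace.Completion M₀))) = ilv
          (fun n => ((v n : UniformSpace.Completion M₀)))
          (fun n => ((y n : UniformSpace.Completion M₀))) := by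
        funext n
        by_cases hpar : Even n <;> simp [hz, ilv, hpar]
      have hzcoe : Tendsto (fun n => ((z n : UniformSpace.Completion M₀))) atTop (𝓝 ξ.1) := by
        rw [hcoe]; exact ilv_tendsto hv1 hycoe
      have hzc : CauchySeq z := cauchySeq_of_coe hzcoe.cauchySeq
      have hze : ∀ i, z (2 * i) = v i := fun i => ilv_even v y i
      have hzo : ∀ i, z (2 * i + 1) = y i := fun i => ilv_odd v y i
      have hrhs : ∃ φ : ℕ → ℕ, StrictMono φ ∧
          ∃ c, Tendsto (fun n => g (z (φ n))) atTop (𝓝 c) := by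
        refine ⟨fun i => 2 * i, strictMono_two_mul, ffun g ξ, ?_⟩
        have heq : (fun n => g (z (2 * n))) = fun n => g (v n) := by
          funext n; rw [hze n]
        exact heq ▸ hv2
      obtain ⟨c, hc⟩ := (Hc z hzc).mpr hrhs
      have hcv : Tendsto (fun n => g (v n)) atTop (𝓝 c) := by
        have h2 := hc.comp strictMono_two_mul.tendsto_atTop
        have heq : ((fun n => g (z n)) ∘ fun i => 2 * i) = fun n => g (v n) := by
          funext n; simp [Function.comp, hze n]
        rwa [heq] at h2
      have hca : c = ffun g ξ := tendsto_nhds_unique hcv hv2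
      have hcy : Tendsto (fun j => g (y j)) atTop (𝓝 (ffun g ξ)) := by
        have h2 := hc.comp strictMono_two_mul_add_one.tendsto_atTop
        have heq : ((fun n => g (z n)) ∘ fun i => 2 * i + 1) = fun j => g (y j) := by
          funext n; simp [Function.comp, hzo n]
        rw [heq] at h2
        rwa [hca] at h2
      have hev : ∀ᶠ j in atTop, g (y j) ∈ V := by
        have := hcy hV
        rwa [Filter.mem_map] at this
      obtain ⟨j, hj⟩ := hev.exists
      exact hnj1 j hj
  exact hseq.continuous

theorem img_cpt [T2Space X] (g : M₀ → X) (h : X → M₀)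
    (hgh : ∀ x, g (h x) = x) (hg : Continuous g)
    (Hc : ∀ vv : ℕ → M₀, CauchySeq vv →
      ((∃ a, Tendsto (fun n => g (vv n)) atTop (𝓝 a)) ↔
        ∃ φ : ℕ → ℕ, StrictMono φ ∧ ∃ a, Tendsto (fun n => g (vv (φ n))) atTop (𝓝 a)))
    {K : Set X} (hK : IsCompact K) (hTB : TotallyBounded (h '' K)) :
    IsCompact (closure (sfun g h '' K)) := by
  classical
  set C : Set (UniformSpace.Completion M₀) :=
    closure ((fun x : X => ((h x : UniformSpace.Completion M₀))) '' K) with hC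
  have hTBc : TotallyBounded ((fun x : X => ((h x : UniformSpace.Completion M₀))) '' K) := by
    have h1 : TotallyBounded ((fun m : M₀ => (m : UniformSpace.Completion M₀)) '' (h '' K)) :=
      hTB.image (UniformSpace.Completion.uniformContinuous_coe M₀)
    rwa [image_image] at h1
  have hCcpt : IsCompact C := TotallyBounded.isCompact_of_isClosed hTBc.closure isClosed_closure
  have hCconv : ∀ ξ ∈ C, ConvPt g ξ := by
    intro ξ hξ
    obtain ⟨c, hcmem, hctend⟩ := mem_closure_iff_seq_limit.mp hξ
    choose aa haaK haac using hcmem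
    obtain ⟨b, φ, hφ, hb⟩ := crux g h hgh hg hK hTB aa haaK
    refine ⟨fun j => h (aa (φ j)), ?_, b, ?_⟩
    · have heq : (fun j => ((h (aa (φ j)) : UniformSpace.Completion M₀))) = c ∘ φ := by
        funext j; exact haac (φ j)
      rw [heq]; exact hctend.comp hφ.tendsto_atTop
    · have heq : (fun j => g (h (aa (φ j)))) = aa ∘ φ := by
        funext j; rw [hgh]; rfl
      rw [heq]; exact hb
  have hval : Subtype.val '' (closure (sfun g h '' K)) = C := by
    apply Subset.antisymm
    · have h1 := image_closure_subset_closure_image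
        (s := sfun g h '' K) (f := (Subtype.val : MM g → UniformSpace.Completion M₀))
        continuous_subtype_val
      have h2 : (Subtype.val : MM g → UniformSpace.Completion M₀) '' (sfun g h '' K) =
          (fun x : X => ((h x : UniformSpace.Completion M₀))) '' K := by
        rw [image_image]; rfl
      rw [h2] at h1
      exact h1
    · intro ξ hξ
      refine ⟨⟨ξ, hCconv ξ hξ⟩, ?_, rfl⟩
      obtain ⟨c, hcmem, hctend⟩ := mem_closure_iff_seq_limit.mp hξ
      choose aa haaK haac using hcmem
      have htend : Tendsto (fun n => sfun g h (aa n)) atTop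
          (𝓝 (⟨ξ, hCconv ξ hξ⟩ : MM g)) := by
        rw [tendsto_subtype_rng]
        have heq : (fun n => ((h (aa n) : UniformSpace.Completion M₀))) = c := by
          funext n; exact haac n
        show Tendsto (fun n => ((h (aa n) : UniformSpace.Completion M₀))) atTop (𝓝 ξ)
        rw [heq]; exact hctend
      exact mem_closure_of_tendsto htend
        (Filter.Eventually.of_forall fun n => mem_image_of_mem _ (haaK n))
  rw [(Topology.IsEmbedding.subtypeVal (p := ConvPt g)).isCompact_iff, hval]
  exact hCcpt

end Aux

section Cop

/-- Type synonym carrying the metric `ρ`. -/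
def Cop (X : Type u) : Type u := X

noncomputable def copMS {X : Type u} (ρ : X → X → ℝ)
    (h1 : ∀ x, ρ x x = 0)
    (h2 : ∀ x y, ρ x y = 0 → x = y)
    (h3 : ∀ x y, ρ x y = ρ y x)
    (h4 : ∀ x y z, ρ x z ≤ ρ x y + ρ y z) : MetricSpace (Cop X) where
  dist := ρ
  dist_self := h1
  dist_comm := h3
  dist_triangle := h4
  eq_of_dist_eq_zero := fun {x y} hxy => h2 x y hxy
  edist_dist := fun x y => rfl

end Cop

theorem forward_dir {X : Type u} [TopologicalSpace X] [T2Space X]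
    (hks : KStarMetrizable X) :
    ∃ ρ : X → X → ℝ,
      (∀ x, ρ x x = 0) ∧
      (∀ x y, ρ x y = 0 → x = y) ∧
      (∀ x y, ρ x y = ρ y x) ∧
      (∀ x y z, ρ x z ≤ ρ x y + ρ y z) ∧
      (∀ K : Set X, IsCompact K → ∀ ε : ℝ, 0 < ε →
        ∃ F : Set X, F.Finite ∧ K ⊆ ⋃ y ∈ F, {x | ρ y x < ε}) ∧
      (∀ (x : ℕ → X) (a : X),
        Tendsto (fun n => ρ (x n) a) atTop (𝓝 0) → Tendsto x atTop (𝓝 a)) ∧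
      (∀ x : ℕ → X,
        (∀ ε : ℝ, 0 < ε → ∃ N, ∀ m ≥ N, ∀ n ≥ N, ρ (x m) (x n) < ε) →
        ((∃ a, Tendsto x atTop (𝓝 a)) ↔
          ∃ φ : ℕ → ℕ, StrictMono φ ∧ ∃ a, Tendsto (x ∘ φ) atTop (𝓝 a))) := by
  classical
  obtain ⟨M, instM, f, sm, hf, hfsurj, hfs, hKcpt⟩ := hks
  refine ⟨fun x y => dist (sm x) (sm y), fun x => dist_self _, ?_,
    fun x y => dist_comm _ _, fun x y z => dist_triangle _ _ _, ?_, ?_, ?_⟩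
  · intro x y hxy
    have hsy : sm x = sm y := eq_of_dist_eq_zero hxy
    calc x = f (sm x) := (hfs x).symm
      _ = f (sm y) := by rw [hsy]
      _ = y := hfs y
  · intro K hK ε hε
    have hcl : IsCompact (closure (sm '' K)) := hKcpt K hK
    have hTB : TotallyBounded (sm '' K) := hcl.totallyBounded.subset subset_closure
    rw [totallyBounded_iff_subset] at hTB
    obtain ⟨t, htsub, htfin, htcov⟩ := hTB _ (Metric.dist_mem_uniformity hε)
    rcases K.eq_empty_or_nonempty with hKe | ⟨x₀, hx₀⟩
    · exact ⟨∅, finite_empty, by simp [hKe]⟩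
    have hpre : ∀ m : M, ∃ x, m ∈ t → (x ∈ K ∧ sm x = m) := by
      intro m
      by_cases hm : m ∈ t
      · obtain ⟨x, hxK, hxm⟩ := htsub hm
        exact ⟨x, fun _ => ⟨hxK, hxm⟩⟩
      · exact ⟨x₀, fun hmem => absurd hmem hm⟩
    choose xf hxf using hpre
    have hfin : (xf '' t).Finite := htfin.image xf
    refine ⟨xf '' t, hfin, ?_⟩
    intro x hx
    obtain ⟨y, hyt, hxy⟩ := mem_iUnion₂.mp (htcov (mem_image_of_mem sm hx))
    have hxy' : dist (sm x) y < ε := hxy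
    refine mem_iUnion₂.mpr ⟨xf y, mem_image_of_mem xf hyt, ?_⟩
    show dist (sm (xf y)) (sm x) < ε
    rw [(hxf y hyt).2, dist_comm]
    exact hxy'
  · intro x a hx
    have hsx : Tendsto (fun n => sm (x n)) atTop (𝓝 (sm a)) :=
      tendsto_iff_dist_tendsto_zero.mpr hx
    have h2 := (hf.tendsto (sm a)).comp hsx
    have heq : (f ∘ fun n => sm (x n)) = fun n => f (sm (x n)) := rfl
    have h3 : Tendsto (fun n => f (sm (x n))) atTop (𝓝 (f (sm a))) := h2
    have h4 : (fun n => f (sm (x n))) = x := by funext n; exact hfs (x n)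
    rw [h4, hfs a] at h3
    exact h3
  · intro x hc
    constructor
    · rintro ⟨a, ha⟩
      exact ⟨id, strictMono_id, a, ha⟩
    · rintro ⟨φ, hφ, a, ha⟩
      have hcs : CauchySeq (fun n => sm (x n)) := Metric.cauchySeq_iff.mpr hc
      have hCc : IsCompact (insert a (range (x ∘ φ))) := ha.isCompact_insert_range
      have hcl := hKcpt _ hCc
      have hmem : ∀ j, (fun j => sm (x (φ j))) j ∈ closure (sm '' insert a (range (x ∘ φ))) :=
        fun j => subset_closure (mem_image_of_mem sm (Or.inr ⟨j, rfl⟩))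
      obtain ⟨b, -, ψ, hψ, hbt⟩ := hcl.isSeqCompact hmem
      have hcomp : ((fun j => sm (x (φ j))) ∘ ψ) = (fun n => sm (x n)) ∘ (φ ∘ ψ) := rfl
      have hwhole : Tendsto (fun n => sm (x n)) atTop (𝓝 b) :=
        tendsto_nhds_of_cauchySeq_of_subseq hcs (hφ.comp hψ).tendsto_atTop (hcomp ▸ hbt)
      have h2 := (hf.tendsto b).comp hwhole
      have h4 : (fun n => f (sm (x n))) = x := by funext n; exact hfs (x n)
      refine ⟨f b, ?_⟩
      have h3 : Tendsto (fun n => f (sm (x n))) atTop (𝓝 (f b)) := h2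
      rwa [h4] at h3

/-- A sequentially regular Hausdorff space `X` is k*-metrizable iff there is
a metric `ρ` on `X` such that (a) compact sets are `ρ`-totally bounded; (b) `ρ`-convergent
sequences converge in `X`; (c) a `ρ`-Cauchy sequence converges in `X` iff it has a
subsequence convergent in `X`. -/
theorem stmt_4 {X : Type u} [TopologicalSpace X] [T2Space X] (hreg : SeqRegular X) :
    KStarMetrizable X ↔
      ∃ ρ : X → X → ℝ,
        (∀ x, ρ x x = 0) ∧
        (∀ x y, ρ x y = 0 → x = y) ∧
        (∀ x y, ρ x y = ρ y x) ∧
        (∀ x y z, ρ x z ≤ ρ x y + ρ y z) ∧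
        -- (a) each compact set is totally bounded for ρ
        (∀ K : Set X, IsCompact K → ∀ ε : ℝ, 0 < ε →
          ∃ F : Set X, F.Finite ∧ K ⊆ ⋃ y ∈ F, {x | ρ y x < ε}) ∧
        -- (b) each ρ-convergent sequence converges in X
        (∀ (x : ℕ → X) (a : X),
          Tendsto (fun n => ρ (x n) a) atTop (𝓝 0) → Tendsto x atTop (𝓝 a)) ∧
        -- (c) a ρ-Cauchy sequence converges in X iff it has a convergent subsequence
        (∀ x : ℕ → X,
          (∀ ε : ℝ, 0 < ε → ∃ N, ∀ m ≥ N, ∀ n ≥ N, ρ (x m) (x n) < ε) →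
          ((∃ a, Tendsto x atTop (𝓝 a)) ↔
            ∃ φ : ℕ → ℕ, StrictMono φ ∧ ∃ a, Tendsto (x ∘ φ) atTop (𝓝 a))) := by
  constructor
  · exact forward_dir
  · rintro ⟨ρ, h1, h2, h3, h4, h5, h6, h7⟩
    letI : MetricSpace (Cop X) := copMS ρ h1 h2 h3 h4
    set g : Cop X → X := fun m => m with hgdef
    set h : X → Cop X := fun x => x with hhdef
    have hgh : ∀ x, g (h x) = x := fun _ => rfl
    have hgc : Continuous g := by
      have hsc : SeqContinuous g := by
        intro u p hup
        have hd : Tendsto (fun n => dist (u n) p) atTop (𝓝 0) :=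
          tendsto_iff_dist_tendsto_zero.mp hup
        have hρ : Tendsto (fun n => ρ (g (u n)) (g p)) atTop (𝓝 0) := hd
        exact h6 (fun n => g (u n)) (g p) hρ
      exact hsc.continuous
    have Hc : ∀ vv : ℕ → Cop X, CauchySeq vv →
        ((∃ a, Tendsto (fun n => g (vv n)) atTop (𝓝 a)) ↔
          ∃ φ : ℕ → ℕ, StrictMono φ ∧ ∃ a, Tendsto (fun n => g (vv (φ n))) atTop (𝓝 a)) := by
      intro vv hvv
      have hcs := Metric.cauchySeq_iff.mp hvv
      have h7' := h7 (fun n => g (vv n)) (by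
        intro ε hε
        obtain ⟨N, hN⟩ := hcs ε hε
        exact ⟨N, fun m hm n hn => hN m hm n hn⟩)
      exact h7'
    have Ha : ∀ K : Set X, IsCompact K → TotallyBounded (h '' K) := by
      intro K hK
      rw [Metric.totallyBounded_iff]
      intro ε hε
      obtain ⟨F, hFfin, hFsub⟩ := h5 K hK ε hε
      refine ⟨h '' F, hFfin.image h, ?_⟩
      rintro z ⟨x, hxK, rfl⟩
      obtain ⟨y, hyF, hxy⟩ := mem_iUnion₂.mp (hFsub hxK)
      refine mem_iUnion₂.mpr ⟨h y, mem_image_of_mem h hyF, ?_⟩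
      show dist (h x) (h y) < ε
      have hρxy : ρ x y < ε := by rw [h3]; exact hxy
      exact hρxy
    exact ⟨MM g, inferInstance, ffun g, sfun g h,
      ffun_cont g hreg Hc,
      fun x => ⟨sfun g h x, ffun_sfun g h Hc hgh x⟩,
      fun x => ffun_sfun g h Hc hgh x,
      fun K hK => img_cpt g h hgh hgc Hc hK (Ha K hK)⟩
end

section
/- Let f : X → Y be a continuous closed surjection from a Hausdorff space X onto a Hausdorff space Y. If X is a k*-metrizable k-space, then Y is k*-metrizable. -/
open Filter Topology Set

universe u v

/-- A space `X` is a k-space if every set whose trace on each compact subset is closed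
(in the subspace topology of that compact) is closed. -/
def IsKSpace (X : Type u) [TopologicalSpace X] : Prop :=
  ∀ F : Set X,
    (∀ K : Set X, IsCompact K → IsClosed {k : K | (k : X) ∈ F}) → IsClosed F

/-- The key compactness lemma: if `s : X → M` sends compact sets to precompact sets,
`f : X → Y` is a closed map with section `t`, and `X` is a Hausdorff k-space, then
`s ∘ t` sends compact sets of `Y` to precompact sets of `M`. -/
private lemma key_compact {X : Type*} {Y : Type*} {M : Type*}
    [TopologicalSpace X] [TopologicalSpace Y] [T2Space X] [MetricSpace M]
    (hk : IsKSpace X)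
    (s : X → M)
    (hprec : ∀ K : Set X, IsCompact K → IsCompact (closure (s '' K)))
    (f : X → Y) (hclosed : IsClosedMap f)
    (t : Y → X) (ht : ∀ y, f (t y) = y)
    (K : Set Y) (hK : IsCompact K) :
    IsCompact (closure ((fun y => s (t y)) '' K)) := by
  set A : Set M := (fun y => s (t y)) '' K with hA
  -- every sequence in `A` has a convergent subsequence
  have seqkey : ∀ v : ℕ → M, (∀ n, v n ∈ A) →
      ∃ a, ∃ φ : ℕ → ℕ, StrictMono φ ∧ Tendsto (v ∘ φ) atTop (𝓝 a) := by
    intro v hv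
    choose y hyK hyv using hv
    by_contra hno
    push_neg at hno
    -- only finitely many of the `t (y n)` lie in any compact subset of `X`
    have hfin : ∀ C : Set X, IsCompact C → {n | t (y n) ∈ C}.Finite := by
      intro C hC
      by_contra hinf
      have hinf : {n | t (y n) ∈ C}.Infinite := hinf
      have hmem : ∀ k, (v ∘ Nat.nth (fun n => t (y n) ∈ C)) k ∈ closure (s '' C) := by
        intro k
        have h1 : t (y (Nat.nth (fun n => t (y n) ∈ C) k)) ∈ C :=
          Nat.nth_mem_of_infinite hinf k
        exact subset_closure ⟨t (y _), h1, hyv _⟩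
      obtain ⟨a, -, ψ, hψ, hten⟩ := (hprec C hC).tendsto_subseq hmem
      exact hno a (Nat.nth (fun n => t (y n) ∈ C) ∘ ψ)
        ((Nat.nth_strictMono hinf).comp hψ) hten
    -- each value is attained only finitely often
    have hfib : ∀ c : Y, {n | y n = c}.Finite := by
      intro c
      by_contra hinf
      have hinf : {n | y n = c}.Infinite := hinf
      refine hno (s (t c)) (Nat.nth (fun n => y n = c)) (Nat.nth_strictMono hinf) ?_
      have hconst : ∀ k, (v ∘ Nat.nth (fun n => y n = c)) k = s (t c) := by
        intro k
        have : y (Nat.nth (fun n => y n = c) k) = c := Nat.nth_mem_of_infinite hinf k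
        rw [Function.comp_apply, ← hyv, this]
      exact tendsto_const_nhds.congr fun k => (hconst k).symm
    -- every image `y '' N` is closed, via the k-space property and closedness of `f`
    have hNclosed : ∀ N : Set ℕ, IsClosed (y '' N) := by
      intro N
      have h1 : IsClosed ((fun n => t (y n)) '' N) := by
        apply hk
        intro C hC
        have hTC : ((fun n => t (y n)) '' N ∩ C).Finite := by
          refine ((hfin C hC).image fun n => t (y n)).subset ?_
          rintro x ⟨⟨n, _, rfl⟩, hxC⟩
          exact ⟨n, hxC, rfl⟩
        have heq : {k : C | (k : X) ∈ (fun n => t (y n)) '' N}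
            = Subtype.val ⁻¹' ((fun n => t (y n)) '' N ∩ C) := by
          ext k
          simp [k.2]
        rw [heq]
        exact (hTC.preimage Subtype.val_injective.injOn).isClosed
      have himg : f '' ((fun n => t (y n)) '' N) = y '' N := by
        rw [← Set.image_comp]
        exact Set.image_congr fun n _ => ht (y n)
      have := hclosed _ h1
      rwa [himg] at this
    -- the range of `y` is infinite
    have hrange : (Set.range y).Infinite := by
      intro hfin'
      have hsub : (Set.univ : Set ℕ) ⊆ ⋃ c ∈ Set.range y, {n | y n = c} :=
        fun n _ => Set.mem_biUnion ⟨n, rfl⟩ rfl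
      exact Set.infinite_univ ((hfin'.biUnion fun c _ => hfib c).subset hsub)
    -- but the range of `y` is a compact discrete subset of `K`, hence finite
    have hSclosed : IsClosed (Set.range y) := by
      rw [← Set.image_univ]; exact hNclosed _
    have hScomp : IsCompact (Set.range y) :=
      hK.of_isClosed_subset hSclosed (Set.range_subset_iff.2 fun n => hyK n)
    have hdisc : DiscreteTopology (Set.range y) := by
      rw [discreteTopology_iff_forall_isClosed]
      intro T
      have hTeq : T = Subtype.val ⁻¹' (y '' (y ⁻¹' (Subtype.val '' T))) := by
        ext k
        constructor
        · intro hkT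
          obtain ⟨n, hn⟩ := k.2
          refine ⟨n, ?_, hn⟩
          show y n ∈ Subtype.val '' T
          rw [hn]; exact ⟨k, hkT, rfl⟩
        · rintro ⟨n, hn, hval⟩
          obtain ⟨k', hk'T, hk'v⟩ := hn
          have : k' = k := Subtype.val_injective (hk'v.trans hval)
          exact this ▸ hk'T
      rw [hTeq]
      exact (hNclosed _).preimage continuous_subtype_val
    exact hrange (hScomp.finite (isDiscrete_iff_discreteTopology.mpr hdisc))
  -- the closure of `A` is sequentially compact, hence compact
  have hseq : IsSeqCompact (closure A) := by
    intro u hu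
    have hApprox : ∀ n : ℕ, ∃ b ∈ A, dist (u n) b < 1 / (n + 1) := fun n =>
      Metric.mem_closure_iff.1 (hu n) _ (by positivity)
    choose v hvA hvd using hApprox
    obtain ⟨a, φ, hφ, hten⟩ := seqkey v hvA
    refine ⟨a, ?_, φ, hφ, ?_⟩
    · exact mem_closure_of_tendsto hten (Eventually.of_forall fun k => hvA _)
    · refine hten.congr_dist ?_
      have hb : ∀ k : ℕ, dist (v (φ k)) (u (φ k)) ≤ 1 / (k + 1) := by
        intro k
        rw [dist_comm]
        refine (hvd (φ k)).le.trans ?_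
        apply one_div_le_one_div_of_le (by positivity)
        have : (k : ℝ) ≤ φ k := by exact_mod_cast hφ.le_apply
        linarith
      exact squeeze_zero (fun k => dist_nonneg) hb tendsto_one_div_add_atTop_nhds_zero_nat
  exact hseq.isCompact

/-- The image of a k*-metrizable k-space under a continuous closed
surjection is k*-metrizable. -/
theorem stmt_5 {X : Type u} {Y : Type v} [TopologicalSpace X] [TopologicalSpace Y]
    [T2Space X] [T2Space Y]
    (hX : KStarMetrizable X) (hk : IsKSpace X)
    (f : X → Y) (hf : Continuous f) (hclosed : IsClosedMap f)
    (hsurj : Function.Surjective f) :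
    KStarMetrizable Y := by
  obtain ⟨M, _inst, g, s, hg, hgsurj, hgs, hprec⟩ := hX
  choose t ht using hsurj
  set M' : Set M := closure (Set.range fun y => s (t y)) with hM'
  have hmem : ∀ y : Y, s (t y) ∈ M' := fun y => subset_closure ⟨y, rfl⟩
  -- `M'` is small relative to universe `v`
  have hsmall : Small.{v} ↥M' := by
    have hex : ∀ m : ↥M', ∃ σ : ℕ → Y,
        Tendsto (fun n => s (t (σ n))) atTop (𝓝 (m : M)) := by
      intro m
      obtain ⟨x, hx, hxt⟩ := mem_closure_iff_seq_limit.1 m.2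
      choose σ hσ using hx
      exact ⟨σ, by rwa [funext hσ]⟩
    choose σ hσ using hex
    refine small_of_injective (f := σ) (fun m₁ m₂ hm => ?_)
    have h2 := hσ m₂
    rw [← hm] at h2
    exact Subtype.val_injective (tendsto_nhds_unique (hσ m₁) h2)
  haveI := hsmall
  letI : MetricSpace (Shrink.{v} ↥M') :=
    MetricSpace.induced (equivShrink ↥M').symm (equivShrink ↥M').symm.injective inferInstance
  have hiso : Isometry ((equivShrink ↥M').symm) := Isometry.of_dist_eq fun _ _ => rfl
  let hIE : Shrink.{v} ↥M' ≃ᵢ ↥M' := ⟨(equivShrink ↥M').symm, hiso⟩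
  let h : Shrink.{v} ↥M' ≃ₜ ↥M' := hIE.toHomeomorph
  have hcle : Topology.IsClosedEmbedding (Subtype.val : ↥M' → M) :=
    isClosed_closure.isClosedEmbedding_subtypeVal
  refine ⟨Shrink.{v} ↥M', inferInstance,
    fun m => f (g ((h m : ↥M') : M)),
    fun y => h.symm ⟨s (t y), hmem y⟩, ?_, ?_, ?_, ?_⟩
  · exact hf.comp (hg.comp (continuous_subtype_val.comp h.continuous))
  · intro y
    refine ⟨h.symm ⟨s (t y), hmem y⟩, ?_⟩
    show f (g ((h (h.symm ⟨s (t y), hmem y⟩) : ↥M') : M)) = y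
    rw [Homeomorph.apply_symm_apply]
    show f (g (s (t y))) = y
    rw [hgs, ht]
  · intro y
    show f (g ((h (h.symm ⟨s (t y), hmem y⟩) : ↥M') : M)) = y
    rw [Homeomorph.apply_symm_apply]
    show f (g (s (t y))) = y
    rw [hgs, ht]
  · intro K hK
    have hA : IsCompact (closure ((fun y => s (t y)) '' K)) :=
      key_compact hk s hprec f hclosed t ht K hK
    have himg : (fun y => h.symm ⟨s (t y), hmem y⟩) '' K
        = h.symm '' ((fun y => (⟨s (t y), hmem y⟩ : ↥M')) '' K) :=
      Set.image_comp _ _ _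
    rw [himg, ← Homeomorph.image_closure]
    rw [Homeomorph.isCompact_image]
    -- compactness of the closure inside the subtype `M'`
    rw [hcle.isEmbedding.closure_eq_preimage_closure_image]
    refine hcle.isCompact_preimage ?_
    have : Subtype.val '' ((fun y => (⟨s (t y), hmem y⟩ : ↥M')) '' K)
        = (fun y => s (t y)) '' K := by
      rw [← Set.image_comp]
      rfl
    rwa [this]
end

section
/- A Hausdorff topological space X is k*-metrizable if and only if there is a countable family (X_n)_{n∈ℕ} of subsets of X such that each X_n is k-closed in X, each X_n is k*-metrizable in the subspace topology, and for every sequence (x_k) in X converging to a point x ∈ X there is an n with {x_k : k ∈ ℕ} ∪ {x} ⊆ X_n. -/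
open Filter Topology Set

universe u

/-- A subset `A ⊆ X` is k-closed if its trace on every compact set `K` is closed in `K`. -/
def KClosed {X : Type u} [TopologicalSpace X] (A : Set X) : Prop :=
  ∀ K : Set X, IsCompact K → IsClosed {k : K | (k : X) ∈ A}

open TopologicalSpace

universe v

/-- A compact Hausdorff space with a countable network is second countable. -/
theorem secondCountable_of_countable_network {C : Type v} [TopologicalSpace C]
    [CompactSpace C] [T2Space C] (N : Set (Set C)) (hcount : N.Countable)
    (hnet : ∀ (x : C) (U : Set C), IsOpen U → x ∈ U → ∃ M ∈ N, x ∈ M ∧ M ⊆ U) :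
    SecondCountableTopology C := by
  classical
  -- separation of pairs with disjoint closures
  have hsep : ∀ p : Set C × Set C, ∃ q : Set C × Set C,
      IsOpen q.1 ∧ IsOpen q.2 ∧ Disjoint q.1 q.2 ∧
      (Disjoint (closure p.1) (closure p.2) → closure p.1 ⊆ q.1 ∧ closure p.2 ⊆ q.2) := by
    intro p
    by_cases h : Disjoint (closure p.1) (closure p.2)
    · obtain ⟨U, V, hU, hV, h1, h2, hUV⟩ :=
        normal_separation isClosed_closure isClosed_closure h
      exact ⟨(U, V), hU, hV, hUV, fun _ => ⟨h1, h2⟩⟩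
    · exact ⟨(∅, ∅), isOpen_empty, isOpen_empty, disjoint_bot_left, fun h' => absurd h' h⟩
  choose pick hpick1 hpick2 hpick3 hpick4 using hsep
  -- separation of points by opens with disjoint closures
  have hpts : ∀ x y : C, x ≠ y → ∃ O1 O2 : Set C, IsOpen O1 ∧ IsOpen O2 ∧ x ∈ O1 ∧ y ∈ O2 ∧
      Disjoint (closure O1) (closure O2) := by
    intro x y hxy
    obtain ⟨U, V, hU, hV, hxU, hyV, hUV⟩ := t2_separation hxy
    obtain ⟨t, ht, htc, hts⟩ := exists_mem_nhds_isClosed_subset (hV.mem_nhds hyV)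
    refine ⟨U, interior t, hU, isOpen_interior, hxU, mem_interior_iff_mem_nhds.2 ht, ?_⟩
    have h1 : closure U ⊆ Vᶜ :=
      closure_minimal (fun z hz hzV => hUV.le_bot ⟨hz, hzV⟩) hV.isClosed_compl
    have h2 : closure (interior t) ⊆ V := (closure_minimal interior_subset htc).trans hts
    exact Set.disjoint_left.2 fun z hz1 hz2 => h1 hz1 (h2 hz2)
  -- the candidate basis
  set P : Set (Set C × Set C) := N ×ˢ N with hP
  set B : Set (Set C) :=
    (fun F : Set (Set C × Set C) => ⋂ q ∈ F, (pick q).1) '' {F | F.Finite ∧ F ⊆ P} with hB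
  have hBcount : B.Countable :=
    ((countable_setOf_finite_subset (hcount.prod hcount)).image _).mono
      (by rintro _ ⟨F, ⟨h1, h2⟩, rfl⟩; exact ⟨F, ⟨h1, h2⟩, rfl⟩)
  have hbasis : IsTopologicalBasis B := by
    refine isTopologicalBasis_of_isOpen_of_nhds ?_ ?_
    · rintro _ ⟨F, ⟨hF, -⟩, rfl⟩
      exact hF.isOpen_biInter fun q _ => hpick1 q
    · intro x W hxW hW
      have key : ∀ y : C, ∃ p : Set C × Set C, y ∉ W →
          p ∈ P ∧ Disjoint (closure p.1) (closure p.2) ∧ x ∈ p.1 ∧ y ∈ p.2 := by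
        intro y
        by_cases hy : y ∈ W
        · exact ⟨(∅, ∅), fun h => (h hy).elim⟩
        · have hxy : x ≠ y := fun h => hy (h ▸ hxW)
          obtain ⟨O1, O2, hO1, hO2, hxO1, hyO2, hdisj⟩ := hpts x y hxy
          obtain ⟨M1, hM1, hxM1, hM1s⟩ := hnet x O1 hO1 hxO1
          obtain ⟨M2, hM2, hyM2, hM2s⟩ := hnet y O2 hO2 hyO2
          refine ⟨(M1, M2), fun _ => ⟨⟨hM1, hM2⟩, ?_, hxM1, hyM2⟩⟩
          exact hdisj.mono (closure_mono hM1s) (closure_mono hM2s)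
      choose p hp using key
      have hWc : IsCompact Wᶜ := hW.isClosed_compl.isCompact
      set V : C → Set C := fun y => if y ∈ W then (∅ : Set C) else (pick (p y)).2 with hVdef
      have hVopen : ∀ y, IsOpen (V y) := by
        intro y
        by_cases hy : y ∈ W
        · simp only [hVdef, if_pos hy]; exact isOpen_empty
        · simp only [hVdef, if_neg hy]; exact hpick2 _
      have hcov : Wᶜ ⊆ ⋃ y : C, V y := by
        intro y hy
        refine mem_iUnion.2 ⟨y, ?_⟩
        simp only [hVdef, if_neg hy]
        obtain ⟨-, hd, -, hy2⟩ := hp y hy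
        exact ((hpick4 (p y) hd).2) (subset_closure hy2)
      obtain ⟨t, ht⟩ := hWc.elim_finite_subcover V hVopen hcov
      set F := p '' (↑t ∩ Wᶜ) with hF
      have hFfin : F.Finite := (t.finite_toSet.inter_of_left _).image _
      have hFP : F ⊆ P := by rintro _ ⟨y, ⟨-, hy⟩, rfl⟩; exact (hp y hy).1
      refine ⟨⋂ q ∈ F, (pick q).1, ⟨F, ⟨hFfin, hFP⟩, rfl⟩, ?_, ?_⟩
      · refine mem_iInter₂.2 ?_
        rintro q ⟨y, ⟨-, hy⟩, rfl⟩
        obtain ⟨-, hd, hx1, -⟩ := hp y hy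
        exact (hpick4 (p y) hd).1 (subset_closure hx1)
      · intro z hz
        by_contra hzW
        obtain ⟨y, hyt, hzy⟩ := mem_iUnion₂.1 (ht hzW)
        have hyW : y ∉ W := by
          intro hyW; simp only [hVdef, if_pos hyW] at hzy; exact hzy
        simp only [hVdef, if_neg hyW] at hzy
        have hz1 : z ∈ (pick (p y)).1 := mem_iInter₂.1 hz (p y) ⟨y, ⟨hyt, hyW⟩, rfl⟩
        exact (hpick3 (p y)).le_bot ⟨hz1, hzy⟩
  exact hbasis.secondCountableTopology hBcount

/-- Continuous surjective image of a second countable space which is compact Hausdorff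
is second countable. -/
theorem secondCountable_of_image {Q : Type u} {C : Type v} [TopologicalSpace Q]
    [SecondCountableTopology Q] [TopologicalSpace C] [CompactSpace C] [T2Space C]
    (g : Q → C) (hg : Continuous g) (hsurj : Function.Surjective g) :
    SecondCountableTopology C := by
  refine secondCountable_of_countable_network ((g '' ·) '' countableBasis Q)
    ((countable_countableBasis Q).image _) ?_
  intro x U hU hxU
  obtain ⟨q, rfl⟩ := hsurj x
  obtain ⟨Bq, hBq, hqB, hBsub⟩ := (isBasis_countableBasis Q).exists_subset_of_mem_open
    (show q ∈ g ⁻¹' U from hxU) (hU.preimage hg)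
  exact ⟨g '' Bq, mem_image_of_mem _ hBq, mem_image_of_mem _ hqB, image_subset_iff.2 hBsub⟩

/-- Compact subsets of a k*-metrizable Hausdorff space are second countable. -/
theorem kStar_compact_secondCountable {Y : Type u} [TopologicalSpace Y] [T2Space Y]
    (h : KStarMetrizable Y) {K : Set Y} (hK : IsCompact K) :
    SecondCountableTopology ↥K := by
  obtain ⟨M, hM, f, s, hf, -, hsec, hcpt⟩ := h
  have hQ : IsCompact (closure (s '' K)) := hcpt K hK
  haveI : CompactSpace ↥(closure (s '' K)) := isCompact_iff_compactSpace.mp hQ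
  haveI : SecondCountableTopology ↥(closure (s '' K)) := inferInstance
  set g : ↥(closure (s '' K)) → ↥(f '' closure (s '' K)) :=
    fun q => ⟨f ↑q, mem_image_of_mem f q.2⟩ with hg
  have hgc : Continuous g := (hf.comp continuous_subtype_val).subtype_mk _
  have hgsurj : Function.Surjective g := by
    rintro ⟨-, q, hq, rfl⟩; exact ⟨⟨q, hq⟩, rfl⟩
  haveI : CompactSpace ↥(f '' closure (s '' K)) := isCompact_iff_compactSpace.mp (hQ.image hf)
  haveI : SecondCountableTopology ↥(f '' closure (s '' K)) :=
    secondCountable_of_image g hgc hgsurj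
  have hsub : K ⊆ f '' closure (s '' K) := fun x hx =>
    ⟨s x, subset_closure (mem_image_of_mem s hx), hsec x⟩
  exact (IsEmbedding.inclusion hsub).secondCountableTopology

/-- The trace of a k-closed set on a compact set is compact. -/
theorem KClosed.inter_compact {X : Type u} [TopologicalSpace X] {A K : Set X}
    (hA : KClosed A) (hK : IsCompact K) : IsCompact (K ∩ A) := by
  haveI : CompactSpace ↥K := isCompact_iff_compactSpace.mp hK
  have h1 : IsCompact {k : K | (k : X) ∈ A} := (hA K hK).isCompact
  have h2 := h1.image continuous_subtype_val
  rwa [show Subtype.val '' {k : K | (k : X) ∈ A} = K ∩ A from Subtype.image_preimage_coe K A] at h2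

/-- Every compact subset is contained in a finite union of the `A n`. -/
theorem compact_subset_finite_union {X : Type u} [TopologicalSpace X] [T2Space X]
    (A : ℕ → Set X) (hcl : ∀ n, KClosed (A n)) (hk : ∀ n, KStarMetrizable ↥(A n))
    (hseq : ∀ (x : ℕ → X) (a : X), Tendsto x atTop (𝓝 a) → ∃ n, Set.range x ∪ {a} ⊆ A n)
    {K : Set X} (hK : IsCompact K) : ∃ N, K ⊆ ⋃ n < N, A n := by
  have cover : ∀ x : X, ∃ n, x ∈ A n := by
    intro x
    obtain ⟨n, hn⟩ := hseq (fun _ => x) x tendsto_const_nhds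
    exact ⟨n, hn (mem_union_left _ (mem_range_self 0))⟩
  by_contra hcon
  push_neg at hcon
  have hex : ∀ N, ∃ x, x ∈ K ∧ x ∉ ⋃ n < N, A n := by
    intro N
    obtain ⟨x, hx1, hx2⟩ := not_subset.mp (hcon N)
    exact ⟨x, hx1, hx2⟩
  choose y hyK hyA using hex
  set C : Set X := closure (range y) with hC
  have hsubK : C ⊆ K := closure_minimal (range_subset_iff.2 hyK) hK.isClosed
  have hCcpt : IsCompact C := hK.of_isClosed_subset isClosed_closure hsubK
  haveI : CompactSpace ↥C := isCompact_iff_compactSpace.mp hCcpt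
  -- build a countable network on ↥C
  set Kp : ∀ p : ℕ, Set ↥(A p) := fun p => {a | (a : X) ∈ C} with hKp
  have hKpcpt : ∀ p, IsCompact (Kp p) := by
    intro p
    rw [IsEmbedding.subtypeVal.isCompact_iff]
    have : Subtype.val '' Kp p = A p ∩ C := Subtype.image_preimage_coe _ _
    rw [this, Set.inter_comm]
    exact (hcl p).inter_compact hCcpt
  have sc : ∀ p, SecondCountableTopology ↥(Kp p) := fun p =>
    kStar_compact_secondCountable (hk p) (hKpcpt p)
  set j : ∀ p : ℕ, ↥(Kp p) → ↥C := fun p a => ⟨(a : ↥(A p)), a.2⟩ with hj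
  have hjc : ∀ p, Continuous (j p) :=
    fun p => (continuous_subtype_val.comp continuous_subtype_val).subtype_mk _
  set Net : Set (Set ↥C) := ⋃ p : ℕ, (fun B => j p '' B) '' (@countableBasis _ _ (sc p)) with hNet
  have hNetc : Net.Countable :=
    countable_iUnion fun p => (@countable_countableBasis _ _ (sc p)).image _
  haveI : SecondCountableTopology ↥C := by
    refine secondCountable_of_countable_network Net hNetc ?_
    intro x U hU hxU
    obtain ⟨p, hp⟩ := cover ↑x
    set a : ↥(Kp p) := ⟨⟨↑x, hp⟩, x.2⟩ with ha
    have hja : j p a = x := Subtype.ext rfl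
    obtain ⟨B, hB, haB, hBsub⟩ := (@isBasis_countableBasis _ _ (sc p)).exists_subset_of_mem_open
      (show a ∈ j p ⁻¹' U by rw [mem_preimage, hja]; exact hxU) (hU.preimage (hjc p))
    refine ⟨j p '' B, ?_, ?_, image_subset_iff.2 hBsub⟩
    · exact mem_iUnion.2 ⟨p, mem_image_of_mem _ hB⟩
    · rw [← hja]; exact mem_image_of_mem _ haB
  -- extract a convergent subsequence
  set yc : ℕ → ↥C := fun n => ⟨y n, subset_closure (mem_range_self n)⟩ with hyc
  obtain ⟨a, φ, hφ, hconv⟩ := CompactSpace.tendsto_subseq yc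
  have hconvX : Tendsto (fun k => y (φ k)) atTop (𝓝 (a : X)) :=
    (continuous_subtype_val.tendsto a).comp hconv
  obtain ⟨p, hp⟩ := hseq _ _ hconvX
  have h1 : y (φ (p + 1)) ∈ A p := hp (mem_union_left _ (mem_range_self (p + 1)))
  have h2 : p < φ (p + 1) := lt_of_lt_of_le (Nat.lt_succ_self p) (hφ.le_apply)
  exact hyA (φ (p + 1)) (mem_iUnion₂.2 ⟨p, h2, h1⟩)

/-- A Hausdorff space `X` is k*-metrizable iff there is a countable family
`(A n)` of k-closed subsets, each k*-metrizable in the subspace topology, such that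
every convergent sequence together with its limit lies in some `A n`. -/
theorem stmt_6 {X : Type u} [TopologicalSpace X] [T2Space X] :
    KStarMetrizable X ↔
      ∃ A : ℕ → Set X,
        (∀ n, KClosed (A n)) ∧
        (∀ n, KStarMetrizable ↥(A n)) ∧
        (∀ (x : ℕ → X) (a : X), Tendsto x atTop (𝓝 a) →
          ∃ n, Set.range x ∪ {a} ⊆ A n) := by
  constructor
  · intro h
    refine ⟨fun _ => univ, fun n K hK => by simp, fun n => ?_,
      fun x a _ => ⟨0, subset_univ _⟩⟩
    obtain ⟨M, iM, f, s, hf, hsurj, hsec, hcpt⟩ := h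
    refine ⟨M, iM, fun m => ⟨f m, mem_univ _⟩, fun x => s ↑x, hf.subtype_mk _, ?_, ?_, ?_⟩
    · rintro ⟨x, -⟩
      obtain ⟨m, hm⟩ := hsurj x
      exact ⟨m, Subtype.ext hm⟩
    · intro x; exact Subtype.ext (hsec ↑x)
    · intro K hK
      have h1 : IsCompact (Subtype.val '' K) := hK.image continuous_subtype_val
      have h2 := hcpt _ h1
      rwa [Set.image_image] at h2
  · rintro ⟨A, hcl, hk, hseq⟩
    classical
    have cover : ∀ x : X, ∃ n, x ∈ A n := by
      intro x
      obtain ⟨n, hn⟩ := hseq (fun _ => x) x tendsto_const_nhds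
      exact ⟨n, hn (mem_union_left _ (mem_range_self 0))⟩
    choose M iM f s hf hsurj hsec hcpt using hk
    letI : ∀ n, MetricSpace (M n) := iM
    letI : MetricSpace (Σ n, M n) := Metric.Sigma.metricSpace
    refine ⟨Σ n, M n, inferInstance, fun m => ↑(f m.1 m.2),
      fun x => ⟨Nat.find (cover x), s _ ⟨x, Nat.find_spec (cover x)⟩⟩, ?_, ?_, ?_, ?_⟩
    · exact continuous_sigma fun n => continuous_subtype_val.comp (hf n)
    · intro x
      obtain ⟨n, hn⟩ := cover x
      obtain ⟨m, hm⟩ := hsurj n ⟨x, hn⟩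
      exact ⟨⟨n, m⟩, by simp [hm]⟩
    · intro x
      simp [hsec]
    · intro K hK
      obtain ⟨N, hN⟩ := compact_subset_finite_union A hcl
        (fun n => ⟨M n, iM n, f n, s n, hf n, hsurj n, hsec n, hcpt n⟩) hseq hK
      set Kp : ∀ n : ℕ, Set ↥(A n) := fun n => {a | (a : X) ∈ K} with hKp
      have hKpcpt : ∀ n, IsCompact (Kp n) := by
        intro n
        rw [IsEmbedding.subtypeVal.isCompact_iff]
        have : Subtype.val '' Kp n = A n ∩ K := Subtype.image_preimage_coe _ _
        rw [this, Set.inter_comm]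
        exact (hcl n).inter_compact hK
      set Big : Set (Σ n, M n) :=
        ⋃ n < N, Sigma.mk n '' closure (s n '' Kp n) with hBig
      have hBigcpt : IsCompact Big := by
        refine (Set.finite_Iio N).isCompact_biUnion fun n _ => ?_
        exact ((hcpt n _ (hKpcpt n)).image continuous_sigmaMk)
      have hBigcl : IsClosed Big := hBigcpt.isClosed
      have hsub : (fun x => (⟨Nat.find (cover x), s _ ⟨x, Nat.find_spec (cover x)⟩⟩ :
          Σ n, M n)) '' K ⊆ Big := by
        rintro - ⟨x, hx, rfl⟩
        have hfind : Nat.find (cover x) < N := by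
          obtain ⟨n, hn1, hn2⟩ := mem_iUnion₂.1 (hN hx)
          exact lt_of_le_of_lt (Nat.find_min' (cover x) hn2) hn1
        refine mem_iUnion₂.2 ⟨Nat.find (cover x), hfind, ?_⟩
        exact mem_image_of_mem _ (subset_closure (mem_image_of_mem _ hx))
      exact hBigcpt.of_isClosed_subset isClosed_closure (closure_minimal hsub hBigcl)
end

section
/- A Hausdorff topological space X is k*-metrizable if and only if X has a σ-compact-finite cl₁-osed k-network, i.e. a family 𝒩 of subsets of X which is a countable union of compact-finite subfamilies and such that for every open set U ⊆ X and every compact set K ⊆ U there is a finite subfamily 𝓕 ⊆ 𝒩 with K ⊆ ⋃𝓕 and cl₁(⋃𝓕) ⊆ U. Moreover, if X is sequentially regular, then X is k*-metrizable if and only if X has a σ-compact-finite k-network, i.e. a family 𝒩 of subsets of X which is a countable union of compact-finite subfamilies and such that for every open set U ⊆ X and every compact set K ⊆ U there is a finite subfamily 𝓕 ⊆ 𝒩 with K ⊆ ⋃𝓕 ⊆ U. -/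
open Filter Topology Set

universe u

/-- A family of sets is compact-finite if every compact set meets only finitely many
members of the family. -/
def CompactFinite {X : Type u} [TopologicalSpace X] (𝓕 : Set (Set X)) : Prop :=
  ∀ K : Set X, IsCompact K → {N ∈ 𝓕 | (N ∩ K).Nonempty}.Finite

/-- A family is σ-compact-finite if it is a countable union of compact-finite families. -/
def SigmaCompactFinite {X : Type u} [TopologicalSpace X] (𝒩 : Set (Set X)) : Prop :=
  ∃ F : ℕ → Set (Set X), 𝒩 = ⋃ n, F n ∧ ∀ n, CompactFinite (F n)

set_option linter.unusedSectionVars false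

noncomputable def discMS (α : Type u) : MetricSpace α := by
  classical
  exact { dist := fun a b => if a = b then 0 else 1
          dist_self := by simp
          dist_comm := by intro a b; simp only [eq_comm]
          dist_triangle := by
            intro a b c
            rcases eq_or_ne a c with rfl|h
            · rcases eq_or_ne a b with rfl|h2
              · simp
              · simp only [if_neg h2, if_pos rfl]
                have : (if b = a then (0:ℝ) else 1) = 1 := by simp [Ne.symm h2]
                rw [this]; norm_num
            · simp only [if_neg h]
              rcases eq_or_ne a b with rfl|h2
              · simp [h]
              · simp only [if_neg h2]
                have : (0:ℝ) ≤ if b = c then (0:ℝ) else 1 := by positivity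
                linarith
          eq_of_dist_eq_zero := by
            intro a b h; by_contra hne; simp only [if_neg hne] at h; norm_num at h }

noncomputable instance optMS (X : Type u) : MetricSpace (Option (Set X)) := discMS _

lemma discMS_tendsto {X : Type u} (u : ℕ → Option (Set X)) (a : Option (Set X))
    (h : Tendsto u atTop (𝓝 a)) : ∀ᶠ n in atTop, u n = a := by
  obtain ⟨N, hN⟩ := (Metric.tendsto_atTop.mp h) 1 one_pos
  filter_upwards [eventually_ge_atTop N] with n hn
  have := hN n hn
  by_contra hne
  unfold optMS discMS at this; simp only [dist, if_neg hne] at this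
  norm_num at this

noncomputable instance pMS (X : Type u) : MetricSpace ((ℕ × ℕ) → Option (Set X)) :=
  PiCountable.metricSpace

section Bwd
variable {X : Type u} [TopologicalSpace X] [T2Space X]

lemma seqClosure_mono' {A B : Set X} (h : A ⊆ B) : seqClosure A ⊆ seqClosure B :=
  fun _ ⟨x, hx, hxp⟩ => ⟨x, fun n => h (hx n), hxp⟩

lemma freq_pigeon {α : Type*} {S : Set α} (hS : S.Finite) (P : ℕ → α → Prop)
    (h : ∃ᶠ j in atTop, ∃ a ∈ S, P j a) : ∃ a ∈ S, ∃ᶠ j in atTop, P j a := by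
  by_contra hc
  push_neg at hc
  have : ∀ᶠ j in atTop, ∀ a ∈ S, ¬ P j a := (eventually_all_finite hS).2 hc
  obtain ⟨j, ⟨a, ha, hPa⟩, h2⟩ := (h.and_eventually this).exists
  exact h2 a ha hPa

lemma backward_dir (F : ℕ → Set (Set X)) (hF : ∀ n, CompactFinite (F n))
    (hnet : ∀ U : Set X, IsOpen U → ∀ K : Set X, IsCompact K → K ⊆ U →
      ∃ 𝓕 ⊆ ⋃ n, F n, 𝓕.Finite ∧ K ⊆ ⋃₀ 𝓕 ∧ seqClosure (⋃₀ 𝓕) ⊆ U) :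
    KStarMetrizable X := by
  classical
  have hfin : ∀ (x : X) (n : ℕ), {N | N ∈ F n ∧ x ∈ N}.Finite := by
    intro x n
    apply (hF n {x} isCompact_singleton).subset
    rintro N ⟨h1, h2⟩; exact ⟨h1, x, h2, rfl⟩
  set L : X → ℕ → List (Set X) := fun x n => (hfin x n).toFinset.toList with hLdef
  set st : X → (ℕ × ℕ) → Option (Set X) := fun x c => (L x c.1)[c.2]? with hstdef
  have hs1 : ∀ x c N, st x c = some N → N ∈ F c.1 ∧ x ∈ N := by
    intro x c N h
    have hmem : N ∈ L x c.1 := by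
      have := List.getElem?_eq_some_iff.1 h
      obtain ⟨hlt, hEq⟩ := this
      exact hEq ▸ List.getElem_mem hlt
    have : N ∈ (hfin x c.1).toFinset := by
      simpa [hLdef] using hmem
    simpa using (Set.Finite.mem_toFinset _).1 this
  have hs2 : ∀ x n N, N ∈ F n → x ∈ N → ∃ i, st x (n, i) = some N := by
    intro x n N h1 h2
    have : N ∈ L x n := by
      simp only [hLdef, Finset.mem_toList, Set.Finite.mem_toFinset]
      exact ⟨h1, h2⟩
    obtain ⟨i, hlt, hEq⟩ := List.mem_iff_getElem.1 this
    exact ⟨i, by simp [hstdef, List.getElem?_eq_some_iff, hlt, hEq]⟩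
  have hs3 : ∀ (K : Set X) (hK : IsCompact K), ∀ x ∈ K, ∀ n,
      (L x n).length ≤ ((hF n K hK).toFinset.card) := by
    intro K hK x hx n
    simp only [hLdef, Finset.length_toList]
    apply Finset.card_le_card
    intro N hN
    have := (Set.Finite.mem_toFinset _).1 hN
    exact (Set.Finite.mem_toFinset _).2 ⟨this.1, x, this.2, hx⟩
  set OS : Option (Set X) → Set X := fun o => o.elim univ id with hOSdef
  set Wit : ((ℕ × ℕ) → Option (Set X)) → X → Prop := fun A x =>
    (∀ c, x ∈ seqClosure (OS (A c))) ∧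
    ∀ U, IsOpen U → x ∈ U → ∃ c, seqClosure (OS (A c)) ⊆ U with hWitdef
  have hWuniq : ∀ A x x', Wit A x → Wit A x' → x = x' := by
    intro A x x' hx hx'
    by_contra hne
    obtain ⟨c, hc⟩ := hx.2 {x'}ᶜ isOpen_compl_singleton (by simpa using hne)
    exact (hc (hx'.1 c)) rfl
  have hWit_s : ∀ x, Wit (st x) x := by
    intro x
    constructor
    · intro c
      apply subset_seqClosure
      cases h : st x c with
      | none => simp [hOSdef]
      | some N => simpa [hOSdef] using (hs1 x c N h).2
    · intro U hU hxU
      obtain ⟨𝓕, h𝓕N, h𝓕fin, hcov, hscl⟩ := hnet U hU {x} isCompact_singleton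
        (by simpa using hxU)
      obtain ⟨N, hN𝓕, hxN⟩ := hcov rfl
      obtain ⟨n, hn⟩ := mem_iUnion.1 (h𝓕N hN𝓕)
      obtain ⟨i, hi⟩ := hs2 x n N hn hxN
      refine ⟨(n, i), ?_⟩
      rw [hi]
      refine (seqClosure_mono' ?_).trans hscl
      simp only [hOSdef, Option.elim]
      exact fun z hz => ⟨N, hN𝓕, hz⟩
  -- capture lemma
  have hcap : ∀ (K : Set X), IsCompact K → ∀ (x_ : ℕ → X), (∀ j, x_ j ∈ K) →
      ∀ (A : (ℕ × ℕ) → Option (Set X)), (∀ c, ∀ᶠ j in atTop, st (x_ j) c = A c) →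
      ∀ n N, N ∈ F n → (∃ᶠ j in atTop, x_ j ∈ N) →
      ∃ i, A (n, i) = some N ∧ ∀ᶠ j in atTop, x_ j ∈ N := by
    intro K hK x_ hxK A hstab n N hNF hfreq
    set r := ((hF n K hK).toFinset.card) with hr
    have hidx : ∃ᶠ j in atTop, ∃ i ∈ Set.Iio r, st (x_ j) (n, i) = some N := by
      apply hfreq.mono
      intro j hj
      obtain ⟨i, hi⟩ := hs2 (x_ j) n N hNF hj
      refine ⟨i, ?_, hi⟩
      have hlt : i < (L (x_ j) n).length := by
        have := List.getElem?_eq_some_iff.1 hi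
        exact this.1
      exact lt_of_lt_of_le hlt (hs3 K hK (x_ j) (hxK j) n)
    obtain ⟨i, _, hfi⟩ := freq_pigeon (Set.finite_Iio r) _ hidx
    have hstabi := hstab (n, i)
    obtain ⟨j, hji, hjs⟩ := (hfi.and_eventually hstabi).exists
    have hAI : A (n, i) = some N := by rw [← hjs, hji]
    refine ⟨i, hAI, ?_⟩
    filter_upwards [hstabi] with j hj
    have : st (x_ j) (n, i) = some N := by rw [hj, hAI]
    exact (hs1 (x_ j) (n, i) N this).2
  -- sequential compactness of compact subsets
  have hseq : ∀ (K : Set X), IsCompact K → ∀ (x_ : ℕ → X), (∀ j, x_ j ∈ K) →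
      ∃ x ∈ K, ∃ φ : ℕ → ℕ, StrictMono φ ∧ Tendsto (x_ ∘ φ) atTop (𝓝 x) := by
    intro K hK x_ hxK
    letI : CompactSpace ↥K := isCompact_iff_compactSpace.mp hK
    set u : ℕ → ↥K := fun j => ⟨x_ j, hxK j⟩ with hu
    obtain ⟨x0, -, hcl⟩ := isCompact_univ.exists_mapClusterPt (f := atTop) (u := u) (by simp)
    have hfreq : ∀ s ∈ 𝓝 x0, ∃ᶠ j in atTop, u j ∈ s := mapClusterPt_iff_frequently.mp hcl
    set NK : Set (Set X) := {N | (N ∈ ⋃ n, F n) ∧ (N ∩ K).Nonempty} with hNK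
    have hNKc : NK.Countable := by
      have hsub : NK ⊆ ⋃ n, {N ∈ F n | (N ∩ K).Nonempty} := by
        rintro N ⟨hN1, hN2⟩
        obtain ⟨n, hn⟩ := mem_iUnion.1 hN1
        exact mem_iUnion.2 ⟨n, hn, hN2⟩
      exact (Set.countable_iUnion (fun n => ((hF n) K hK).countable)).mono hsub
    set 𝒯 : Set (Set ↥K) := (fun N => (Subtype.val ⁻¹' N : Set ↥K)) '' NK with h𝒯
    have h𝒯c : 𝒯.Countable := hNKc.image _
    have hTnet : ∀ (y : ↥K) (W : Set ↥K), IsOpen W → y ∈ W →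
        ∃ T ∈ 𝒯, y ∈ T ∧ T ⊆ W := by
      intro y W hW hyW
      obtain ⟨U, hU, rfl⟩ := isOpen_induced_iff.1 hW
      obtain ⟨𝓕, h𝓕N, -, hcov, hscl⟩ := hnet U hU {y.1} isCompact_singleton
        (by simpa using hyW)
      obtain ⟨N, hN𝓕, hyN⟩ := hcov rfl
      refine ⟨Subtype.val ⁻¹' N, ⟨N, ⟨h𝓕N hN𝓕, ⟨y.1, hyN, y.2⟩⟩, rfl⟩, hyN, ?_⟩
      intro z hz
      exact hscl (subset_seqClosure (⟨N, hN𝓕, hz⟩ : (z : X) ∈ ⋃₀ 𝓕))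
    set 𝒢 : Set (Set ↥K) := {T ∈ 𝒯 | x0 ∉ closure T} with h𝒢
    set 𝒪 : Set (Set ↥K) := insert univ ((fun T => (closure T)ᶜ) '' 𝒢) with h𝒪
    have h𝒪c : 𝒪.Countable := ((h𝒯c.mono (fun T hT => hT.1)).image _).insert _
    obtain ⟨O, hO⟩ := h𝒪c.exists_eq_range ⟨univ, mem_insert _ _⟩
    have hOmem : ∀ m, O m ∈ 𝒪 := fun m => hO ▸ mem_range_self m
    have hOopen : ∀ m, IsOpen (O m) := by
      intro m
      rcases hOmem m with h | ⟨T, hT, hTm⟩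
      · rw [h]; exact isOpen_univ
      · rw [← hTm]; exact isClosed_closure.isOpen_compl
    have hOx : ∀ m, x0 ∈ O m := by
      intro m
      rcases hOmem m with h | ⟨T, hT, hTm⟩
      · rw [h]; trivial
      · rw [← hTm]; exact hT.2
    have hOsing : ⋂ m, O m ⊆ {x0} := by
      intro y hy
      by_contra hyx
      have hynx : y ∈ ({x0}ᶜ : Set ↥K) := by simpa using hyx
      obtain ⟨C, hC𝓝, hCclosed, hCsub⟩ :=
        exists_mem_nhds_isClosed_subset (isOpen_compl_singleton.mem_nhds hynx)
      obtain ⟨T, hT𝒯, hyT, hTsub⟩ := hTnet y (interior C) isOpen_interior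
        (mem_interior_iff_mem_nhds.2 hC𝓝)
      have hTcl : closure T ⊆ ({x0}ᶜ : Set ↥K) :=
        (closure_mono hTsub).trans ((closure_minimal interior_subset hCclosed).trans hCsub)
      have hT𝒢 : T ∈ 𝒢 := ⟨hT𝒯, fun h => (hTcl h) rfl⟩
      have : (closure T)ᶜ ∈ 𝒪 := mem_insert_iff.2 (Or.inr ⟨T, hT𝒢, rfl⟩)
      rw [hO] at this
      obtain ⟨m, hm⟩ := this
      have := mem_iInter.1 hy m
      rw [hm] at this
      exact this (subset_closure hyT)
    have hshr : ∀ m, ∃ C ∈ 𝓝 x0, IsClosed C ∧ C ⊆ O m :=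
      fun m => exists_mem_nhds_isClosed_subset ((hOopen m).mem_nhds (hOx m))
    choose Cs hCs1 hCs2 hCs3 using hshr
    set B : ℕ → Set ↥K := fun m => ⋂ k ∈ Finset.range (m+1), Cs k with hB
    have hBnhds : ∀ m, B m ∈ 𝓝 x0 := by
      intro m
      exact (Filter.biInter_finset_mem _).2 (fun k _ => hCs1 k)
    have hBanti : ∀ {m m' : ℕ}, m ≤ m' → B m' ⊆ B m := by
      intro m m' h z hz
      apply mem_iInter₂.2
      intro k hk
      exact mem_iInter₂.1 hz k
        (Finset.mem_range.2 (lt_of_lt_of_le (Finset.mem_range.1 hk) (by omega)))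
    have hBclosed : ∀ m, IsClosed (B m) := fun m =>
      isClosed_biInter (fun k _ => hCs2 k)
    have hBO : ∀ m, B m ⊆ O m := fun m =>
      (biInter_subset_of_mem (Finset.self_mem_range_succ m)).trans (hCs3 m)
    have hBbasis : ∀ W ∈ 𝓝 x0, ∃ m, B m ⊆ W := by
      intro W hW
      by_contra hc
      push_neg at hc
      set D : ℕ → Set ↥K := fun m => B m ∩ (interior W)ᶜ with hD
      have hDne : ∀ m, (D m).Nonempty := by
        intro m
        obtain ⟨y, hy1, hy2⟩ := not_subset.1 (hc m)
        exact ⟨y, hy1, fun h => hy2 (interior_subset h)⟩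
      have hDcl : ∀ m, IsClosed (D m) := fun m =>
        (hBclosed m).inter isOpen_interior.isClosed_compl
      have hDanti : ∀ m, D (m+1) ⊆ D m := fun m =>
        inter_subset_inter_left _ (hBanti (Nat.le_succ m))
      obtain ⟨y, hy⟩ := IsCompact.nonempty_iInter_of_sequence_nonempty_isCompact_isClosed
        D hDanti hDne ((hDcl 0).isCompact) hDcl
      have hyB : y ∈ ⋂ m, O m := by
        apply mem_iInter.2
        intro m
        exact hBO m (mem_iInter.1 hy m).1
      have : y = x0 := hOsing hyB
      have hyW : y ∈ (interior W)ᶜ := (mem_iInter.1 hy 0).2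
      rw [this] at hyW
      exact hyW (mem_interior_iff_mem_nhds.2 hW)
    obtain ⟨φ, hφmono, hφB⟩ := extraction_forall_of_frequently
      (fun m => hfreq (B m) (hBnhds m))
    have hconv : Tendsto (u ∘ φ) atTop (𝓝 x0) := by
      rw [tendsto_def]
      intro W hW
      obtain ⟨m, hm⟩ := hBbasis W hW
      filter_upwards [eventually_ge_atTop m] with k hk
      exact hm (hBanti hk (hφB k))
    refine ⟨x0.1, x0.2, φ, hφmono, ?_⟩
    have := (continuous_subtype_val.tendsto x0).comp hconv
    exact this
  have htwo : ∀ (K : Set X), IsCompact K → ∀ (x_ : ℕ → X), (∀ j, x_ j ∈ K) →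
      ∀ (A : (ℕ × ℕ) → Option (Set X)), (∀ c, ∀ᶠ j in atTop, st (x_ j) c = A c) →
      ∀ (x x' : X) (φ φ' : ℕ → ℕ), StrictMono φ → StrictMono φ' →
      Tendsto (x_ ∘ φ) atTop (𝓝 x) → Tendsto (x_ ∘ φ') atTop (𝓝 x') → x = x' := by
    intro K hK x_ hxK A hstab x x' φ φ' hφ hφ' hx hx'
    by_contra hne
    by_cases hcase : ∃ᶠ m in atTop, x_ (φ m) = x'
    · have hUx : {x'}ᶜ ∈ 𝓝 x := isOpen_compl_singleton.mem_nhds (by simpa using hne)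
      obtain ⟨m, hm1, hm2⟩ := (hcase.and_eventually (hx hUx)).exists
      exact hm2 (by simp [hm1])
    · rw [Filter.not_frequently] at hcase
      obtain ⟨t, ht⟩ := eventually_atTop.1 hcase
      set ψ : ℕ → ℕ := fun m => φ (m + t) with hψ
      have hψtend : Tendsto (x_ ∘ ψ) atTop (𝓝 x) := hx.comp (tendsto_add_atTop_nat t)
      have hQ : IsCompact (insert x (range (x_ ∘ ψ))) := hψtend.isCompact_insert_range
      have hQW : insert x (range (x_ ∘ ψ)) ⊆ {x'}ᶜ := by
        rintro z (rfl | ⟨m, rfl⟩)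
        · simpa using hne
        · simpa using ht (m + t) (by omega)
      obtain ⟨𝓕, h𝓕N, h𝓕fin, hcov, hscl⟩ := hnet {x'}ᶜ isOpen_compl_singleton _ hQ hQW
      have hfr : ∃ᶠ j in atTop, ∃ N ∈ 𝓕, x_ j ∈ N := by
        rw [frequently_atTop]
        intro a
        refine ⟨ψ a, le_trans (le_trans hφ.le_apply (hφ.monotone (by omega))) le_rfl, ?_⟩
        exact hcov (mem_insert_of_mem _ ⟨a, rfl⟩)
      obtain ⟨N, hN𝓕, hNfreq⟩ := freq_pigeon h𝓕fin _ hfr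
      obtain ⟨n, hn⟩ := mem_iUnion.1 (h𝓕N hN𝓕)
      obtain ⟨i, hAi, hNev⟩ := hcap K hK x_ hxK A hstab n N hn hNfreq
      have hx'N : x' ∈ seqClosure N := by
        obtain ⟨t', ht'⟩ := eventually_atTop.1 hNev
        refine ⟨fun m => x_ (φ' (m + t')), fun m => ht' _ (le_trans (by omega : t' ≤ m + t')
          hφ'.le_apply), ?_⟩
        exact hx'.comp (tendsto_add_atTop_nat t')
      exact (hscl (seqClosure_mono' (show N ⊆ ⋃₀ 𝓕 from fun z hz => ⟨N, hN𝓕, hz⟩) hx'N)) rfl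
  have hfullconv : ∀ (K : Set X), IsCompact K → ∀ (x_ : ℕ → X), (∀ j, x_ j ∈ K) →
      ∀ (A : (ℕ × ℕ) → Option (Set X)), (∀ c, ∀ᶠ j in atTop, st (x_ j) c = A c) →
      ∃ x ∈ K, Tendsto x_ atTop (𝓝 x) := by
    intro K hK x_ hxK A hstab
    obtain ⟨x, hxKmem, φ, hφ, hφlim⟩ := hseq K hK x_ hxK
    refine ⟨x, hxKmem, ?_⟩
    by_contra hnc
    have hnc2 : ∃ U ∈ 𝓝 x, ∃ᶠ j in atTop, x_ j ∉ U := by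
      rw [tendsto_def] at hnc
      push_neg at hnc
      obtain ⟨U, hU, hnU⟩ := hnc
      exact ⟨U, hU, Filter.not_eventually.1 hnU⟩
    obtain ⟨U, hU𝓝, hUfr⟩ := hnc2
    have hVfr : ∃ᶠ j in atTop, x_ j ∉ interior U :=
      hUfr.mono (fun j hj hV => hj (interior_subset hV))
    obtain ⟨ψ, hψmono, hψmem⟩ := extraction_of_frequently_atTop hVfr
    obtain ⟨x'', hx''K, χ, hχ, hχlim⟩ := hseq K hK (x_ ∘ ψ) (fun m => hxK _)
    have hx''V : x'' ∉ interior U := by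
      have hmem : ∀ m, ((x_ ∘ ψ) ∘ χ) m ∈ (interior U)ᶜ := fun m => hψmem (χ m)
      exact isOpen_interior.isClosed_compl.mem_of_tendsto hχlim (Eventually.of_forall hmem)
    have heq : x = x'' := htwo K hK x_ hxK A hstab x x'' φ (ψ ∘ χ) hφ (hψmono.comp hχ)
      hφlim hχlim
    exact hx''V (heq ▸ mem_interior_iff_mem_nhds.2 hU𝓝)
  -- assembling the metric space
  set Mt := {A : (ℕ × ℕ) → Option (Set X) // ∃ x, Wit A x} with hMt
  have hWitchoose : ∀ A : Mt, Wit A.1 (Classical.choose A.2) := fun A => Classical.choose_spec A.2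
  set fm : Mt → X := fun A => Classical.choose A.2 with hfm
  set sm : X → Mt := fun x => ⟨st x, x, hWit_s x⟩ with hsm
  have hsecm : ∀ x, fm (sm x) = x := fun x => hWuniq _ _ _ (hWitchoose (sm x)) (hWit_s x)
  refine ⟨Mt, inferInstance, fm, sm, ?_, fun x => ⟨sm x, hsecm x⟩, hsecm, ?_⟩
  · -- continuity of fm
    rw [continuous_iff_seqContinuous]
    intro Aseq A hA
    rw [tendsto_def]
    intro U hU
    obtain ⟨V, hVU, hVopen, hxV⟩ := mem_nhds_iff.1 hU
    obtain ⟨c, hc⟩ := (hWitchoose A).2 V hVopen hxV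
    have hcoord : Tendsto (fun k => (Aseq k).1 c) atTop (𝓝 (A.1 c)) :=
      (((continuous_apply c).comp continuous_subtype_val).continuousAt.tendsto).comp hA
    filter_upwards [discMS_tendsto _ _ hcoord] with k hk
    have hmem := (hWitchoose (Aseq k)).1 c
    rw [hk] at hmem
    exact hVU (hc hmem)
  · -- compactness of closures of images of compacta
    intro K hK
    set G : (ℕ × ℕ) → Set (Option (Set X)) := fun c =>
      insert none (some '' {N | N ∈ F c.1 ∧ (N ∩ K).Nonempty}) with hG
    have hfinK : ∀ c : ℕ × ℕ, {N | N ∈ F c.1 ∧ (N ∩ K).Nonempty}.Finite := by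
      intro c
      apply ((hF c.1) K hK).subset
      rintro N ⟨h1, h2⟩; exact ⟨h1, h2⟩
    have hGfin : ∀ c, (G c).Finite := fun c => ((hfinK c).image some).insert none
    have hsT : st '' K ⊆ Set.pi univ G := by
      rintro _ ⟨x, hx, rfl⟩
      intro c _
      cases h : st x c with
      | none => exact mem_insert _ _
      | some N =>
        obtain ⟨h1, h2⟩ := hs1 x c N h
        exact mem_insert_of_mem _ ⟨N, ⟨h1, x, h2, hx⟩, rfl⟩
    have hTcpt : IsCompact (Set.pi univ G) := isCompact_univ_pi (fun c => (hGfin c).isCompact)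
    have hTclosed : IsClosed (Set.pi univ G) := isClosed_set_pi (fun c _ => (hGfin c).isClosed)
    have hCsub : closure (st '' K) ⊆ Set.pi univ G := closure_minimal hsT hTclosed
    have hCcpt : IsCompact (closure (st '' K)) :=
      hTcpt.of_isClosed_subset isClosed_closure hCsub
    have hCM : ∀ A ∈ closure (st '' K), ∃ x, Wit A x := by
      intro A hA
      obtain ⟨y_, hy_, hy_lim⟩ := mem_closure_iff_seq_limit.1 hA
      choose x_ hx_K hx_eq using hy_
      have hstab : ∀ c, ∀ᶠ j in atTop, st (x_ j) c = A c := by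
        intro c
        have hco : Tendsto (fun j => y_ j c) atTop (𝓝 (A c)) :=
          ((continuous_apply c).continuousAt.tendsto).comp hy_lim
        filter_upwards [discMS_tendsto _ _ hco] with j hj
        rw [hx_eq j, hj]
      obtain ⟨x, hxK2, hxlim⟩ := hfullconv K hK x_ hx_K A hstab
      refine ⟨x, ?_, ?_⟩
      · intro c
        cases hc : A c with
        | none => exact subset_seqClosure trivial
        | some N =>
          have hev : ∀ᶠ j in atTop, x_ j ∈ N := by
            filter_upwards [hstab c] with j hj
            have : st (x_ j) c = some N := by rw [hj, hc]
            exact (hs1 _ _ _ this).2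
          obtain ⟨t', ht'⟩ := eventually_atTop.1 hev
          exact ⟨fun m => x_ (m + t'), fun m => ht' _ (by omega),
            hxlim.comp (tendsto_add_atTop_nat t')⟩
      · intro U hU hxU
        have hevU : ∀ᶠ j in atTop, x_ j ∈ U := hxlim (hU.mem_nhds hxU)
        obtain ⟨t', ht'⟩ := eventually_atTop.1 hevU
        have hQtend : Tendsto (fun m => x_ (m + t')) atTop (𝓝 x) :=
          hxlim.comp (tendsto_add_atTop_nat t')
        have hQ : IsCompact (insert x (range fun m => x_ (m + t'))) :=
          hQtend.isCompact_insert_range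
        have hQU : insert x (range fun m => x_ (m + t')) ⊆ U := by
          rintro z (rfl | ⟨m, rfl⟩)
          · exact hxU
          · exact ht' _ (by omega)
        obtain ⟨𝓕, h𝓕N, h𝓕fin, hcov, hscl⟩ := hnet U hU _ hQ hQU
        have hfr : ∃ᶠ j in atTop, ∃ N ∈ 𝓕, x_ j ∈ N := by
          rw [frequently_atTop]
          intro a
          exact ⟨a + t', by omega, hcov (mem_insert_of_mem _ ⟨a, rfl⟩)⟩
        obtain ⟨N, hN𝓕, hNfreq⟩ := freq_pigeon h𝓕fin _ hfr
        obtain ⟨n, hn⟩ := mem_iUnion.1 (h𝓕N hN𝓕)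
        obtain ⟨i, hAi, -⟩ := hcap K hK x_ hx_K A hstab n N hn hNfreq
        refine ⟨(n, i), ?_⟩
        rw [hAi]
        exact (seqClosure_mono' (show N ⊆ ⋃₀ 𝓕 from fun z hz => ⟨N, hN𝓕, hz⟩)).trans hscl
    have hemb : Topology.IsEmbedding (Subtype.val : Mt → ((ℕ × ℕ) → Option (Set X))) :=
      Topology.IsEmbedding.subtypeVal
    rw [hemb.isCompact_iff]
    have hvalim : Subtype.val '' (sm '' K) = st '' K := by
      ext m
      constructor
      · rintro ⟨A, ⟨x, hx, rfl⟩, rfl⟩; exact ⟨x, hx, rfl⟩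
      · rintro ⟨x, hx, rfl⟩; exact ⟨sm x, ⟨x, hx, rfl⟩, rfl⟩
    have hcleq : Subtype.val '' closure (sm '' K) = closure (st '' K) := by
      rw [hemb.closure_eq_preimage_closure_image (sm '' K), image_preimage_eq_inter_range,
        hvalim, Subtype.range_coe_subtype]
      exact inter_eq_self_of_subset_left hCM
    rw [hcleq]
    exact hCcpt



section FwdPart
variable {X : Type u} [TopologicalSpace X] [T2Space X]

lemma forward_dir_s9 (h : KStarMetrizable X) :
    ∃ 𝒩 : Set (Set X), SigmaCompactFinite 𝒩 ∧
      ∀ U : Set X, IsOpen U → ∀ K : Set X, IsCompact K → K ⊆ U →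
        ∃ 𝓕 ⊆ 𝒩, 𝓕.Finite ∧ K ⊆ ⋃₀ 𝓕 ∧ seqClosure (⋃₀ 𝓕) ⊆ U := by
  classical
  obtain ⟨M, _inst, f, s, hf, hsurj, hsec, hcpt⟩ := h
  -- locally finite refinements of ball covers
  have href : ∀ n : ℕ, ∃ v : M → Set M, (∀ p, IsOpen (v p)) ∧ (⋃ p, v p = univ) ∧
      LocallyFinite v ∧ ∀ p, v p ⊆ Metric.ball p (1 / (n + 1)) := by
    intro n
    apply precise_refinement (fun p => Metric.ball p (1 / (n + 1)))
      (fun p => Metric.isOpen_ball)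
    apply eq_univ_iff_forall.2
    intro p
    exact mem_iUnion.2 ⟨p, Metric.mem_ball_self (by positivity)⟩
  choose v hvo hvu hvlf hvb using href
  set Nset : ℕ → M → Set X := fun n p => f '' (closure (v n p) ∩ range s) with hNset
  refine ⟨⋃ n, range (Nset n), ⟨fun n => range (Nset n), rfl, ?_⟩, ?_⟩
  · -- compact finite
    intro n K hK
    have hC : IsCompact (closure (s '' K)) := hcpt K hK
    have hfin : {p | (closure (v n p) ∩ closure (s '' K)).Nonempty}.Finite :=
      (hvlf n).closure.finite_nonempty_inter_compact hC
    apply (hfin.image (Nset n)).subset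
    rintro E ⟨⟨p, rfl⟩, x, hxE, hxK⟩
    obtain ⟨m, ⟨hm1, y, rfl⟩, rfl⟩ := hxE
    have hyK : y ∈ K := by rwa [hsec y] at hxK
    exact ⟨p, ⟨s y, hm1, subset_closure ⟨y, hyK, rfl⟩⟩, rfl⟩
  · -- k-network property
    intro U hU K hK hKU
    have hC : IsCompact (closure (s '' K)) := hcpt K hK
    have hCV : closure (s '' K) ⊆ f ⁻¹' U := by
      intro m hm
      have h1 : f m ∈ closure (f '' (s '' K)) :=
        image_closure_subset_closure_image hf ⟨m, hm, rfl⟩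
      have h2 : f '' (s '' K) = K := by
        rw [← image_comp]
        have : (f ∘ s) '' K = K := by
          apply image_congr (fun x _ => hsec x) |>.trans (image_id K)
        exact this
      rw [h2, hK.isClosed.closure_eq] at h1
      exact hKU h1
    -- cover closure (s '' K) by small refined sets with closure inside f ⁻¹' U
    have hcov : ∀ q ∈ closure (s '' K), ∃ (n : ℕ) (p : M),
        q ∈ v n p ∧ closure (v n p) ⊆ f ⁻¹' U := by
      intro q hq
      obtain ⟨ε, hε, hball⟩ := Metric.isOpen_iff.1 (hU.preimage hf) q (hCV hq)
      obtain ⟨n, hn⟩ := exists_nat_one_div_lt (show (0:ℝ) < ε / 2 by linarith)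
      have hq2 : q ∈ ⋃ p, v n p := by rw [hvu n]; trivial
      obtain ⟨p, hp⟩ := mem_iUnion.1 hq2
      refine ⟨n, p, hp, ?_⟩
      have hsub : closure (v n p) ⊆ Metric.closedBall p (1 / (n + 1)) :=
        closure_minimal ((hvb n p).trans Metric.ball_subset_closedBall)
          Metric.isClosed_closedBall
      refine hsub.trans (fun z hz => hball ?_)
      have hdq : dist q p < 1 / (n + 1) := (hvb n p) hp
      have hdz : dist z p ≤ 1 / (n + 1) := hz
      have : dist z q < ε := by
        calc dist z q ≤ dist z p + dist p q := dist_triangle z p q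
        _ ≤ 1 / (n + 1) + 1 / (n + 1) := by rw [dist_comm p q]; linarith
        _ < ε / 2 + ε / 2 := by push_cast at hn ⊢; linarith
        _ = ε := by ring
      exact this
    -- choose cover data
    choose nq pq hnq hpq using hcov
    -- finite subcover of the compact set closure (s '' K)
    obtain ⟨t, ht⟩ := hC.elim_finite_subcover
      (fun q : ↥(closure (s '' K)) => v (nq q.1 q.2) (pq q.1 q.2))
      (fun q => hvo _ _)
      (fun m hm => mem_iUnion.2 ⟨⟨m, hm⟩, hnq m hm⟩)
    refine ⟨(fun q : ↥(closure (s '' K)) => Nset (nq q.1 q.2) (pq q.1 q.2)) '' t, ?_, ?_, ?_, ?_⟩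
    · rintro E ⟨q, hq, rfl⟩
      exact mem_iUnion.2 ⟨nq q.1 q.2, mem_range_self _⟩
    · exact (t.finite_toSet.image _)
    · -- K covered
      intro x hx
      have hsx : s x ∈ closure (s '' K) := subset_closure ⟨x, hx, rfl⟩
      obtain ⟨q, hqt, hq⟩ := mem_iUnion₂.1 (ht hsx)
      exact ⟨Nset (nq q.1 q.2) (pq q.1 q.2), ⟨q, hqt, rfl⟩,
        ⟨s x, ⟨subset_closure hq, mem_range_self x⟩, hsec x⟩⟩
    · -- seqClosure control
      rintro x ⟨xs, hxs, hlim⟩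
      -- each xs k lies in some member indexed by q ∈ t
      have hmem : ∀ k, ∃ q ∈ (t : Set ↥(closure (s '' K))),
          xs k ∈ Nset (nq q.1 q.2) (pq q.1 q.2) := by
        intro k
        obtain ⟨E, ⟨q, hqt, rfl⟩, hE⟩ := hxs k
        exact ⟨q, hqt, hE⟩
      obtain ⟨q, hqt, hfreq⟩ := freq_pigeon t.finite_toSet _
        (Eventually.of_forall hmem).frequently
      obtain ⟨φ, hφ, hφmem⟩ := extraction_of_frequently_atTop hfreq
      -- lift along s
      have hlift : ∀ k, ∃ m, m ∈ closure (v (nq q.1 q.2) (pq q.1 q.2)) ∧ m = s (xs (φ k)) := by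
        intro k
        obtain ⟨m, ⟨hm1, y, rfl⟩, hfm⟩ := hφmem k
        refine ⟨s y, hm1, by rw [← hfm, hsec]⟩
      choose ms hms1 hms2 using hlift
      -- compact set containing the lifted sequence
      have hL : IsCompact (insert x (range (fun k => xs (φ k)))) :=
        (hlim.comp hφ.tendsto_atTop).isCompact_insert_range
      have hD : IsCompact (closure (s '' insert x (range fun k => xs (φ k)))) :=
        hcpt _ hL
      have hmsD : ∀ k, ms k ∈ closure (v (nq q.1 q.2) (pq q.1 q.2)) ∩
          closure (s '' insert x (range fun k => xs (φ k))) := by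
        intro k
        refine ⟨hms1 k, subset_closure ⟨xs (φ k), ?_, (hms2 k).symm⟩⟩
        exact subset_insert _ _ ⟨k, rfl⟩
      have hcpt2 : IsCompact (closure (v (nq q.1 q.2) (pq q.1 q.2)) ∩
          closure (s '' insert x (range fun k => xs (φ k)))) :=
        hD.inter_left isClosed_closure
      obtain ⟨m0, hm0, ψ, hψ, hψlim⟩ := hcpt2.tendsto_subseq hmsD
      have hfm0 : Tendsto (fun k => f (ms (ψ k))) atTop (𝓝 (f m0)) :=
        (hf.continuousAt.tendsto.comp hψlim)
      have hfm0' : Tendsto (fun k => f (ms (ψ k))) atTop (𝓝 x) := by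
        have : (fun k => f (ms (ψ k))) = fun k => xs (φ (ψ k)) := by
          funext k; rw [hms2 (ψ k), hsec]
        rw [this]
        exact hlim.comp (hφ.comp hψ).tendsto_atTop
      have hx0 : f m0 = x := tendsto_nhds_unique hfm0 hfm0'
      have : m0 ∈ f ⁻¹' U := hpq q.1 q.2 hm0.1
      rwa [← hx0]


lemma seqreg_plumbing (hreg : SeqRegular X) {U K : Set X} (hU : IsOpen U)
    (hK : IsCompact K) (hKU : K ⊆ U) :
    ∃ W : Set X, IsOpen W ∧ K ⊆ W ∧ seqClosure W ⊆ U := by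
  classical
  have hV : ∀ x : ↥K, ∃ V ∈ 𝓝 x.1, seqClosure V ⊆ U :=
    fun x => hreg x.1 U (hU.mem_nhds (hKU x.2))
  choose V hV1 hV2 using hV
  obtain ⟨t, ht⟩ := hK.elim_finite_subcover (fun x : ↥K => interior (V x))
    (fun x => isOpen_interior)
    (fun z hz => mem_iUnion.2 ⟨⟨z, hz⟩, mem_interior_iff_mem_nhds.2 (hV1 ⟨z, hz⟩)⟩)
  refine ⟨⋃ q ∈ t, interior (V q), isOpen_biUnion (fun q _ => isOpen_interior), ht, ?_⟩
  rintro y ⟨z_, hz_, hzlim⟩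
  have hmem : ∀ m, ∃ q ∈ (t : Set ↥K), z_ m ∈ interior (V q) := by
    intro m
    obtain ⟨q, hq1, hq2⟩ := mem_iUnion₂.1 (hz_ m)
    exact ⟨q, hq1, hq2⟩
  obtain ⟨q, hqt, hfreq⟩ := freq_pigeon t.finite_toSet _ (Eventually.of_forall hmem).frequently
  obtain ⟨φ, hφ, hφmem⟩ := extraction_of_frequently_atTop hfreq
  refine hV2 q ⟨fun m => z_ (φ m), fun m => interior_subset (hφmem m), ?_⟩
  exact hzlim.comp hφ.tendsto_atTop

end FwdPart

/-- A Hausdorff space `X` is k*-metrizable iff it has a σ-compact-finite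
cl₁-osed k-network; if moreover `X` is sequentially regular then `X` is k*-metrizable
iff it has a σ-compact-finite k-network. -/
theorem stmt_9 (X : Type u) [TopologicalSpace X] [T2Space X] :
    (KStarMetrizable X ↔
      ∃ 𝒩 : Set (Set X), SigmaCompactFinite 𝒩 ∧
        ∀ U : Set X, IsOpen U → ∀ K : Set X, IsCompact K → K ⊆ U →
          ∃ 𝓕 ⊆ 𝒩, 𝓕.Finite ∧ K ⊆ ⋃₀ 𝓕 ∧ seqClosure (⋃₀ 𝓕) ⊆ U) ∧
    (SeqRegular X →
      (KStarMetrizable X ↔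
        ∃ 𝒩 : Set (Set X), SigmaCompactFinite 𝒩 ∧
          ∀ U : Set X, IsOpen U → ∀ K : Set X, IsCompact K → K ⊆ U →
            ∃ 𝓕 ⊆ 𝒩, 𝓕.Finite ∧ K ⊆ ⋃₀ 𝓕 ∧ ⋃₀ 𝓕 ⊆ U)) := by
  constructor
  · constructor
    · exact forward_dir_s9
    · rintro ⟨𝒩, ⟨F, rfl, hF⟩, hnet⟩
      exact backward_dir F hF hnet
  · intro hreg
    constructor
    · intro h
      obtain ⟨𝒩, hsig, hnet⟩ := forward_dir_s9 h
      refine ⟨𝒩, hsig, fun U hU K hK hKU => ?_⟩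
      obtain ⟨𝓕, h1, h2, h3, h4⟩ := hnet U hU K hK hKU
      exact ⟨𝓕, h1, h2, h3, subset_seqClosure.trans h4⟩
    · rintro ⟨𝒩, ⟨F, rfl, hF⟩, hnet⟩
      apply backward_dir F hF
      intro U hU K hK hKU
      obtain ⟨W, hWopen, hKW, hWscl⟩ := seqreg_plumbing hreg hU hK hKU
      obtain ⟨𝓕, h1, h2, h3, h4⟩ := hnet W hWopen K hK hKW
      exact ⟨𝓕, h1, h2, h3, (seqClosure_mono' h4).trans hWscl⟩
end Bwd
end

section
/- For a Hausdorff topological space X the following conditions are equivalent: (1) X is metrizable; (2) X is a sequential space and X is cs-metrizable; (3) X is a k-space and X is k-metrizable. -/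
set_option linter.unusedSectionVars false
set_option maxHeartbeats 1000000

open Filter Topology Set

universe u

/-- A Hausdorff space `X` is cs-metrizable if it is the image of a metrizable space
under a continuous surjection admitting a sequentially continuous section. -/
def CsMetrizable (X : Type u) [TopologicalSpace X] : Prop :=
  ∃ (M : Type u) (_ : MetricSpace M) (f : M → X) (s : X → M),
    Continuous f ∧ Function.Surjective f ∧ (∀ x, f (s x) = x) ∧
    ∀ (x : ℕ → X) (a : X), Tendsto x atTop (𝓝 a) →
      ∃ m : M, Tendsto (fun n => s (x n)) atTop (𝓝 m)

/-- A Hausdorff space `X` is k-metrizable if it is the image of a metrizable space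
under a continuous surjection for which preimages of compact sets are compact. -/
def KMetrizable (X : Type u) [TopologicalSpace X] : Prop :=
  ∃ (M : Type u) (_ : MetricSpace M) (f : M → X),
    Continuous f ∧ Function.Surjective f ∧
    ∀ K : Set X, IsCompact K → IsCompact (f ⁻¹' K)

section Aux

open Metric

namespace Stmt11Aux

section stars


variable {Y : Type u} [TopologicalSpace Y]

/-- Star of a point with respect to an indexed family. -/
def pStar {ι : Type*} (A : ι → Set Y) (x : Y) : Set Y := ⋃ (i) (_ : x ∈ A i), A i

/-- Star of a set with respect to an indexed family. -/
def sStar {ι : Type*} (A : ι → Set Y) (s : Set Y) : Set Y :=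
  ⋃ (i) (_ : (A i ∩ s).Nonempty), A i

lemma mem_pStar_iff {ι : Type*} {A : ι → Set Y} {x z : Y} :
    z ∈ pStar A x ↔ ∃ i, x ∈ A i ∧ z ∈ A i := by
  simp [pStar]

lemma mem_sStar_iff {ι : Type*} {A : ι → Set Y} {s : Set Y} {z : Y} :
    z ∈ sStar A s ↔ ∃ i, (A i ∩ s).Nonempty ∧ z ∈ A i := by
  simp [sStar]

lemma pStar_subset_sStar {ι : Type*} {A : ι → Set Y} {x : Y} {s : Set Y} (hx : x ∈ s) :
    pStar A x ⊆ sStar A s := by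
  intro z hz
  obtain ⟨i, hxi, hzi⟩ := mem_pStar_iff.1 hz
  exact mem_sStar_iff.2 ⟨i, ⟨x, hxi, hx⟩, hzi⟩

lemma self_subset_sStar {ι : Type*} {A : ι → Set Y} {i : ι} {s : Set Y}
    (h : (A i ∩ s).Nonempty) : A i ⊆ sStar A s := by
  intro z hz
  exact mem_sStar_iff.2 ⟨i, h, hz⟩

variable [NormalSpace Y] [ParacompactSpace Y]

/-- Existence of barycentric refinements in a paracompact normal space. -/
lemma exists_bary {ι : Type u} (C : ι → Set Y) (ho : ∀ i, IsOpen (C i))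
    (hc : ⋃ i, C i = univ) :
    ∃ A : Y → Set Y, (∀ x, IsOpen (A x)) ∧ (∀ x, x ∈ A x) ∧
      ∀ x, ∃ i, pStar A x ⊆ C i := by
  obtain ⟨V, Vo, Vc, Vlf, Vsub⟩ := precise_refinement C ho hc
  obtain ⟨v, vc, vo, vcl⟩ := exists_iUnion_eq_closure_subset Vo (Vlf.point_finite) Vc
  refine ⟨fun x => (⋂ i ∈ {i | x ∈ V i}, V i) \ (⋃ i ∈ {i | x ∉ V i}, closure (v i)),
    ?_, ?_, ?_⟩
  · intro x
    refine IsOpen.sdiff ?_ ?_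
    · exact (Vlf.point_finite x).isOpen_biInter fun i _ => Vo i
    · have : (⋃ i ∈ {i | x ∉ V i}, closure (v i)) =
        ⋃ i, ⋃ (_ : x ∉ V i), closure (v i) := rfl
      rw [this]
      refine LocallyFinite.isClosed_iUnion
        (Vlf.subset fun i => iUnion_subset fun _ => (vcl i)) fun i => ?_
      by_cases h : x ∉ V i <;> simp [h, isClosed_closure]
  · intro x
    constructor
    · exact mem_biInter fun i hi => hi
    · simp only [mem_iUnion, mem_setOf_eq, not_exists]
      exact fun i hi hx => hi (vcl i hx)
  · intro x
    have : x ∈ ⋃ i, v i := vc ▸ mem_univ _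
    obtain ⟨i₀, hi₀⟩ := mem_iUnion.1 this
    refine ⟨i₀, ?_⟩
    intro z hz
    obtain ⟨y, hxy, hzy⟩ := mem_pStar_iff.1 hz
    refine Vsub i₀ ?_
    by_cases hy : y ∈ V i₀
    · exact (biInter_subset_of_mem (show i₀ ∈ {i | y ∈ V i} from hy)) hzy.1
    · exfalso
      exact hxy.2 (mem_biUnion (show i₀ ∈ {i | y ∉ V i} from hy) (subset_closure hi₀))

/-- Existence of star refinements in a paracompact normal space. -/
lemma exists_star {ι : Type u} (C : ι → Set Y) (ho : ∀ i, IsOpen (C i))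
    (hc : ⋃ i, C i = univ) :
    ∃ A : Y → Set Y, (∀ x, IsOpen (A x)) ∧ (∀ x, x ∈ A x) ∧
      ∀ x, ∃ i, sStar A (A x) ⊆ C i := by
  obtain ⟨B, Bo, Bx, Bbar⟩ := exists_bary C ho hc
  obtain ⟨A, Ao, Ax, Abar⟩ := exists_bary B (fun x => Bo x)
    (eq_univ_iff_forall.2 fun x => mem_iUnion.2 ⟨x, Bx x⟩)
  refine ⟨A, Ao, Ax, fun x => ?_⟩
  obtain ⟨iC, hiC⟩ := Bbar x
  refine ⟨iC, ?_⟩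
  intro z hz
  obtain ⟨y, ⟨w, hwy, hwx⟩, hzy⟩ := mem_sStar_iff.1 hz
  -- A y and A x both contain w, hence both are inside pStar A w ⊆ some B j
  obtain ⟨j, hj⟩ := Abar w
  have hAy : A y ⊆ B j := fun u hu => hj (mem_pStar_iff.2 ⟨y, hwy, hu⟩)
  have hAx : A x ⊆ B j := fun u hu => hj (mem_pStar_iff.2 ⟨x, hwx, hu⟩)
  -- x ∈ B j, so B j ⊆ pStar B x ⊆ C iC
  have : z ∈ pStar B x := mem_pStar_iff.2 ⟨j, hAx (Ax x), hAy hzy⟩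
  exact hiC this


end stars

variable {X : Type u} [TopologicalSpace X] [T2Space X]
variable {M : Type u} [MetricSpace M] {f : M → X}

/-- The saturated interior image: largest open set of `X` whose preimage is inside `U`. -/
def sat (f : M → X) (U : Set M) : Set X := (f '' Uᶜ)ᶜ

lemma mem_sat {U : Set M} {y : X} : y ∈ sat f U ↔ f ⁻¹' {y} ⊆ U := by
  constructor
  · intro hy m hm
    by_contra hmU
    exact hy ⟨m, hmU, hm⟩
  · rintro h ⟨m, hmU, rfl⟩
    exact hmU (h rfl)

lemma isOpen_sat (hcl : IsClosedMap f) {U : Set M} (hU : IsOpen U) : IsOpen (sat f U) :=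
  (hcl _ hU.isClosed_compl).isOpen_compl

section basic

variable (hf : Continuous f) (hsurj : Function.Surjective f)
  (hp : ∀ K : Set X, IsCompact K → IsCompact (f ⁻¹' K)) (hk : IsKSpace X)

include hf hp hk in
lemma isClosedMap : IsClosedMap f := by
  intro A hA
  apply hk
  intro K hK
  have h1 : IsCompact (f '' (A ∩ f ⁻¹' K)) := (((hp K hK).inter_left hA).image hf)
  have h2 : {k : K | (k : X) ∈ f '' A} = Subtype.val ⁻¹' (f '' (A ∩ f ⁻¹' K)) := by
    ext k
    simp only [mem_setOf_eq, mem_preimage, mem_image]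
    constructor
    · rintro ⟨a, haA, hak⟩
      exact ⟨a, ⟨haA, by simp [mem_preimage, hak, k.2]⟩, hak⟩
    · rintro ⟨a, ⟨haA, _⟩, hak⟩
      exact ⟨a, haA, hak⟩
  rw [h2]
  exact (h1.isClosed).preimage continuous_subtype_val

variable (hcl : IsClosedMap f)

include hf hp hcl in
lemma locallyFinite_image {ι : Type*} {C : ι → Set M} (hC : LocallyFinite C) :
    LocallyFinite fun i => f '' C i := by
  intro x
  have hKc : IsCompact (f ⁻¹' {x}) := hp _ isCompact_singleton
  -- choose an open neighborhood of each fiber point meeting finitely many C i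
  have hmem : ∀ m ∈ f ⁻¹' {x}, interior (Classical.choose (hC m)) ∈ 𝓝 m := by
    intro m _
    exact interior_mem_nhds.2 (Classical.choose_spec (hC m)).1
  obtain ⟨t, -, ht⟩ := hKc.elim_nhds_subcover _ hmem
  set N : Set M := ⋃ m ∈ t, interior (Classical.choose (hC m)) with hN
  have hNopen : IsOpen N := isOpen_biUnion fun m _ => isOpen_interior
  have hNfin : {i | (C i ∩ N).Nonempty}.Finite := by
    refine Finite.subset (t.finite_toSet.biUnion
      (fun m _ => (Classical.choose_spec (hC m)).2)) ?_
    rintro i ⟨z, hzC, hzN⟩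
    rw [hN] at hzN
    simp only [mem_iUnion] at hzN
    obtain ⟨m, hmt, hzm⟩ := hzN
    exact mem_biUnion hmt ⟨z, hzC, interior_subset hzm⟩
  refine ⟨sat f N, ((isOpen_sat hcl hNopen).mem_nhds (mem_sat.2 ht)), ?_⟩
  refine hNfin.subset ?_
  rintro i ⟨z, hz1, hz2⟩
  obtain ⟨c, hcC, rfl⟩ := hz1
  exact ⟨c, hcC, mem_sat.1 hz2 rfl⟩

include hf hsurj hp hcl in
lemma exists_lf_closed_refinement {ι : Type*} (s : ι → Set X) (so : ∀ i, IsOpen (s i))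
    (sc : ⋃ i, s i = univ) :
    ∃ F : M → Set X, (∀ m, IsClosed (F m)) ∧ (⋃ m, F m = univ) ∧ LocallyFinite F ∧
      ∀ m, ∃ i, F m ⊆ s i := by
  have hm : ∀ m : M, ∃ (i : ι) (ε : ℝ), 0 < ε ∧ ball m ε ⊆ f ⁻¹' (s i) := by
    intro m
    have : f m ∈ ⋃ i, s i := sc ▸ mem_univ _
    obtain ⟨i, hi⟩ := mem_iUnion.1 this
    obtain ⟨ε, hε, hb⟩ := (Metric.isOpen_iff.1 ((so i).preimage hf)) m hi
    exact ⟨i, ε, hε, hb⟩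
  choose a ε hε hball using hm
  set U : M → Set M := fun m => ball m (ε m / 2) with hU
  obtain ⟨v, vo, vc, vlf, vsub⟩ := precise_refinement U (fun m => isOpen_ball)
    (by
      rw [eq_univ_iff_forall]
      exact fun m => mem_iUnion.2 ⟨m, mem_ball_self (by linarith [hε m])⟩)
  have hvcl : ∀ m, closure (v m) ⊆ f ⁻¹' (s (a m)) := by
    intro m
    refine subset_trans (closure_mono (vsub m)) ?_
    refine subset_trans Metric.closure_ball_subset_closedBall ?_
    exact subset_trans (Metric.closedBall_subset_ball (by linarith [hε m])) (hball m)
  refine ⟨fun m => f '' closure (v m), fun m => hcl _ isClosed_closure, ?_, ?_, ?_⟩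
  · rw [eq_univ_iff_forall]
    intro x
    obtain ⟨m', rfl⟩ := hsurj x
    have : m' ∈ ⋃ m, v m := vc ▸ mem_univ _
    obtain ⟨m, hm⟩ := mem_iUnion.1 this
    exact mem_iUnion.2 ⟨m, mem_image_of_mem f (subset_closure hm)⟩
  · exact locallyFinite_image hf hp hcl vlf.closure
  · exact fun m => ⟨a m, by
      rintro x ⟨c, hc, rfl⟩
      exact hvcl m hc⟩

include hf hsurj hp hcl in
lemma paracompact : ParacompactSpace X := by
  constructor
  intro α s so sc
  obtain ⟨F, Fcl, Fcov, Flf, Fref⟩ := exists_lf_closed_refinement hf hsurj hp hcl s so sc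
  choose a ha using Fref
  have hW : ∀ x : X, ∃ W : Set X, IsOpen W ∧ x ∈ W ∧ {m | (F m ∩ W).Nonempty}.Finite := by
    intro x
    obtain ⟨t, ht, hfin⟩ := Flf x
    refine ⟨interior t, isOpen_interior, mem_interior_iff_mem_nhds.2 ht, hfin.subset ?_⟩
    rintro m ⟨z, hz1, hz2⟩
    exact ⟨z, hz1, interior_subset hz2⟩
  choose W Wo Wx Wfin using hW
  obtain ⟨G, Gcl, Gcov, Glf, Gref⟩ := exists_lf_closed_refinement hf hsurj hp hcl W Wo
    (eq_univ_iff_forall.2 fun x => mem_iUnion.2 ⟨x, Wx x⟩)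
  choose b hb using Gref
  refine ⟨M, fun m => s (a m) \ ⋃ m' ∈ {m' | G m' ∩ F m = ∅}, G m', ?_, ?_, ?_, ?_⟩
  · intro m
    refine (so (a m)).sdiff ?_
    have : (⋃ m' ∈ {m' | G m' ∩ F m = ∅}, G m') = ⋃ m', (⋃ (_ : G m' ∩ F m = ∅), G m') := rfl
    rw [this]
    refine LocallyFinite.isClosed_iUnion (Glf.subset fun m' => iUnion_subset fun _ => subset_rfl)
      fun m' => ?_
    by_cases h : G m' ∩ F m = ∅ <;> simp [h, Gcl m']
  · rw [eq_univ_iff_forall]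
    intro x
    have : x ∈ ⋃ m, F m := Fcov ▸ mem_univ _
    obtain ⟨m, hm⟩ := mem_iUnion.1 this
    refine mem_iUnion.2 ⟨m, ha m hm, ?_⟩
    simp only [mem_iUnion, mem_setOf_eq, not_exists]
    intro m' hGF hxG
    exact absurd (Set.eq_empty_iff_forall_notMem.1 hGF x) (by simp [hxG, hm])
  · intro x
    obtain ⟨t, ht, hGfin⟩ := Glf x
    refine ⟨t, ht, ?_⟩
    have : {m | ((s (a m) \ ⋃ m' ∈ {m' | G m' ∩ F m = ∅}, G m') ∩ t).Nonempty} ⊆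
        ⋃ m' ∈ {m' | (G m' ∩ t).Nonempty}, {m | (F m ∩ W (b m')).Nonempty} := by
      rintro m ⟨z, hz1, hz2⟩
      have : z ∈ ⋃ m', G m' := Gcov ▸ mem_univ _
      obtain ⟨m', hzm'⟩ := mem_iUnion.1 this
      refine mem_biUnion (show (G m' ∩ t).Nonempty from ⟨z, hzm', hz2⟩) ?_
      have hne : (G m' ∩ F m).Nonempty := by
        rcases eq_empty_or_nonempty (G m' ∩ F m) with h | h
        · exact absurd (mem_biUnion (show m' ∈ {m' | G m' ∩ F m = ∅} from h) hzm') hz1.2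
        · exact h
      obtain ⟨w, hw1, hw2⟩ := hne
      exact ⟨w, hw2, hb m' hw1⟩
    exact (hGfin.biUnion (fun m' _ => Wfin (b m'))).subset this
  · exact fun m => ⟨a m, diff_subset⟩



include hf hp in
/-- No fiber can come arbitrarily close to the fiber of `x` while having points far from it. -/
lemma uniform_star {x : X} {δ : ℝ} (hδ : 0 < δ) :
    ∃ ε > 0, ∀ y : X, (f ⁻¹' {y} ∩ thickening ε (f ⁻¹' {x})).Nonempty →
      f ⁻¹' {y} ⊆ thickening δ (f ⁻¹' {x}) := by
  by_contra hcon
  push_neg at hcon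
  have key : ∀ n : ℕ, ∃ (y : X) (p q : M), f p = y ∧ f q = y ∧
      p ∈ thickening ((1/2 : ℝ)^n) (f ⁻¹' {x}) ∧ q ∉ thickening δ (f ⁻¹' {x}) := by
    intro n
    obtain ⟨y, hne, hns⟩ := hcon ((1/2 : ℝ)^n) (by positivity)
    obtain ⟨p, hp1, hp2⟩ := hne
    obtain ⟨q, hq1, hq2⟩ := not_subset.1 hns
    exact ⟨y, p, q, hp1, hq1, hp2, hq2⟩
  choose y p q hpy hqy hpt hqt using key
  have hFx : IsCompact (f ⁻¹' {x}) := hp _ isCompact_singleton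
  -- points of Fx close to p n
  have hz : ∀ n, ∃ z ∈ f ⁻¹' {x}, dist (p n) z < (1/2 : ℝ)^n := by
    intro n
    exact mem_thickening_iff.1 (hpt n)
  choose z hzmem hzd using hz
  obtain ⟨m₀, hm₀, φ, hφ, hzlim⟩ := hFx.tendsto_subseq hzmem
  have hplim : Tendsto (fun n => p (φ n)) atTop (𝓝 m₀) := by
    rw [tendsto_iff_dist_tendsto_zero]
    have h1 : ∀ n, dist (p (φ n)) m₀ ≤ dist (p (φ n)) (z (φ n)) + dist (z (φ n)) m₀ :=
      fun n => dist_triangle _ _ _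
    have h2 : Tendsto (fun n => dist (p (φ n)) (z (φ n)) + dist (z (φ n)) m₀) atTop (𝓝 0) := by
      rw [show (0:ℝ) = 0 + 0 by norm_num]
      refine Tendsto.add ?_ ?_
      · refine squeeze_zero (fun n => dist_nonneg) (fun n => le_of_lt (hzd (φ n))) ?_
        have : Tendsto (fun n : ℕ => ((1:ℝ)/2)^n) atTop (𝓝 0) :=
          tendsto_pow_atTop_nhds_zero_of_lt_one (by norm_num) (by norm_num)
        exact this.comp hφ.tendsto_atTop
      · exact (tendsto_iff_dist_tendsto_zero.1 hzlim)
    exact squeeze_zero (fun n => dist_nonneg) h1 h2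
  have hfm₀ : f m₀ = x := hm₀
  have hylim : Tendsto (fun n => y (φ n)) atTop (𝓝 x) := by
    have h := (hf.tendsto m₀).comp hplim
    rw [hfm₀] at h
    have he : (f ∘ fun n => p (φ n)) = fun n => y (φ n) := by
      funext n; simp [Function.comp, hpy]
    rwa [he] at h
  have hK : IsCompact (insert x (range fun n => y (φ n))) := hylim.isCompact_insert_range
  have hKpre : IsCompact (f ⁻¹' (insert x (range fun n => y (φ n)))) := hp _ hK
  have hqmem : ∀ n, q (φ n) ∈ f ⁻¹' (insert x (range fun n => y (φ n))) := by
    intro n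
    simp only [mem_preimage, hqy]
    exact mem_insert_of_mem _ ⟨n, rfl⟩
  obtain ⟨q₀, hq₀K, ψ, hψ, hqlim⟩ := hKpre.tendsto_subseq hqmem
  have hq₀not : q₀ ∉ thickening δ (f ⁻¹' {x}) := by
    have hclosed : IsClosed (thickening δ (f ⁻¹' {x}))ᶜ := isOpen_thickening.isClosed_compl
    have : ∀ n, ((fun n => q (φ n)) ∘ ψ) n ∈ (thickening δ (f ⁻¹' {x}))ᶜ :=
      fun n => hqt (φ (ψ n))
    exact hclosed.mem_of_tendsto hqlim (Eventually.of_forall this)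
  have hfq₀ : f q₀ = x := by
    have h1 : Tendsto (fun n => f (((fun n => q (φ n)) ∘ ψ) n)) atTop (𝓝 (f q₀)) :=
      (hf.tendsto q₀).comp hqlim
    have h2 : Tendsto (fun n => y (φ (ψ n))) atTop (𝓝 x) :=
      hylim.comp hψ.tendsto_atTop
    have h3 : (fun n => f (((fun n => q (φ n)) ∘ ψ) n)) = fun n => y (φ (ψ n)) := by
      funext n
      simp [Function.comp, hqy]
    rw [h3] at h1
    exact tendsto_nhds_unique h1 h2
  exact hq₀not (self_subset_thickening hδ _ (show q₀ ∈ f ⁻¹' {x} from hfq₀))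


include hf hsurj hp in
theorem metrizable_of_kspace (hk : IsKSpace X) : TopologicalSpace.MetrizableSpace X := by
  have hcl : IsClosedMap f := isClosedMap hf hp hk
  haveI hpc : ParacompactSpace X := paracompact hf hsurj hp hcl
  haveI : NormalSpace X := (inferInstance : T4Space X).toNormalSpace
  set r : ℕ → ℝ := fun k => (1/2 : ℝ)^k with hrdef
  have hrpos : ∀ k, 0 < r k := fun k => by rw [hrdef]; positivity
  set U : ℕ → X → Set X := fun k y => sat f (thickening (r k) (f ⁻¹' {y})) with hUdef
  have Uo : ∀ k y, IsOpen (U k y) := fun k y => isOpen_sat hcl isOpen_thickening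
  have Uself : ∀ k x, x ∈ U k x := fun k x => mem_sat.2 (self_subset_thickening (hrpos k) _)
  have Ucov : ∀ k, ⋃ y, U k y = univ :=
    fun k => eq_univ_iff_forall.2 fun x => mem_iUnion.2 ⟨x, Uself k x⟩
  -- smallness of the canonical covers
  have hsmall : ∀ (x : X) (O : Set X), IsOpen O → x ∈ O →
      ∃ k, ∀ y, x ∈ U k y → U k y ⊆ O := by
    intro x O hO hxO
    have hFx : IsCompact (f ⁻¹' {x}) := hp _ isCompact_singleton
    have hFxO : f ⁻¹' {x} ⊆ f ⁻¹' O := fun m hm => by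
      simp only [mem_preimage, mem_singleton_iff] at hm
      simp [mem_preimage, hm, hxO]
    obtain ⟨δ, hδ, hδO⟩ := hFx.exists_thickening_subset_open (hO.preimage hf) hFxO
    obtain ⟨ε, hε, hεs⟩ := uniform_star hf hp (x := x) (half_pos hδ)
    obtain ⟨k, hk'⟩ : ∃ k, r k < min ε (δ/2) :=
      exists_pow_lt_of_lt_one (lt_min hε (half_pos hδ)) (by norm_num)
    have hkε : r k < ε := lt_of_lt_of_le hk' (min_le_left _ _)
    have hkδ : r k < δ/2 := lt_of_lt_of_le hk' (min_le_right _ _)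
    refine ⟨k, fun y hxy z hz => ?_⟩
    have h1 : f ⁻¹' {x} ⊆ thickening (r k) (f ⁻¹' {y}) := mem_sat.1 hxy
    obtain ⟨m₀, hm₀⟩ := hsurj x
    have hm₀x : m₀ ∈ f ⁻¹' {x} := by simp [mem_preimage, hm₀]
    obtain ⟨w, hw1, hw2⟩ := mem_thickening_iff.1 (h1 hm₀x)
    have hwth : w ∈ thickening ε (f ⁻¹' {x}) :=
      mem_thickening_iff.2 ⟨m₀, hm₀x, by rw [dist_comm]; exact hw2.trans hkε⟩
    have h2 : f ⁻¹' {y} ⊆ thickening (δ/2) (f ⁻¹' {x}) := hεs y ⟨w, hw1, hwth⟩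
    have h3 : f ⁻¹' {z} ⊆ f ⁻¹' O := by
      refine subset_trans (mem_sat.1 hz) (subset_trans (thickening_subset_of_subset _ h2) ?_)
      refine subset_trans (thickening_thickening_subset _ _ _) (subset_trans ?_ hδO)
      exact thickening_mono (by linarith) _
    obtain ⟨m, hm⟩ := hsurj z
    have hmz : m ∈ f ⁻¹' {z} := by simp [mem_preimage, hm]
    have := h3 hmz
    rwa [mem_preimage, hm] at this
  -- the recursive sequence of star refinements
  have step0 : ∃ A : X → Set X, (∀ x, IsOpen (A x)) ∧ (∀ x, x ∈ A x) ∧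
      ∀ x, ∃ i, sStar A (A x) ⊆ U 0 i := exists_star (U 0) (Uo 0) (Ucov 0)
  have stepS : ∀ (k : ℕ) (P : X → Set X), (∀ x, IsOpen (P x)) → (∀ x, x ∈ P x) →
      ∃ A : X → Set X, (∀ x, IsOpen (A x)) ∧ (∀ x, x ∈ A x) ∧
        ∀ x, ∃ i : X × X, sStar A (A x) ⊆ P i.1 ∩ U (k+1) i.2 := by
    intro k P Po Px
    refine exists_star (fun i : X × X => P i.1 ∩ U (k+1) i.2)
      (fun i => (Po i.1).inter (Uo (k+1) i.2)) ?_
    rw [eq_univ_iff_forall]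
    exact fun x => mem_iUnion.2 ⟨(x, x), ⟨Px x, Uself (k+1) x⟩⟩
  let g : ℕ → {A : X → Set X // (∀ x, IsOpen (A x)) ∧ ∀ x, x ∈ A x} := fun n =>
    Nat.rec ⟨step0.choose, step0.choose_spec.1, step0.choose_spec.2.1⟩
      (fun k prev => ⟨(stepS k prev.1 prev.2.1 prev.2.2).choose,
        (stepS k prev.1 prev.2.1 prev.2.2).choose_spec.1,
        (stepS k prev.1 prev.2.1 prev.2.2).choose_spec.2.1⟩) n
  set W : ℕ → X → Set X := fun k => (g k).1 with hWdef
  have Wo : ∀ k x, IsOpen (W k x) := fun k => (g k).2.1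
  have Wx : ∀ k x, x ∈ W k x := fun k => (g k).2.2
  have hg0 : ∀ x, ∃ i, sStar (W 0) (W 0 x) ⊆ U 0 i := step0.choose_spec.2.2
  have hgS : ∀ k x, ∃ i : X × X, sStar (W (k+1)) (W (k+1) x) ⊆ W k i.1 ∩ U (k+1) i.2 :=
    fun k => (stepS k (g k).1 (g k).2.1 (g k).2.2).choose_spec.2.2
  clear_value g
  clear_value W
  have hgU : ∀ k x, ∃ i, sStar (W k) (W k x) ⊆ U k i := by
    intro k
    cases k with
    | zero => exact hg0
    | succ k =>
      intro x
      obtain ⟨i, hi⟩ := hgS k x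
      exact ⟨i.2, hi.trans inter_subset_right⟩
  -- entourages
  set E : ℕ → Set (X × X) := fun k => ⋃ x, (W k x) ×ˢ (W k x) with hEdef
  have Emem : ∀ {k : ℕ} {p : X × X}, p ∈ E k ↔ ∃ x, p.1 ∈ W k x ∧ p.2 ∈ W k x := by
    intro k p
    rw [hEdef]
    simp [Set.mem_iUnion, Set.mem_prod]
  clear_value E
  have Erefl : ∀ k x, (x, x) ∈ E k := fun k x => (Emem (k := k) (p := (x, x))).2 ⟨x, Wx k x, Wx k x⟩
  have Esucc : ∀ k, SetRel.comp (E (k+1)) (E (k+1)) ⊆ E k := by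
    intro k p hcomp
    obtain ⟨b, hab, hbc⟩ := hcomp
    obtain ⟨x₁, ha1, hb1⟩ := Emem.1 hab
    obtain ⟨x₂, hb2, hc2⟩ := Emem.1 hbc
    obtain ⟨i, hi⟩ := hgS k x₁
    have h1 : W (k+1) x₁ ⊆ sStar (W (k+1)) (W (k+1) x₁) := self_subset_sStar ⟨b, hb1, hb1⟩
    have h2 : W (k+1) x₂ ⊆ sStar (W (k+1)) (W (k+1) x₁) := self_subset_sStar ⟨b, hb2, hb1⟩
    exact Emem.2 ⟨i.1, (hi (h1 ha1)).1, (hi (h2 hc2)).1⟩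
  have Eanti : ∀ k, E (k+1) ⊆ E k := by
    intro k p hp'
    obtain ⟨x, h1, h2⟩ := Emem.1 hp'
    obtain ⟨i, hi⟩ := hgS k x
    have hsub : W (k+1) x ⊆ sStar (W (k+1)) (W (k+1) x) := self_subset_sStar ⟨x, Wx _ x, Wx _ x⟩
    exact Emem.2 ⟨i.1, (hi (hsub h1)).1, (hi (hsub h2)).1⟩
  have EantiLe : ∀ {j k : ℕ}, j ≤ k → E k ⊆ E j := by
    intro j k h
    induction h with
    | refl => exact subset_rfl
    | step _ ih => exact (Eanti _).trans ih
  set F : Filter (X × X) := ⨅ k, 𝓟 (E k) with hFdef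
  have hdirE : Directed (· ≥ ·) E := fun i j =>
    ⟨max i j, EantiLe (le_max_left _ _), EantiLe (le_max_right _ _)⟩
  have hbasis : F.HasBasis (fun _ : ℕ => True) E := hasBasis_iInf_principal hdirE
  have hmemF : ∀ k, E k ∈ F := fun k => hbasis.mem_of_mem trivial
  have hrefl : 𝓟 SetRel.id ≤ F := by
    refine hbasis.ge_iff.2 fun k _ => mem_principal.2 ?_
    rintro ⟨a, b⟩ (rfl : a = b)
    exact Erefl k a
  have hsymm : Tendsto Prod.swap F F := by
    refine hbasis.tendsto_right_iff.2 fun k _ => Eventually.mono (hmemF k) ?_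
    rintro ⟨a, b⟩ hab
    obtain ⟨x, h1, h2⟩ := Emem.1 hab
    show (b, a) ∈ E k
    exact Emem.2 ⟨x, h2, h1⟩
  have hcomp : (F.lift' fun s => SetRel.comp s s) ≤ F := by
    refine hbasis.ge_iff.2 fun k _ => ?_
    refine (mem_lift'_sets (Monotone.relComp monotone_id monotone_id)).2 ?_
    exact ⟨E (k+1), hmemF _, Esucc k⟩
  let core : UniformSpace.Core X :=
    { uniformity := F, refl := hrefl, symm := hsymm, comp := hcomp }
  have hballeq : ∀ k x, Prod.mk x ⁻¹' (E k) = pStar (W k) x := by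
    intro k x
    ext y
    rw [mem_preimage]
    rw [show ((x, y) ∈ E k) ↔ _ from Emem, mem_pStar_iff]
  have hnhds : ∀ x : X, 𝓝 x = comap (Prod.mk x) F := by
    intro x
    have hcb : (comap (Prod.mk x) F).HasBasis (fun _ : ℕ => True)
        (fun k => Prod.mk x ⁻¹' (E k)) := hbasis.comap _
    refine Filter.ext fun s => ?_
    rw [hcb.mem_iff]
    constructor
    · intro hs
      obtain ⟨O, hOs, hOopen, hxO⟩ := mem_nhds_iff.1 hs
      obtain ⟨k, hkey⟩ := hsmall x O hOopen hxO
      refine ⟨k, trivial, ?_⟩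
      rw [hballeq]
      obtain ⟨i, hi⟩ := hgU k x
      have hxU : x ∈ U k i := hi (self_subset_sStar ⟨x, Wx k x, Wx k x⟩ (Wx k x))
      refine subset_trans ?_ (subset_trans (hkey i hxU) hOs)
      exact subset_trans (pStar_subset_sStar (Wx k x)) hi
    · rintro ⟨k, -, hsub⟩
      rw [hballeq] at hsub
      refine mem_nhds_iff.2 ⟨pStar (W k) x, hsub, ?_, ?_⟩
      · exact isOpen_iUnion fun i => isOpen_iUnion fun _ => Wo k i
      · exact mem_pStar_iff.2 ⟨x, Wx k x, Wx k x⟩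
  have htopeq : ‹TopologicalSpace X› = core.toTopologicalSpace := by
    refine TopologicalSpace.ext_nhds fun x => ?_
    rw [core.nhds_toTopologicalSpace]
    exact hnhds x
  letI u : UniformSpace X := UniformSpace.ofCoreEq core _ htopeq
  haveI : IsCountablyGenerated (uniformity X) := hbasis.isCountablyGenerated
  exact UniformSpace.metrizableSpace

end basic


end Stmt11Aux

end Aux

/-- For a Hausdorff space `X` the following are equivalent:
(1) `X` is metrizable; (2) `X` is a sequential space and cs-metrizable;
(3) `X` is a k-space and k-metrizable. -/
theorem stmt_11 {X : Type u} [TopologicalSpace X] [T2Space X] :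
    List.TFAE
      [ TopologicalSpace.MetrizableSpace X,
        SequentialSpace X ∧ CsMetrizable X,
        IsKSpace X ∧ KMetrizable X ] := by
  tfae_have 1 → 2
  | h => by
    haveI := h
    letI : MetricSpace X := TopologicalSpace.metrizableSpaceMetric X
    refine ⟨inferInstance, X, inferInstance, id, id, continuous_id,
      Function.surjective_id, fun _ => rfl, fun x a hx => ⟨a, hx⟩⟩
  tfae_have 1 → 3
  | h => by
    haveI := h
    letI : MetricSpace X := TopologicalSpace.metrizableSpaceMetric X
    haveI : SequentialSpace X := inferInstance
    refine ⟨?_, X, inferInstance, id, continuous_id, Function.surjective_id,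
      fun K hK => by simpa using hK⟩
    intro F hF
    refine IsSeqClosed.isClosed ?_
    intro x p hxF hxp
    have hK : IsCompact (insert p (range x)) := hxp.isCompact_insert_range
    have hcl := hF _ hK
    let ξ : ℕ → (insert p (range x) : Set X) :=
      fun n => ⟨x n, mem_insert_of_mem _ (mem_range_self n)⟩
    have hξ : Tendsto ξ atTop
        (𝓝 (⟨p, mem_insert _ _⟩ : (insert p (range x) : Set X))) :=
      tendsto_subtype_rng.2 hxp
    exact hcl.mem_of_tendsto hξ (Eventually.of_forall fun n => hxF n)
  tfae_have 3 → 1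
  | ⟨hk, M, mM, f, hf, hsurj, hp⟩ => by
    letI := mM
    exact Stmt11Aux.metrizable_of_kspace hf hsurj hp hk
  tfae_have 2 → 1
  | ⟨hseq, M, mM, f, s, hf, hfs, hsect, hcs⟩ => by
    letI := mM
    haveI := hseq
    have hseqcont : SeqContinuous s := by
      intro x a hx
      set y : ℕ → X := fun n => if Even n then x (n / 2) else a with hy
      have hylim : Tendsto y atTop (𝓝 a) := by
        rw [tendsto_atTop_nhds]
        intro U hU hUopen
        obtain ⟨N, hN⟩ := tendsto_atTop_nhds.1 hx U hU hUopen
        refine ⟨2 * N, fun n hn => ?_⟩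
        rw [hy]
        by_cases he : Even n
        · simp only [he, if_true]
          exact hN _ (by omega)
        · simp only [he, if_false]
          exact hU
      obtain ⟨m, hm⟩ := hcs y a hylim
      have hoddmap : Tendsto (fun n : ℕ => 2 * n + 1) atTop atTop :=
        tendsto_atTop_atTop.2 fun b => ⟨b, fun n hn => by omega⟩
      have hodd : Tendsto (fun n : ℕ => s (y (2 * n + 1))) atTop (𝓝 m) :=
        hm.comp hoddmap
      have hoddconst : (fun n : ℕ => s (y (2 * n + 1))) = fun _ => s a := by
        funext n
        have : ¬ Even (2 * n + 1) := by simp [Nat.even_add_one, parity_simps]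
        simp [hy, this]
      rw [hoddconst] at hodd
      have hma : m = s a := tendsto_nhds_unique hodd tendsto_const_nhds
      have hevenmap : Tendsto (fun n : ℕ => 2 * n) atTop atTop :=
        tendsto_atTop_atTop.2 fun b => ⟨b, fun n hn => by omega⟩
      have heven : Tendsto (fun n : ℕ => s (y (2 * n))) atTop (𝓝 m) :=
        hm.comp hevenmap
      have hevenid : (fun n : ℕ => s (y (2 * n))) = fun n => s (x n) := by
        funext n
        have h1 : Even (2 * n) := even_two_mul n
        have h2 : 2 * n / 2 = n := by omega
        simp [hy, h1, h2]
      rw [hevenid, hma] at heven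
      exact heven
    have hscont : Continuous s := continuous_iff_seqContinuous.2 hseqcont
    have hemb : IsEmbedding s :=
      Function.LeftInverse.isEmbedding (fun x => hsect x) hf hscont
    exact hemb.metrizableSpace
  tfae_finish
end
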